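/- arXiv:2406.01849 — 3 statements merged into one kernel-verified Lean document; each statement's English description precedes it below -/
import Mathlib

section
/- Let X and Y be real-valued random variables with E|X| < ∞ and E|Y| < ∞. Then X and Y are stochastically independent if and only if for every t, s ∈ ℝ with ℙ(X ≥ t, Y ≥ s) > 0, setting U = {X ≥ t, Y ≥ s}, the product XY is integrable on U and E[XY | U] = E[X | U] · E[Y | U]. -/
open MeasureTheory Set

/-- Conditional expectation of `Z` given the event `U`: `E[Z·1_U] / ℙ(U)`. -/
noncomputable def cexp {Ω : Type*} [MeasurableSpace Ω] (P : Measure Ω) (U : Set Ω)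
    (Z : Ω → ℝ) : ℝ :=
  (∫ ω in U, Z ω ∂P) / (P U).toReal

open Filter Topology
set_option linter.unusedSectionVars false
set_option linter.unusedVariables false

section Aux
variable {Ω : Type*} [MeasurableSpace Ω] (P : Measure Ω)

/-- positive part of `X - t` -/
noncomputable def ppf (X : Ω → ℝ) (t : ℝ) (ω : Ω) : ℝ := max (X ω - t) 0

/-- indicator of `{t < X}` -/
noncomputable def iof (X : Ω → ℝ) (t : ℝ) (ω : Ω) : ℝ := if t < X ω then 1 else 0

/-- indicator of `{t ≤ X}` -/
noncomputable def icf (X : Ω → ℝ) (t : ℝ) (ω : Ω) : ℝ := if t ≤ X ω then 1 else 0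

variable {X : Ω → ℝ} {t : ℝ}

lemma ppf_nonneg (X : Ω → ℝ) (t : ℝ) (ω : Ω) : 0 ≤ ppf X t ω := le_max_right _ _
lemma iof_nonneg (X : Ω → ℝ) (t : ℝ) (ω : Ω) : 0 ≤ iof X t ω := by
  unfold iof; split <;> norm_num
lemma icf_nonneg (X : Ω → ℝ) (t : ℝ) (ω : Ω) : 0 ≤ icf X t ω := by
  unfold icf; split <;> norm_num
lemma iof_le_one (X : Ω → ℝ) (t : ℝ) (ω : Ω) : iof X t ω ≤ 1 := by
  unfold iof; split <;> norm_num
lemma icf_le_one (X : Ω → ℝ) (t : ℝ) (ω : Ω) : icf X t ω ≤ 1 := by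
  unfold icf; split <;> norm_num

lemma ppf_meas (hX : Measurable X) (t : ℝ) : Measurable (ppf X t) :=
  (hX.sub measurable_const).max measurable_const

lemma iof_meas (hX : Measurable X) (t : ℝ) : Measurable (iof X t) :=
  Measurable.ite (measurableSet_lt measurable_const hX) measurable_const measurable_const

lemma icf_meas (hX : Measurable X) (t : ℝ) : Measurable (icf X t) :=
  Measurable.ite (measurableSet_le measurable_const hX) measurable_const measurable_const

lemma ppf_integrable [IsFiniteMeasure P] (hXint : Integrable X P) (t : ℝ) :
    Integrable (ppf X t) P := (hXint.sub (integrable_const t)).pos_part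

lemma iof_integrable [IsFiniteMeasure P] (hX : Measurable X) (t : ℝ) :
    Integrable (iof X t) P := by
  refine (integrable_const (1:ℝ)).mono' ((iof_meas hX t).aestronglyMeasurable) ?_
  filter_upwards with ω
  rw [Real.norm_eq_abs, abs_of_nonneg (iof_nonneg X t ω)]
  exact iof_le_one X t ω

lemma icf_integrable [IsFiniteMeasure P] (hX : Measurable X) (t : ℝ) :
    Integrable (icf X t) P := by
  refine (integrable_const (1:ℝ)).mono' ((icf_meas hX t).aestronglyMeasurable) ?_
  filter_upwards with ω
  rw [Real.norm_eq_abs, abs_of_nonneg (icf_nonneg X t ω)]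
  exact icf_le_one X t ω

lemma integral_iof (hX : Measurable X) (t : ℝ) :
    ∫ ω, iof X t ω ∂P = (P {ω | t < X ω}).toReal := by
  have : (fun ω => iof X t ω) = Set.indicator {ω | t < X ω} (1 : Ω → ℝ) := by
    funext ω; rw [Set.indicator_apply]; simp [iof]
  rw [this]
  exact integral_indicator_one (measurableSet_lt measurable_const hX)

lemma integral_icf (hX : Measurable X) (t : ℝ) :
    ∫ ω, icf X t ω ∂P = (P {ω | t ≤ X ω}).toReal := by
  have : (fun ω => icf X t ω) = Set.indicator {ω | t ≤ X ω} (1 : Ω → ℝ) := by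
    funext ω; rw [Set.indicator_apply]; simp [icf]
  rw [this]
  exact integral_indicator_one (measurableSet_le measurable_const hX)

end Aux

section Deriv
variable {Ω : Type*} [MeasurableSpace Ω] (P : Measure Ω) [IsFiniteMeasure P]
variable {W Z : Ω → ℝ}

lemma integrand_meas (hWm : Measurable W) (hZm : Measurable Z) (u : ℝ) :
    Measurable (fun ω => W ω * max (Z ω - u) 0) :=
  hWm.mul ((hZm.sub measurable_const).max measurable_const)

/-- Key right-derivative lemma. -/
lemma derivR (hWm : Measurable W) (hZm : Measurable Z) (hW0 : ∀ ω, 0 ≤ W ω)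
    (hWint : Integrable W P)
    (hint : ∀ u : ℝ, Integrable (fun ω => W ω * max (Z ω - u) 0) P) (s : ℝ) :
    HasDerivWithinAt (fun u => ∫ ω, W ω * max (Z ω - u) 0 ∂P)
      (-∫ ω, W ω * iof Z s ω ∂P) (Ici s) s := by
  rw [hasDerivWithinAt_iff_tendsto_slope, Ici_sdiff_left]
  set f : ℝ → ℝ := fun u => ∫ ω, W ω * max (Z ω - u) 0 ∂P with hf
  have key : ∀ u : ℝ, slope f s u
      = ∫ ω, W ω * ((max (Z ω - u) 0 - max (Z ω - s) 0) / (u - s)) ∂P := by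
    intro u
    rw [slope_def_field]
    have h1 : f u - f s = ∫ ω, W ω * (max (Z ω - u) 0 - max (Z ω - s) 0) ∂P := by
      rw [← integral_sub (hint u) (hint s)]
      congr 1; funext ω; ring
    rw [h1, ← integral_div]
    congr 1; funext ω; ring
  have lim : Filter.Tendsto
      (fun u => ∫ ω, W ω * ((max (Z ω - u) 0 - max (Z ω - s) 0) / (u - s)) ∂P)
      (𝓝[>] s) (𝓝 (∫ ω, -(W ω * iof Z s ω) ∂P)) := by
    apply tendsto_integral_filter_of_dominated_convergence (bound := W)
    · filter_upwards with u
      exact ((hWm.mul ((((hZm.sub measurable_const).max measurable_const).sub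
        ((hZm.sub measurable_const).max measurable_const)).div_const _))).aestronglyMeasurable
    · filter_upwards [self_mem_nhdsWithin] with u (hu : s < u)
      filter_upwards with ω
      rw [Real.norm_eq_abs, abs_mul, abs_of_nonneg (hW0 ω)]
      have h2 : |(max (Z ω - u) 0 - max (Z ω - s) 0) / (u - s)| ≤ 1 := by
        rw [abs_div]
        rw [div_le_one (by rw [abs_of_pos (by linarith)]; linarith)]
        calc |max (Z ω - u) 0 - max (Z ω - s) 0| ≤ |(Z ω - u) - (Z ω - s)| :=
              abs_max_sub_max_le_abs _ _ _
          _ = |u - s| := by rw [abs_sub_comm]; ring_nf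
      nlinarith [hW0 ω, abs_nonneg ((max (Z ω - u) 0 - max (Z ω - s) 0) / (u - s))]
    · exact hWint
    · filter_upwards with ω
      by_cases hz : s < Z ω
      · have hmem : Set.Ioo s (Z ω) ∈ 𝓝[>] s := Ioo_mem_nhdsGT_of_mem ⟨le_refl s, hz⟩
        have : ∀ u ∈ Set.Ioo s (Z ω),
            W ω * ((max (Z ω - u) 0 - max (Z ω - s) 0) / (u - s)) = -(W ω * iof Z s ω) := by
          intro u hu
          have h3 : max (Z ω - u) 0 = Z ω - u := max_eq_left (by linarith [hu.2])
          have h4 : max (Z ω - s) 0 = Z ω - s := max_eq_left (by linarith)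
          have h5 : iof Z s ω = 1 := if_pos hz
          rw [h3, h4, h5]
          have hus : u - s ≠ 0 := by have := hu.1; intro h; linarith [hu.1]
          field_simp
          ring
        exact Filter.Tendsto.congr' (Filter.eventuallyEq_of_mem hmem fun u hu => (this u hu).symm)
          tendsto_const_nhds
      · have h5 : iof Z s ω = 0 := if_neg hz
        push_neg at hz
        have : ∀ u ∈ Set.Ioi s,
            W ω * ((max (Z ω - u) 0 - max (Z ω - s) 0) / (u - s)) = -(W ω * iof Z s ω) := by
          intro u (hu : s < u)
          have h3 : max (Z ω - u) 0 = 0 := max_eq_right (by linarith)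
          have h4 : max (Z ω - s) 0 = 0 := max_eq_right (by linarith)
          rw [h3, h4, h5]; ring_nf
        exact Filter.Tendsto.congr' (Filter.eventuallyEq_of_mem self_mem_nhdsWithin
          fun u hu => (this u hu).symm) tendsto_const_nhds
  rw [integral_neg] at lim
  exact Filter.Tendsto.congr (fun u => (key u).symm) lim
end Deriv
section Lims
variable {Ω : Type*} [MeasurableSpace Ω] (P : Measure Ω) [IsFiniteMeasure P]
variable {W Z : Ω → ℝ}

/-- `∫ W · 1_{u < Z} → ∫ W` as `u → -∞`. -/
lemma limA (hWm : Measurable W) (hZm : Measurable Z) (hW0 : ∀ ω, 0 ≤ W ω)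
    (hWint : Integrable W P) :
    Filter.Tendsto (fun u => ∫ ω, W ω * iof Z u ω ∂P) Filter.atBot (𝓝 (∫ ω, W ω ∂P)) := by
  apply tendsto_integral_filter_of_dominated_convergence (bound := W)
  · filter_upwards with u
    exact (hWm.mul (iof_meas hZm u)).aestronglyMeasurable
  · filter_upwards with u
    filter_upwards with ω
    rw [Real.norm_eq_abs, abs_mul, abs_of_nonneg (hW0 ω), abs_of_nonneg (iof_nonneg Z u ω)]
    nlinarith [hW0 ω, iof_le_one Z u ω, iof_nonneg Z u ω]
  · exact hWint
  · filter_upwards with ω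
    have : ∀ u ∈ Set.Iio (Z ω), W ω * iof Z u ω = W ω := by
      intro u (hu : u < Z ω)
      rw [show iof Z u ω = 1 from if_pos hu, mul_one]
    exact Filter.Tendsto.congr' (Filter.eventuallyEq_of_mem (Filter.Iio_mem_atBot _)
      fun u hu => (this u hu).symm) tendsto_const_nhds

/-- `∫ W · (Z-u)⁺/(-u) → ∫ W` as `u → -∞`. -/
lemma limB (hWm : Measurable W) (hZm : Measurable Z) (hW0 : ∀ ω, 0 ≤ W ω)
    (hWint : Integrable W P)
    (hint0 : Integrable (fun ω => W ω * max (Z ω - 0) 0) P) :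
    Filter.Tendsto (fun u => ∫ ω, W ω * (max (Z ω - u) 0 / (-u)) ∂P) Filter.atBot
      (𝓝 (∫ ω, W ω ∂P)) := by
  have hint0' : Integrable (fun ω => W ω * max (Z ω) 0) P := by
    simpa using hint0
  apply tendsto_integral_filter_of_dominated_convergence
    (bound := fun ω => W ω + W ω * max (Z ω) 0)
  · filter_upwards with u
    exact (hWm.mul ((((hZm.sub measurable_const).max measurable_const)).div_const _)).aestronglyMeasurable
  · filter_upwards [Filter.Iic_mem_atBot (-1 : ℝ)] with u (hu : u ≤ -1)
    filter_upwards with ω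
    have hnu : (0:ℝ) < -u := by linarith
    rw [Real.norm_eq_abs, abs_mul, abs_of_nonneg (hW0 ω),
      abs_of_nonneg (div_nonneg (le_max_right _ _) hnu.le)]
    have key : max (Z ω - u) 0 / (-u) ≤ 1 + max (Z ω) 0 := by
      rw [div_le_iff₀ hnu]
      have h1 : Z ω - u ≤ max (Z ω) 0 + (-u) := by
        have := le_max_left (Z ω) 0; linarith
      have h2 : (0:ℝ) ≤ max (Z ω) 0 + (-u) := by positivity
      have h3 : max (Z ω - u) 0 ≤ max (Z ω) 0 + (-u) := max_le h1 h2
      nlinarith [le_max_right (Z ω) 0]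
    nlinarith [hW0 ω, div_nonneg (le_max_right (Z ω - u) 0) hnu.le]
  · exact hWint.add hint0'
  · filter_upwards with ω
    have : ∀ u ∈ Set.Iio (min (Z ω) 0), W ω * (max (Z ω - u) 0 / (-u)) =
        W ω * (Z ω / (-u) + 1) := by
      intro u hu
      rw [Set.mem_Iio, lt_min_iff] at hu
      have h3 : max (Z ω - u) 0 = Z ω - u := max_eq_left (by linarith [hu.1])
      rw [h3]
      have hne : u ≠ 0 := by intro h; subst h; exact absurd hu.2 (lt_irrefl _)
      have h6 : (Z ω - u) / (-u) = Z ω / (-u) + 1 := by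
        rw [div_add' _ _ _ (neg_ne_zero.mpr hne)]
        congr 1; ring
      rw [h6]

    have hlim : Filter.Tendsto (fun u : ℝ => W ω * (Z ω / (-u) + 1)) Filter.atBot
        (𝓝 (W ω)) := by
      have h1 : Filter.Tendsto (fun u : ℝ => -u) Filter.atBot Filter.atTop :=
        Filter.tendsto_neg_atBot_atTop
      have h2 : Filter.Tendsto (fun u : ℝ => Z ω / (-u)) Filter.atBot (𝓝 0) :=
        Filter.Tendsto.div_atTop tendsto_const_nhds h1
      have h3 : Filter.Tendsto (fun u : ℝ => Z ω / (-u) + 1) Filter.atBot (𝓝 1) := by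
        simpa using h2.add tendsto_const_nhds
      simpa using (tendsto_const_nhds (x := W ω)).mul h3
    exact Filter.Tendsto.congr' (Filter.eventuallyEq_of_mem (Filter.Iio_mem_atBot _)
      fun u hu => (this u hu).symm) hlim
end Lims
section Defs
variable {Ω : Type*} [MeasurableSpace Ω]

noncomputable def Phi (P : Measure Ω) (X Y : Ω → ℝ) (t s : ℝ) : ℝ :=
  ∫ ω, ppf X t ω * ppf Y s ω ∂P
noncomputable def Ao (P : Measure Ω) (X Y : Ω → ℝ) (t s : ℝ) : ℝ :=
  ∫ ω, iof Y s ω * ppf X t ω ∂P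
noncomputable def Bo (P : Measure Ω) (X Y : Ω → ℝ) (t s : ℝ) : ℝ :=
  ∫ ω, iof X t ω * ppf Y s ω ∂P
noncomputable def Fo (P : Measure Ω) (X Y : Ω → ℝ) (t s : ℝ) : ℝ :=
  ∫ ω, iof X t ω * iof Y s ω ∂P
noncomputable def Abar (P : Measure Ω) (X : Ω → ℝ) (t : ℝ) : ℝ := ∫ ω, ppf X t ω ∂P
noncomputable def FXo (P : Measure Ω) (X : Ω → ℝ) (t : ℝ) : ℝ := ∫ ω, iof X t ω ∂P
noncomputable def Ac (P : Measure Ω) (X Y : Ω → ℝ) (t s : ℝ) : ℝ :=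
  ∫ ω, icf Y s ω * ppf X t ω ∂P
noncomputable def Bc (P : Measure Ω) (X Y : Ω → ℝ) (t s : ℝ) : ℝ :=
  ∫ ω, icf X t ω * ppf Y s ω ∂P

variable (P : Measure Ω) (X Y : Ω → ℝ)

lemma Phi_swap (t s : ℝ) : Phi P X Y t s = Phi P Y X s t := by
  unfold Phi; congr 1; funext ω; ring
lemma Fo_swap (t s : ℝ) : Fo P X Y t s = Fo P Y X s t := by
  unfold Fo; congr 1; funext ω; ring
lemma Ao_swap (t s : ℝ) : Ao P X Y t s = Bo P Y X s t := by
  unfold Ao Bo; rfl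
lemma Ac_swap (t s : ℝ) : Ac P X Y t s = Bc P Y X s t := by
  unfold Ac Bc; rfl

end Defs

section Backward
variable {Ω : Type*} [MeasurableSpace Ω] {P : Measure Ω} [IsProbabilityMeasure P]
variable {X Y : Ω → ℝ}

/-- U is measurable -/
lemma measU (hX : Measurable X) (hY : Measurable Y) (t s : ℝ) :
    MeasurableSet {ω | t ≤ X ω ∧ s ≤ Y ω} := by
  have : {ω | t ≤ X ω ∧ s ≤ Y ω} = {ω | t ≤ X ω} ∩ {ω | s ≤ Y ω} := rfl
  rw [this]
  exact (measurableSet_le measurable_const hX).inter (measurableSet_le measurable_const hY)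

lemma pp_indicator (t s : ℝ) : (fun ω => ppf X t ω * ppf Y s ω)
    = Set.indicator {ω | t ≤ X ω ∧ s ≤ Y ω} (fun ω => (X ω - t) * (Y ω - s)) := by
  funext ω
  rw [Set.indicator_apply]
  by_cases h1 : t ≤ X ω
  · by_cases h2 : s ≤ Y ω
    · rw [if_pos ⟨h1, h2⟩]
      unfold ppf
      rw [max_eq_left (by linarith), max_eq_left (by linarith)]
    · rw [if_neg (by simp only [Set.mem_setOf_eq]; tauto)]
      unfold ppf
      rw [max_eq_right (a := Y ω - s) (by linarith), mul_zero]
  · rw [if_neg (by simp only [Set.mem_setOf_eq]; tauto)]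
    unfold ppf
    rw [max_eq_right (a := X ω - t) (by linarith), zero_mul]

lemma ac_indicator (t s : ℝ) : (fun ω => icf Y s ω * ppf X t ω)
    = Set.indicator {ω | t ≤ X ω ∧ s ≤ Y ω} (fun ω => X ω - t) := by
  funext ω
  rw [Set.indicator_apply]
  by_cases h1 : t ≤ X ω
  · by_cases h2 : s ≤ Y ω
    · rw [if_pos ⟨h1, h2⟩]
      unfold icf ppf
      rw [if_pos h2, max_eq_left (by linarith), one_mul]
    · rw [if_neg (by simp only [Set.mem_setOf_eq]; tauto)]
      unfold icf
      rw [if_neg h2, zero_mul]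
  · rw [if_neg (by simp only [Set.mem_setOf_eq]; tauto)]
    unfold ppf
    rw [max_eq_right (a := X ω - t) (by linarith), mul_zero]

lemma bc_indicator (t s : ℝ) : (fun ω => icf X t ω * ppf Y s ω)
    = Set.indicator {ω | t ≤ X ω ∧ s ≤ Y ω} (fun ω => Y ω - s) := by
  funext ω
  rw [Set.indicator_apply]
  by_cases h2 : s ≤ Y ω
  · by_cases h1 : t ≤ X ω
    · rw [if_pos ⟨h1, h2⟩]
      unfold icf ppf
      rw [if_pos h1, max_eq_left (by linarith), one_mul]
    · rw [if_neg (by simp only [Set.mem_setOf_eq]; tauto)]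
      unfold icf
      rw [if_neg h1, zero_mul]
  · rw [if_neg (by simp only [Set.mem_setOf_eq]; tauto)]
    unfold ppf
    rw [max_eq_right (a := Y ω - s) (by linarith), mul_zero]

/-- The main hypothesis (RHS of the iff). -/
abbrev Hyp (P : Measure Ω) (X Y : Ω → ℝ) : Prop :=
  ∀ t s : ℝ, 0 < P {ω | t ≤ X ω ∧ s ≤ Y ω} →
    IntegrableOn (fun ω => X ω * Y ω) {ω | t ≤ X ω ∧ s ≤ Y ω} P ∧
    cexp P {ω | t ≤ X ω ∧ s ≤ Y ω} (fun ω => X ω * Y ω)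
      = cexp P {ω | t ≤ X ω ∧ s ≤ Y ω} X * cexp P {ω | t ≤ X ω ∧ s ≤ Y ω} Y

lemma Hyp_swap (h : Hyp P X Y) : Hyp P Y X := by
  intro t s hpos
  have hset : {ω | t ≤ Y ω ∧ s ≤ X ω} = {ω | s ≤ X ω ∧ t ≤ Y ω} := by
    ext ω; exact and_comm
  rw [hset] at hpos ⊢
  obtain ⟨h1, h2⟩ := h s t hpos
  constructor
  · have : (fun ω => Y ω * X ω) = fun ω => X ω * Y ω := by funext ω; ring
    rw [this]; exact h1
  · have : (fun ω => Y ω * X ω) = fun ω => X ω * Y ω := by funext ω; ring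
    rw [this, h2]; ring

variable (hX : Measurable X) (hY : Measurable Y)
  (hXint : Integrable X P) (hYint : Integrable Y P)

include hX hY hXint hYint

/-- Integrability of the product of positive parts. -/
lemma IntPP (h : Hyp P X Y) (t s : ℝ) :
    Integrable (fun ω => ppf X t ω * ppf Y s ω) P := by
  set U := {ω | t ≤ X ω ∧ s ≤ Y ω} with hU
  rcases eq_or_lt_of_le ((zero_le : 0 ≤ P U)) with h0 | hpos
  · have hae : ∀ᵐ ω ∂P, ω ∉ U := measure_eq_zero_iff_ae_notMem.mp h0.symm
    apply (integrable_zero Ω ℝ P).congr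
    filter_upwards [hae] with ω hω
    have := congrFun (pp_indicator (X := X) (Y := Y) t s) ω
    rw [Set.indicator_apply, if_neg hω] at this
    simp [this]
  · obtain ⟨hIntOn, _⟩ := h t s hpos
    rw [pp_indicator t s]
    apply IntegrableOn.integrable_indicator _ (measU hX hY t s)
    have : (fun ω => (X ω - t) * (Y ω - s))
        = fun ω => X ω * Y ω - t * Y ω - s * X ω + t * s := by funext ω; ring
    rw [this]
    exact (((hIntOn.sub ((hYint.restrict).const_mul t)).sub
      ((hXint.restrict).const_mul s)).add (integrable_const _))

/-- The closed-version equation, valid everywhere. -/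
lemma EqClosed (h : Hyp P X Y) (t s : ℝ) :
    (P {ω | t ≤ X ω ∧ s ≤ Y ω}).toReal * Phi P X Y t s
      = Ac P X Y t s * Bc P X Y t s := by
  set U := {ω | t ≤ X ω ∧ s ≤ Y ω} with hUdef
  rcases eq_or_lt_of_le ((zero_le : 0 ≤ P U)) with h0 | hpos
  · have hae : ∀ᵐ ω ∂P, ω ∉ U := measure_eq_zero_iff_ae_notMem.mp h0.symm
    have hAc : Ac P X Y t s = 0 := by
      apply integral_eq_zero_of_ae
      filter_upwards [hae] with ω hω
      have := congrFun (ac_indicator (X := X) (Y := Y) t s) ω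
      rw [Set.indicator_apply, if_neg hω] at this
      simp [this]
    have hF : (P U).toReal = 0 := by rw [← h0]; simp
    rw [hAc, hF, zero_mul, zero_mul]
  · obtain ⟨hIntOn, hcexp⟩ := h t s hpos
    have hU : MeasurableSet U := measU hX hY t s
    set p := (P U).toReal with hpdef
    have hp : 0 < p := ENNReal.toReal_pos hpos.ne' (measure_ne_top P U)
    set m := ∫ ω in U, X ω * Y ω ∂P with hm
    set a := ∫ ω in U, X ω ∂P with ha
    set b := ∫ ω in U, Y ω ∂P with hb
    have hXU : IntegrableOn X U P := hXint.restrict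
    have hYU : IntegrableOn Y U P := hYint.restrict
    have hcexp' : m * p = a * b := by
      unfold cexp at hcexp
      rw [← hpdef, ← hm, ← ha, ← hb] at hcexp
      field_simp at hcexp
      have h2 : (m * p) * p = (a * b) * p := by linear_combination p * hcexp
      exact mul_right_cancel₀ hp.ne' h2
    have hPu : ∫ (_ : Ω) in U, (1:ℝ) ∂P = p := by
      rw [setIntegral_const]; simp [Measure.real_def, hpdef]
    have hAc : Ac P X Y t s = a - t * p := by
      unfold Ac
      rw [ac_indicator t s, integral_indicator hU]
      have : ∫ ω in U, (X ω - t) ∂P = a - t * p := by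
        rw [integral_sub hXU (integrable_const t), setIntegral_const]
        simp [mul_comm, Measure.real_def, hpdef, ha]
      exact this
    have hBc : Bc P X Y t s = b - s * p := by
      unfold Bc
      rw [bc_indicator t s, integral_indicator hU]
      rw [integral_sub hYU (integrable_const s), setIntegral_const]
      simp [mul_comm, Measure.real_def, hpdef, hb]
    have hPhi : Phi P X Y t s = m - t * b - s * a + t * s * p := by
      unfold Phi
      rw [pp_indicator t s, integral_indicator hU]
      have hexp : (fun ω => (X ω - t) * (Y ω - s))
          = fun ω => X ω * Y ω - t * Y ω - s * X ω + t * s := by funext ω; ring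
      rw [hexp]
      have hI1 : IntegrableOn (fun ω => X ω * Y ω - t * Y ω) U P := by
        exact hIntOn.sub (hYU.const_mul t)
      have hI2 : IntegrableOn (fun ω => X ω * Y ω - t * Y ω - s * X ω) U P := by
        exact hI1.sub (hXU.const_mul s)
      rw [integral_add hI2 (integrable_const _), integral_sub hI1 (hXU.const_mul s),
        integral_sub hIntOn (hYU.const_mul t), integral_const_mul, integral_const_mul,
        setIntegral_const]
      simp only [smul_eq_mul, Measure.real_def, ← hpdef]
      rw [← hm, ← ha, ← hb]
      ring
    rw [hAc, hBc, hPhi]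
    linear_combination hcexp'
end Backward
section Cont
variable {Ω : Type*} [MeasurableSpace Ω] {P : Measure Ω} [IsFiniteMeasure P] {W Z : Ω → ℝ}

lemma contInt (hWm : Measurable W) (hW0 : ∀ ω, 0 ≤ W ω) (hWint : Integrable W P)
    (hint : ∀ u : ℝ, Integrable (fun ω => W ω * max (Z ω - u) 0) P) :
    Continuous (fun u => ∫ ω, W ω * max (Z ω - u) 0 ∂P) := by
  set f : ℝ → ℝ := fun u => ∫ ω, W ω * max (Z ω - u) 0 ∂P with hf
  have key : ∀ a b : ℝ, |f a - f b| ≤ (∫ ω, W ω ∂P) * |a - b| := by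
    intro a b
    rw [hf]
    simp only
    rw [← integral_sub (hint a) (hint b)]
    have e1 : ∀ ω, W ω * max (Z ω - a) 0 - W ω * max (Z ω - b) 0
        = W ω * (max (Z ω - a) 0 - max (Z ω - b) 0) := by intro ω; ring
    have hsub : Integrable (fun ω => |W ω * max (Z ω - a) 0 - W ω * max (Z ω - b) 0|) P := by
      exact ((hint a).sub (hint b)).abs
    calc |∫ ω, (W ω * max (Z ω - a) 0 - W ω * max (Z ω - b) 0) ∂P|
        = ‖∫ ω, (W ω * max (Z ω - a) 0 - W ω * max (Z ω - b) 0) ∂P‖ :=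
          (Real.norm_eq_abs _).symm
      _ ≤ ∫ ω, ‖W ω * max (Z ω - a) 0 - W ω * max (Z ω - b) 0‖ ∂P :=
          norm_integral_le_integral_norm _
      _ = ∫ ω, |W ω * max (Z ω - a) 0 - W ω * max (Z ω - b) 0| ∂P := by
          simp only [Real.norm_eq_abs]
      _ ≤ ∫ ω, W ω * |a - b| ∂P := by
          apply integral_mono hsub (hWint.mul_const _)
          intro ω
          simp only
          rw [e1 ω, abs_mul, abs_of_nonneg (hW0 ω)]
          apply mul_le_mul_of_nonneg_left _ (hW0 ω)
          calc |max (Z ω - a) 0 - max (Z ω - b) 0| ≤ |(Z ω - a) - (Z ω - b)| :=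
                abs_max_sub_max_le_abs _ _ _
            _ = |a - b| := by rw [abs_sub_comm]; ring_nf
      _ = (∫ ω, W ω ∂P) * |a - b| := integral_mul_const _ _
  have hlip : LipschitzWith (∫ ω, W ω ∂P).toNNReal f := by
    apply LipschitzWith.of_dist_le_mul
    intro a b
    rw [Real.dist_eq, Real.dist_eq, Real.coe_toNNReal']
    calc |f a - f b| ≤ (∫ ω, W ω ∂P) * |a - b| := key a b
      _ ≤ max (∫ ω, W ω ∂P) 0 * |a - b| :=
          mul_le_mul_of_nonneg_right (le_max_left _ _) (abs_nonneg _)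
  exact hlip.continuous
end Cont

section Pos
variable {Ω : Type*} [MeasurableSpace Ω] {P : Measure Ω} [IsProbabilityMeasure P] {X Y : Ω → ℝ}

lemma ppf_ne_iff (t : ℝ) (ω : Ω) : ppf X t ω ≠ 0 ↔ t < X ω := by
  unfold ppf
  constructor
  · intro h
    by_contra hc
    push_neg at hc
    exact h (max_eq_right (by linarith))
  · intro h
    have : max (X ω - t) 0 = X ω - t := max_eq_left (by linarith)
    rw [this]; intro hc; linarith

lemma iof_ne_iff (t : ℝ) (ω : Ω) : iof X t ω ≠ 0 ↔ t < X ω := by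
  unfold iof; split <;> simp_all

lemma icf_ne_iff (t : ℝ) (ω : Ω) : icf X t ω ≠ 0 ↔ t ≤ X ω := by
  unfold icf; split <;> simp_all

lemma Phi_pos_iff (hX : Measurable X) (hY : Measurable Y) (hI : Integrable (fun ω => ppf X t ω * ppf Y s ω) P) :
    0 < Phi P X Y t s ↔ 0 < P {ω | t < X ω ∧ s < Y ω} := by
  unfold Phi
  rw [integral_pos_iff_support_of_nonneg
    (fun ω => mul_nonneg (ppf_nonneg X t ω) (ppf_nonneg Y s ω)) hI]
  have : Function.support (fun ω => ppf X t ω * ppf Y s ω) = {ω | t < X ω ∧ s < Y ω} := by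
    ext ω
    simp only [Function.mem_support, mul_ne_zero_iff, ppf_ne_iff, Set.mem_setOf_eq]
  rw [this]

lemma Ac_pos_iff (hX : Measurable X) (hY : Measurable Y) (hXint : Integrable X P) :
    0 < Ac P X Y t s ↔ 0 < P {ω | t < X ω ∧ s ≤ Y ω} := by
  unfold Ac
  have hI : Integrable (fun ω => icf Y s ω * ppf X t ω) P := by
    refine (ppf_integrable P hXint t).mono'
      ((icf_meas hY s).mul (ppf_meas hX t)).aestronglyMeasurable ?_
    filter_upwards with ω
    rw [Real.norm_eq_abs, abs_mul, abs_of_nonneg (icf_nonneg Y s ω),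
      abs_of_nonneg (ppf_nonneg X t ω)]
    nlinarith [icf_le_one Y s ω, icf_nonneg Y s ω, ppf_nonneg X t ω]
  rw [integral_pos_iff_support_of_nonneg
    (fun ω => mul_nonneg (icf_nonneg Y s ω) (ppf_nonneg X t ω)) hI]
  have : Function.support (fun ω => icf Y s ω * ppf X t ω) = {ω | t < X ω ∧ s ≤ Y ω} := by
    ext ω
    simp only [Function.mem_support, mul_ne_zero_iff, icf_ne_iff, ppf_ne_iff, Set.mem_setOf_eq]
    tauto
  rw [this]

lemma Fo_pos_iff (hX : Measurable X) (hY : Measurable Y) :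
    0 < Fo P X Y t s ↔ 0 < P {ω | t < X ω ∧ s < Y ω} := by
  unfold Fo
  have hI : Integrable (fun ω => iof X t ω * iof Y s ω) P := by
    refine (integrable_const (1:ℝ)).mono'
      ((iof_meas hX t).mul (iof_meas hY s)).aestronglyMeasurable ?_
    filter_upwards with ω
    rw [Real.norm_eq_abs, abs_mul, abs_of_nonneg (iof_nonneg X t ω),
      abs_of_nonneg (iof_nonneg Y s ω)]
    nlinarith [iof_le_one X t ω, iof_nonneg X t ω, iof_le_one Y s ω, iof_nonneg Y s ω]
  rw [integral_pos_iff_support_of_nonneg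
    (fun ω => mul_nonneg (iof_nonneg X t ω) (iof_nonneg Y s ω)) hI]
  have : Function.support (fun ω => iof X t ω * iof Y s ω) = {ω | t < X ω ∧ s < Y ω} := by
    ext ω
    simp only [Function.mem_support, mul_ne_zero_iff, iof_ne_iff, Set.mem_setOf_eq]
  rw [this]

lemma FXo_pos_iff (hX : Measurable X) : 0 < FXo P X t ↔ 0 < P {ω | t < X ω} := by
  unfold FXo
  rw [integral_iof P hX t]
  rw [ENNReal.toReal_pos_iff]
  constructor
  · exact fun h => h.1
  · exact fun h => ⟨h, lt_of_le_of_lt (measure_mono (Set.subset_univ _))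
      (by rw [measure_univ]; exact ENNReal.one_lt_top)⟩
end Pos
section EqOpenSec
variable {Ω : Type*} [MeasurableSpace Ω] {P : Measure Ω} [IsProbabilityMeasure P] {X Y : Ω → ℝ}

lemma ppf_anti (Z : Ω → ℝ) (ω : Ω) {u v : ℝ} (huv : u ≤ v) : ppf Z v ω ≤ ppf Z u ω :=
  max_le_max (by linarith) le_rfl

lemma Fc_eq (hX : Measurable X) (hY : Measurable Y) (t s : ℝ) :
    (P {ω | t ≤ X ω ∧ s ≤ Y ω}).toReal = ∫ ω, icf X t ω * icf Y s ω ∂P := by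
  have h1 : (fun ω => icf X t ω * icf Y s ω)
      = Set.indicator {ω | t ≤ X ω ∧ s ≤ Y ω} (1 : Ω → ℝ) := by
    funext ω
    rw [Set.indicator_apply]
    unfold icf
    by_cases h1 : t ≤ X ω <;> by_cases h2 : s ≤ Y ω <;>
      simp [h1, h2, Set.mem_setOf_eq]
  rw [h1, integral_indicator_one (measU hX hY t s), Measure.real_def]

variable (hX : Measurable X) (hY : Measurable Y)
  (hXint : Integrable X P) (hYint : Integrable Y P)

include hX hY hXint hYint

/-- The open-version equation, valid everywhere. -/
lemma EqOpen (h : Hyp P X Y) (t s : ℝ) :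
    Fo P X Y t s * Phi P X Y t s = Ao P X Y t s * Bo P X Y t s := by
  set e : ℕ → ℝ := fun n => 1 / (n + 1) with hedef
  have he_pos : ∀ n, 0 < e n := fun n => by positivity
  have he0 : Filter.Tendsto e Filter.atTop (𝓝 0) := tendsto_one_div_add_atTop_nhds_zero_nat
  -- pointwise convergence of indicators
  have hicf : ∀ (Z : Ω → ℝ) (u : ℝ) (ω : Ω),
      Filter.Tendsto (fun n => icf Z (u + e n) ω) Filter.atTop (𝓝 (iof Z u ω)) := by
    intro Z u ω
    by_cases hz : u < Z ω
    · have hev : ∀ᶠ n in Filter.atTop, e n < Z ω - u :=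
        he0.eventually_lt_const (by linarith)
      rw [show iof Z u ω = 1 from if_pos hz]
      apply Filter.Tendsto.congr' _ (tendsto_const_nhds (x := (1:ℝ)))
      filter_upwards [hev] with n hn
      exact (if_pos (by linarith)).symm
    · push_neg at hz
      rw [show iof Z u ω = 0 from if_neg (by push_neg; exact hz)]
      apply Filter.Tendsto.congr' _ (tendsto_const_nhds (x := (0:ℝ)))
      filter_upwards with n
      exact (if_neg (by push_neg; linarith [he_pos n])).symm
  have hppf : ∀ (Z : Ω → ℝ) (u : ℝ) (ω : Ω),
      Filter.Tendsto (fun n => ppf Z (u + e n) ω) Filter.atTop (𝓝 (ppf Z u ω)) := by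
    intro Z u ω
    have hc : Continuous fun x : ℝ => max (Z ω - (u + x)) 0 :=
      (continuous_const.sub (continuous_const.add continuous_id)).max continuous_const
    have := (hc.tendsto 0).comp he0
    simpa [ppf, Function.comp_def] using this
  -- four limits
  have hF : Filter.Tendsto (fun n => ∫ ω, icf X (t + e n) ω * icf Y (s + e n) ω ∂P)
      Filter.atTop (𝓝 (Fo P X Y t s)) := by
    unfold Fo
    apply tendsto_integral_filter_of_dominated_convergence (bound := fun _ => (1:ℝ))
    · filter_upwards with n
      exact ((icf_meas hX _).mul (icf_meas hY _)).aestronglyMeasurable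
    · filter_upwards with n
      filter_upwards with ω
      rw [Real.norm_eq_abs, abs_mul, abs_of_nonneg (icf_nonneg _ _ _),
        abs_of_nonneg (icf_nonneg _ _ _)]
      nlinarith [icf_le_one X (t + e n) ω, icf_nonneg X (t + e n) ω,
        icf_le_one Y (s + e n) ω, icf_nonneg Y (s + e n) ω]
    · exact integrable_const _
    · filter_upwards with ω
      exact (hicf X t ω).mul (hicf Y s ω)
  have hPhi : Filter.Tendsto (fun n => Phi P X Y (t + e n) (s + e n))
      Filter.atTop (𝓝 (Phi P X Y t s)) := by
    unfold Phi
    apply tendsto_integral_filter_of_dominated_convergence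
      (bound := fun ω => ppf X t ω * ppf Y s ω)
    · filter_upwards with n
      exact ((ppf_meas hX _).mul (ppf_meas hY _)).aestronglyMeasurable
    · filter_upwards with n
      filter_upwards with ω
      rw [Real.norm_eq_abs, abs_mul, abs_of_nonneg (ppf_nonneg _ _ _),
        abs_of_nonneg (ppf_nonneg _ _ _)]
      exact mul_le_mul (ppf_anti X ω (by linarith [he_pos n]))
        (ppf_anti Y ω (by linarith [he_pos n])) (ppf_nonneg _ _ _) (ppf_nonneg _ _ _)
    · exact IntPP hX hY hXint hYint h t s
    · filter_upwards with ω
      exact (hppf X t ω).mul (hppf Y s ω)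
  have hA : Filter.Tendsto (fun n => Ac P X Y (t + e n) (s + e n))
      Filter.atTop (𝓝 (Ao P X Y t s)) := by
    unfold Ac Ao
    apply tendsto_integral_filter_of_dominated_convergence (bound := fun ω => ppf X t ω)
    · filter_upwards with n
      exact ((icf_meas hY _).mul (ppf_meas hX _)).aestronglyMeasurable
    · filter_upwards with n
      filter_upwards with ω
      rw [Real.norm_eq_abs, abs_mul, abs_of_nonneg (icf_nonneg _ _ _),
        abs_of_nonneg (ppf_nonneg _ _ _)]
      have h1 := ppf_anti X ω (show t ≤ t + e n by linarith [he_pos n])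
      nlinarith [icf_le_one Y (s + e n) ω, icf_nonneg Y (s + e n) ω, ppf_nonneg X (t + e n) ω]
    · exact ppf_integrable P hXint t
    · filter_upwards with ω
      exact (hicf Y s ω).mul (hppf X t ω)
  have hB : Filter.Tendsto (fun n => Bc P X Y (t + e n) (s + e n))
      Filter.atTop (𝓝 (Bo P X Y t s)) := by
    unfold Bc Bo
    apply tendsto_integral_filter_of_dominated_convergence (bound := fun ω => ppf Y s ω)
    · filter_upwards with n
      exact ((icf_meas hX _).mul (ppf_meas hY _)).aestronglyMeasurable
    · filter_upwards with n
      filter_upwards with ω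
      rw [Real.norm_eq_abs, abs_mul, abs_of_nonneg (icf_nonneg _ _ _),
        abs_of_nonneg (ppf_nonneg _ _ _)]
      have h1 := ppf_anti Y ω (show s ≤ s + e n by linarith [he_pos n])
      nlinarith [icf_le_one X (t + e n) ω, icf_nonneg X (t + e n) ω, ppf_nonneg Y (s + e n) ω]
    · exact ppf_integrable P hYint s
    · filter_upwards with ω
      exact (hicf X t ω).mul (hppf Y s ω)
  have hs : ∀ n, (∫ ω, icf X (t + e n) ω * icf Y (s + e n) ω ∂P)
      * Phi P X Y (t + e n) (s + e n)
      = Ac P X Y (t + e n) (s + e n) * Bc P X Y (t + e n) (s + e n) := by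
    intro n
    rw [← Fc_eq hX hY]
    exact EqClosed hX hY hXint hYint h _ _
  exact tendsto_nhds_unique ((hF.mul hPhi).congr hs) (hA.mul hB)
end EqOpenSec
section Constancy

/-- Constancy on a down-closed set from vanishing right derivative, with value given
by the limit at `-∞`. -/
lemma const_eval {S : Set ℝ} (hS : ∀ ⦃a b : ℝ⦄, a ∈ S → b ≤ a → b ∈ S) {f : ℝ → ℝ}
    (hd : ∀ s ∈ S, HasDerivWithinAt f 0 (Set.Ici s) s) (hc : ContinuousOn f S)
    {L : ℝ} (hlim : Filter.Tendsto f Filter.atBot (𝓝 L)) : ∀ s ∈ S, f s = L := by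
  have hconst : ∀ a ∈ S, ∀ b ∈ S, a ≤ b → f b = f a := by
    intro a ha b hb hab
    have hIcc : Set.Icc a b ⊆ S := fun x hx => hS hb hx.2
    have hIco : Set.Ico a b ⊆ S := fun x hx => hS hb hx.2.le
    exact constant_of_has_deriv_right_zero (hc.mono hIcc)
      (fun x hx => hd x (hIco hx)) b ⟨hab, le_refl b⟩
  intro s hs
  have hev : f =ᶠ[Filter.atBot] fun _ => f s := by
    filter_upwards [Filter.Iic_mem_atBot s] with b (hb : b ≤ s)
    exact (hconst b (hS hs hb) s hs hb).symm
  have : Filter.Tendsto f Filter.atBot (𝓝 (f s)) := by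
    rw [Filter.tendsto_congr' hev]
    exact tendsto_const_nhds
  exact tendsto_nhds_unique this hlim

lemma div_div_aux (a b c : ℝ) (hc : c ≠ 0) : a / c / (b / c) = a / b := by
  rcases eq_or_ne b 0 with hb | hb
  · subst hb; simp
  · field_simp
end Constancy

section Lmain
variable {Ω : Type*} [MeasurableSpace Ω] {P : Measure Ω} [IsProbabilityMeasure P] {X Y : Ω → ℝ}

lemma iof_mul_ppf_integrable (hY : Measurable Y) (hX : Measurable X)
    (hXint : Integrable X P) (s u : ℝ) :
    Integrable (fun ω => iof Y s ω * max (X ω - u) 0) P := by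
  refine (ppf_integrable P hXint u).mono'
    ((iof_meas hY s).mul ((hX.sub measurable_const).max measurable_const)).aestronglyMeasurable ?_
  filter_upwards with ω
  rw [Real.norm_eq_abs, abs_mul, abs_of_nonneg (iof_nonneg Y s ω),
    abs_of_nonneg (le_max_right _ _)]
  have h1 := iof_le_one Y s ω
  have h2 := iof_nonneg Y s ω
  have h3 : (0:ℝ) ≤ max (X ω - u) 0 := le_max_right _ _
  have h4 : ppf X u ω = max (X ω - u) 0 := rfl
  nlinarith [h4.ge]

lemma Abar_nonneg (Z : Ω → ℝ) (u : ℝ) : 0 ≤ Abar P Z u :=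
  integral_nonneg (fun ω => ppf_nonneg Z u ω)

lemma Abar_pos_iff {Z : Ω → ℝ} (hZ : Measurable Z) (hZint : Integrable Z P) (u : ℝ) :
    0 < Abar P Z u ↔ 0 < P {ω | u < Z ω} := by
  unfold Abar
  rw [integral_pos_iff_support_of_nonneg (fun ω => ppf_nonneg Z u ω)
    (ppf_integrable P hZint u)]
  have : Function.support (fun ω => ppf Z u ω) = {ω | u < Z ω} := by
    ext ω
    simp only [Function.mem_support, ppf_ne_iff, Set.mem_setOf_eq]
  rw [this]

variable (hX : Measurable X) (hY : Measurable Y)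
  (hXint : Integrable X P) (hYint : Integrable Y P)

include hX hY hXint hYint

lemma Phi_anti (h : Hyp P X Y) {t t' s s' : ℝ} (ht : t ≤ t') (hs : s ≤ s') :
    Phi P X Y t' s' ≤ Phi P X Y t s := by
  apply integral_mono (IntPP hX hY hXint hYint h t' s') (IntPP hX hY hXint hYint h t s)
  intro ω
  exact mul_le_mul (ppf_anti X ω ht) (ppf_anti Y ω hs) (ppf_nonneg _ _ _) (ppf_nonneg _ _ _)

/-- L3 : `Ao · B̄ = F_Y · Φ` wherever `Φ > 0`. -/
lemma L3 (h : Hyp P X Y) {t s : ℝ} (hpos : 0 < Phi P X Y t s) :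
    Ao P X Y t s * Abar P Y s = FXo P Y s * Phi P X Y t s := by
  set K : Set ℝ := {t' | 0 < Phi P X Y t' s} with hK
  have htK : t ∈ K := hpos
  have hdown : ∀ ⦃a b : ℝ⦄, a ∈ K → b ≤ a → b ∈ K := by
    intro a b ha hba
    exact lt_of_lt_of_le ha (Phi_anti hX hY hXint hYint h hba le_rfl)
  -- derivatives
  have dAo : ∀ t' : ℝ, HasDerivWithinAt (fun u => Ao P X Y u s)
      (-(Fo P X Y t' s)) (Set.Ici t') t' := by
    intro t'
    have d1 := derivR P (iof_meas hY s) hX (iof_nonneg Y s) (iof_integrable P hY s)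
      (fun u => iof_mul_ppf_integrable hY hX hXint s u) t'
    have hval : (∫ ω, iof Y s ω * iof X t' ω ∂P) = Fo P X Y t' s := by
      unfold Fo; congr 1; funext ω; ring
    rw [hval] at d1
    exact d1
  have dPhi : ∀ t' : ℝ, HasDerivWithinAt (fun u => Phi P X Y u s)
      (-(Bo P X Y t' s)) (Set.Ici t') t' := by
    intro t'
    have d2 := derivR P (ppf_meas hY s) hX (ppf_nonneg Y s) (ppf_integrable P hYint s)
      (fun u => by
        have := IntPP hX hY hXint hYint h u s
        apply this.congr
        filter_upwards with ω
        show ppf X u ω * ppf Y s ω = ppf Y s ω * max (X ω - u) 0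
        unfold ppf; ring) t'
    have hval : (∫ ω, ppf Y s ω * iof X t' ω ∂P) = Bo P X Y t' s := by
      unfold Bo; congr 1; funext ω; ring
    rw [hval] at d2
    apply d2.congr
    · intro y _
      rw [Phi_swap]
      rfl
    · rw [Phi_swap]
      rfl
  have hd : ∀ t' ∈ K, HasDerivWithinAt (fun u => Ao P X Y u s / Phi P X Y u s)
      0 (Set.Ici t') t' := by
    intro t' ht'
    have hne : Phi P X Y t' s ≠ 0 := (show (0:ℝ) < _ from ht').ne'
    have hdiv := (dAo t').div (dPhi t') hne
    have hnum : (-(Fo P X Y t' s) * Phi P X Y t' s - Ao P X Y t' s * -(Bo P X Y t' s))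
        / (Phi P X Y t' s) ^ 2 = 0 := by
      have heq := EqOpen hX hY hXint hYint h t' s
      have : -(Fo P X Y t' s) * Phi P X Y t' s - Ao P X Y t' s * -(Bo P X Y t' s) = 0 := by
        linear_combination -heq
      rw [this, zero_div]
    rw [hnum] at hdiv
    exact hdiv
  -- continuity
  have hcA : Continuous (fun u => Ao P X Y u s) := by
    exact contInt (iof_meas hY s) (iof_nonneg Y s) (iof_integrable P hY s)
      (fun u => iof_mul_ppf_integrable hY hX hXint s u)
  have hcP : Continuous (fun u => Phi P X Y u s) := by
    have := contInt (ppf_meas hY s) (ppf_nonneg Y s) (ppf_integrable P hYint s)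
      (fun u => by
        have := IntPP hX hY hXint hYint h u s
        apply this.congr
        filter_upwards with ω
        show ppf X u ω * ppf Y s ω = ppf Y s ω * max (X ω - u) 0
        unfold ppf; ring)
    apply this.congr
    intro u
    rw [Phi_swap]
    rfl
  have hc : ContinuousOn (fun u => Ao P X Y u s / Phi P X Y u s) K :=
    hcA.continuousOn.div hcP.continuousOn (fun t' ht' => (show (0:ℝ) < _ from ht').ne')
  -- limit at -∞
  have hBpos : 0 < Abar P Y s := by
    rw [Abar_pos_iff hY hYint s]
    have h1 := (Phi_pos_iff hX hY (IntPP hX hY hXint hYint h t s)).mp hpos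
    refine lt_of_lt_of_le h1 (measure_mono ?_)
    intro ω hω
    exact hω.2
  have hA' : Filter.Tendsto (fun u => Ao P X Y u s / (-u)) Filter.atBot
      (𝓝 (FXo P Y s)) := by
    have hl := limB P (iof_meas hY s) hX (iof_nonneg Y s) (iof_integrable P hY s)
      (iof_mul_ppf_integrable hY hX hXint s 0)
    have : ∀ u : ℝ, (∫ ω, iof Y s ω * (max (X ω - u) 0 / (-u)) ∂P)
        = Ao P X Y u s / (-u) := by
      intro u
      rw [show Ao P X Y u s = ∫ ω, iof Y s ω * max (X ω - u) 0 ∂P from rfl, ← integral_div]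
      congr 1; funext ω; ring
    rw [show FXo P Y s = ∫ ω, iof Y s ω ∂P from rfl]
    exact hl.congr this
  have hP' : Filter.Tendsto (fun u => Phi P X Y u s / (-u)) Filter.atBot
      (𝓝 (Abar P Y s)) := by
    have hl := limB P (ppf_meas hY s) hX (ppf_nonneg Y s) (ppf_integrable P hYint s)
      (by
        have := IntPP hX hY hXint hYint h 0 s
        apply this.congr
        filter_upwards with ω
        show ppf X 0 ω * ppf Y s ω = ppf Y s ω * max (X ω - 0) 0
        unfold ppf; ring)
    have : ∀ u : ℝ, (∫ ω, ppf Y s ω * (max (X ω - u) 0 / (-u)) ∂P)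
        = Phi P X Y u s / (-u) := by
      intro u
      rw [show Phi P X Y u s = ∫ ω, ppf X u ω * ppf Y s ω ∂P from rfl, ← integral_div]
      congr 1; funext ω; show ppf Y s ω * (max (X ω - u) 0 / (-u)) = ppf X u ω * ppf Y s ω / (-u)
      unfold ppf; ring
    rw [show Abar P Y s = ∫ ω, ppf Y s ω ∂P from rfl]
    exact hl.congr this
  have hlim : Filter.Tendsto (fun u => Ao P X Y u s / Phi P X Y u s) Filter.atBot
      (𝓝 (FXo P Y s / Abar P Y s)) := by
    have hq := hA'.div hP' hBpos.ne'
    apply hq.congr'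
    filter_upwards [Filter.Iio_mem_atBot (0:ℝ)] with u (hu : u < 0)
    exact div_div_aux _ _ _ (neg_ne_zero.mpr hu.ne)
  have := const_eval hdown hd hc hlim t htK
  rw [div_eq_div_iff hpos.ne' hBpos.ne'] at this
  linarith [this]

/-- L4 : `Φ = Ā · B̄` wherever `Φ > 0`. -/
lemma L4 (h : Hyp P X Y) {t s : ℝ} (hpos : 0 < Phi P X Y t s) :
    Phi P X Y t s = Abar P X t * Abar P Y s := by
  set S : Set ℝ := {s' | 0 < Phi P X Y t s'} with hS
  have hsS : s ∈ S := hpos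
  have hdown : ∀ ⦃a b : ℝ⦄, a ∈ S → b ≤ a → b ∈ S := by
    intro a b ha hba
    exact lt_of_lt_of_le ha (Phi_anti hX hY hXint hYint h le_rfl hba)
  have hIntP : ∀ u : ℝ, Integrable (fun ω => ppf X t ω * max (Y ω - u) 0) P :=
    fun u => IntPP hX hY hXint hYint h t u
  have hInt1 : ∀ u : ℝ, Integrable (fun ω => (1:ℝ) * max (Y ω - u) 0) P := by
    intro u
    apply (ppf_integrable P hYint u).congr
    filter_upwards with ω
    show ppf Y u ω = 1 * max (Y ω - u) 0
    unfold ppf; ring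
  have dPhi : ∀ s' : ℝ, HasDerivWithinAt (fun v => Phi P X Y t v)
      (-(Ao P X Y t s')) (Set.Ici s') s' := by
    intro s'
    have d1 := derivR P (ppf_meas hX t) hY (ppf_nonneg X t) (ppf_integrable P hXint t)
      hIntP s'
    have hval : (∫ ω, ppf X t ω * iof Y s' ω ∂P) = Ao P X Y t s' := by
      unfold Ao; congr 1; funext ω; ring
    rw [hval] at d1
    exact d1
  have dBbar : ∀ s' : ℝ, HasDerivWithinAt (fun v => Abar P Y v)
      (-(FXo P Y s')) (Set.Ici s') s' := by
    intro s'
    have d2 := derivR P (measurable_const (a := (1:ℝ))) hY (fun ω => zero_le_one)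
      (integrable_const 1) hInt1 s'
    have hval : (∫ ω, (1:ℝ) * iof Y s' ω ∂P) = FXo P Y s' := by
      unfold FXo; congr 1; funext ω; ring
    rw [hval] at d2
    apply d2.congr
    · intro y _
      show Abar P Y y = ∫ ω, (1:ℝ) * max (Y ω - y) 0 ∂P
      unfold Abar; congr 1; funext ω; show ppf Y y ω = 1 * max (Y ω - y) 0; unfold ppf; ring
    · show Abar P Y s' = ∫ ω, (1:ℝ) * max (Y ω - s') 0 ∂P
      unfold Abar; congr 1; funext ω; show ppf Y s' ω = 1 * max (Y ω - s') 0; unfold ppf; ring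
  have hBpos : ∀ s' ∈ S, 0 < Abar P Y s' := by
    intro s' hs'
    rw [Abar_pos_iff hY hYint s']
    have h1 := (Phi_pos_iff hX hY (IntPP hX hY hXint hYint h t s')).mp hs'
    refine lt_of_lt_of_le h1 (measure_mono ?_)
    intro ω hω
    exact hω.2
  have hd : ∀ s' ∈ S, HasDerivWithinAt (fun v => Phi P X Y t v / Abar P Y v)
      0 (Set.Ici s') s' := by
    intro s' hs'
    have hne : Abar P Y s' ≠ 0 := (hBpos s' hs').ne'
    have hdiv := (dPhi s').div (dBbar s') hne
    have hnum : (-(Ao P X Y t s') * Abar P Y s' - Phi P X Y t s' * -(FXo P Y s'))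
        / (Abar P Y s') ^ 2 = 0 := by
      have heq := L3 hX hY hXint hYint h (show 0 < Phi P X Y t s' from hs')
      have : -(Ao P X Y t s') * Abar P Y s' - Phi P X Y t s' * -(FXo P Y s') = 0 := by
        linear_combination -heq
      rw [this, zero_div]
    rw [hnum] at hdiv
    exact hdiv
  have hcP : Continuous (fun v => Phi P X Y t v) :=
    contInt (ppf_meas hX t) (ppf_nonneg X t) (ppf_integrable P hXint t) hIntP
  have hcB : Continuous (fun v => Abar P Y v) := by
    have := contInt (measurable_const (a := (1:ℝ))) (fun ω => zero_le_one)
      (integrable_const 1) hInt1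
    apply this.congr
    intro v
    unfold Abar; congr 1; funext ω; show (1:ℝ) * max (Y ω - v) 0 = ppf Y v ω
    unfold ppf; ring
  have hc : ContinuousOn (fun v => Phi P X Y t v / Abar P Y v) S :=
    hcP.continuousOn.div hcB.continuousOn (fun s' hs' => (hBpos s' hs').ne')
  have hP' : Filter.Tendsto (fun v => Phi P X Y t v / (-v)) Filter.atBot
      (𝓝 (Abar P X t)) := by
    have hl := limB P (ppf_meas hX t) hY (ppf_nonneg X t) (ppf_integrable P hXint t)
      (hIntP 0)
    have : ∀ v : ℝ, (∫ ω, ppf X t ω * (max (Y ω - v) 0 / (-v)) ∂P)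
        = Phi P X Y t v / (-v) := by
      intro v
      rw [show Phi P X Y t v = ∫ ω, ppf X t ω * ppf Y v ω ∂P from rfl, ← integral_div]
      congr 1; funext ω; show ppf X t ω * (max (Y ω - v) 0 / (-v)) = ppf X t ω * ppf Y v ω / (-v)
      unfold ppf; ring
    rw [show Abar P X t = ∫ ω, ppf X t ω ∂P from rfl]
    exact hl.congr this
  have hB' : Filter.Tendsto (fun v => Abar P Y v / (-v)) Filter.atBot (𝓝 1) := by
    have hl := limB P (measurable_const (a := (1:ℝ))) hY (fun ω => zero_le_one)
      (integrable_const 1) (hInt1 0)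
    have h1 : (∫ _ : Ω, (1:ℝ) ∂P) = 1 := by simp
    rw [h1] at hl
    have : ∀ v : ℝ, (∫ ω, (1:ℝ) * (max (Y ω - v) 0 / (-v)) ∂P)
        = Abar P Y v / (-v) := by
      intro v
      rw [show Abar P Y v = ∫ ω, ppf Y v ω ∂P from rfl, ← integral_div]
      congr 1; funext ω; show (1:ℝ) * (max (Y ω - v) 0 / (-v)) = ppf Y v ω / (-v)
      unfold ppf; ring
    exact hl.congr this
  have hlim : Filter.Tendsto (fun v => Phi P X Y t v / Abar P Y v) Filter.atBot
      (𝓝 (Abar P X t / 1)) := by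
    have hq := hP'.div hB' one_ne_zero
    apply hq.congr'
    filter_upwards [Filter.Iio_mem_atBot (0:ℝ)] with v (hv : v < 0)
    exact div_div_aux _ _ _ (neg_ne_zero.mpr hv.ne)
  rw [div_one] at hlim
  have := const_eval hdown hd hc hlim s hsS
  rw [div_eq_iff (hBpos s hsS).ne'] at this
  exact this

/-- On the region `Φ > 0`, the product formula holds. -/
lemma onR (h : Hyp P X Y) {t s : ℝ} (hpos : 0 < Phi P X Y t s) :
    Fo P X Y t s = FXo P X t * FXo P Y s := by
  have hswap : 0 < Phi P Y X s t := by rw [← Phi_swap]; exact hpos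
  have e1 := EqOpen hX hY hXint hYint h t s
  have e2 := L3 hX hY hXint hYint h hpos
  have e3' := L3 hY hX hYint hXint (Hyp_swap h) hswap
  have e3 : Bo P X Y t s * Abar P X t = FXo P X t * Phi P X Y t s := by
    rw [Ao_swap, ← Phi_swap] at e3'
    exact e3'
  have e4 := L4 hX hY hXint hYint h hpos
  have hApos : 0 < Abar P X t := by
    rcases lt_or_eq_of_le (Abar_nonneg (P := P) X t) with h' | h'
    · exact h'
    · exfalso; rw [e4, ← h', zero_mul] at hpos; exact lt_irrefl 0 hpos
  have hBpos : 0 < Abar P Y s := by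
    rcases lt_or_eq_of_le (Abar_nonneg (P := P) Y s) with h' | h'
    · exact h'
    · exfalso; rw [e4, ← h', mul_zero] at hpos; exact lt_irrefl 0 hpos
  have e5 : Fo P X Y t s * Phi P X Y t s * (Abar P X t * Abar P Y s)
      = FXo P X t * FXo P Y s * (Phi P X Y t s * Phi P X Y t s) := by
    linear_combination (Abar P X t * Abar P Y s) * e1 + (Bo P X Y t s * Abar P X t) * e2
      + (FXo P Y s * Phi P X Y t s) * e3
  rw [← e4] at e5
  have e6 : Fo P X Y t s * (Phi P X Y t s * Phi P X Y t s)
      = (FXo P X t * FXo P Y s) * (Phi P X Y t s * Phi P X Y t s) := by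
    linear_combination e5
  exact mul_right_cancel₀ (mul_ne_zero hpos.ne' hpos.ne') e6
end Lmain
section Pos2
variable {Ω : Type*} [MeasurableSpace Ω] {P : Measure Ω} [IsProbabilityMeasure P] {X Y : Ω → ℝ}

lemma Phi_nonneg (t s : ℝ) : 0 ≤ Phi P X Y t s :=
  integral_nonneg (fun ω => mul_nonneg (ppf_nonneg X t ω) (ppf_nonneg Y s ω))

lemma Ac_nonneg (t s : ℝ) : 0 ≤ Ac P X Y t s :=
  integral_nonneg (fun ω => mul_nonneg (icf_nonneg Y s ω) (ppf_nonneg X t ω))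

lemma Bc_nonneg (t s : ℝ) : 0 ≤ Bc P X Y t s :=
  integral_nonneg (fun ω => mul_nonneg (icf_nonneg X t ω) (ppf_nonneg Y s ω))

lemma bdd_mul_bdd_integrable {V W : Ω → ℝ} (hV : Measurable V) (hW : Measurable W)
    (hV0 : ∀ ω, 0 ≤ V ω) (hV1 : ∀ ω, V ω ≤ 1) (hW0 : ∀ ω, 0 ≤ W ω) (hW1 : ∀ ω, W ω ≤ 1) :
    Integrable (fun ω => V ω * W ω) P := by
  refine (integrable_const (1:ℝ)).mono' (hV.mul hW).aestronglyMeasurable ?_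
  filter_upwards with ω
  rw [Real.norm_eq_abs, abs_mul, abs_of_nonneg (hV0 ω), abs_of_nonneg (hW0 ω)]
  nlinarith [hV0 ω, hV1 ω, hW0 ω, hW1 ω]

lemma Bc_pos_iff (hX : Measurable X) (hY : Measurable Y) (hYint : Integrable Y P) {t s : ℝ} :
    0 < Bc P X Y t s ↔ 0 < P {ω | t ≤ X ω ∧ s < Y ω} := by
  unfold Bc
  have hI : Integrable (fun ω => icf X t ω * ppf Y s ω) P := by
    refine (ppf_integrable P hYint s).mono'
      ((icf_meas hX t).mul (ppf_meas hY s)).aestronglyMeasurable ?_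
    filter_upwards with ω
    rw [Real.norm_eq_abs, abs_mul, abs_of_nonneg (icf_nonneg X t ω),
      abs_of_nonneg (ppf_nonneg Y s ω)]
    nlinarith [icf_le_one X t ω, icf_nonneg X t ω, ppf_nonneg Y s ω]
  rw [integral_pos_iff_support_of_nonneg
    (fun ω => mul_nonneg (icf_nonneg X t ω) (ppf_nonneg Y s ω)) hI]
  have : Function.support (fun ω => icf X t ω * ppf Y s ω) = {ω | t ≤ X ω ∧ s < Y ω} := by
    ext ω
    simp only [Function.mem_support, mul_ne_zero_iff, icf_ne_iff, ppf_ne_iff, Set.mem_setOf_eq]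
  rw [this]

lemma mixOC_pos_iff (hX : Measurable X) (hY : Measurable Y) {t s : ℝ} :
    0 < (∫ ω, iof X t ω * icf Y s ω ∂P) ↔ 0 < P {ω | t < X ω ∧ s ≤ Y ω} := by
  rw [integral_pos_iff_support_of_nonneg
    (fun ω => mul_nonneg (iof_nonneg X t ω) (icf_nonneg Y s ω))
    (bdd_mul_bdd_integrable (iof_meas hX t) (icf_meas hY s) (iof_nonneg X t)
      (iof_le_one X t) (icf_nonneg Y s) (icf_le_one Y s))]
  have : Function.support (fun ω => iof X t ω * icf Y s ω) = {ω | t < X ω ∧ s ≤ Y ω} := by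
    ext ω
    simp only [Function.mem_support, mul_ne_zero_iff, iof_ne_iff, icf_ne_iff, Set.mem_setOf_eq]
  rw [this]

lemma mixCO_pos_iff (hX : Measurable X) (hY : Measurable Y) {t s : ℝ} :
    0 < (∫ ω, icf X t ω * iof Y s ω ∂P) ↔ 0 < P {ω | t ≤ X ω ∧ s < Y ω} := by
  rw [integral_pos_iff_support_of_nonneg
    (fun ω => mul_nonneg (icf_nonneg X t ω) (iof_nonneg Y s ω))
    (bdd_mul_bdd_integrable (icf_meas hX t) (iof_meas hY s) (icf_nonneg X t)
      (icf_le_one X t) (iof_nonneg Y s) (iof_le_one Y s))]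
  have : Function.support (fun ω => icf X t ω * iof Y s ω) = {ω | t ≤ X ω ∧ s < Y ω} := by
    ext ω
    simp only [Function.mem_support, mul_ne_zero_iff, icf_ne_iff, iof_ne_iff, Set.mem_setOf_eq]
  rw [this]

lemma not_pos_eq_zero {m : ENNReal} (h : ¬ 0 < m) : m = 0 := by
  rw [not_lt] at h
  exact le_antisymm h (zero_le : 0 ≤ m)

lemma toReal_pos_of_pos {m : ENNReal} (hm : m ≠ ⊤) (h : 0 < m) : 0 < m.toReal :=
  ENNReal.toReal_pos h.ne' hm
end Pos2
section Pre3
variable {Ω : Type*} [MeasurableSpace Ω] {P : Measure Ω} [IsProbabilityMeasure P] {X Y : Ω → ℝ}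

lemma tend_iof_icf (Z : Ω → ℝ) (u : ℝ) (ω : Ω) :
    Filter.Tendsto (fun n : ℕ => iof Z (u - 1/(n+1)) ω) Filter.atTop (𝓝 (icf Z u ω)) := by
  have he0 : Filter.Tendsto (fun n : ℕ => 1/((n:ℝ)+1)) Filter.atTop (𝓝 0) :=
    tendsto_one_div_add_atTop_nhds_zero_nat
  by_cases h : u ≤ Z ω
  · rw [show icf Z u ω = 1 from if_pos h]
    apply Filter.Tendsto.congr' _ (tendsto_const_nhds (x := (1:ℝ)))
    filter_upwards with n
    have hp : (0:ℝ) < 1/((n:ℝ)+1) := by positivity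
    exact (if_pos (by linarith)).symm
  · push_neg at h
    rw [show icf Z u ω = 0 from if_neg (by push_neg; exact h)]
    apply Filter.Tendsto.congr' _ (tendsto_const_nhds (x := (0:ℝ)))
    filter_upwards [he0.eventually_lt_const (show (0:ℝ) < u - Z ω by linarith)] with n hn
    exact (if_neg (by push_neg; linarith)).symm

lemma limFXo' (hY : Measurable Y) (u : ℝ) :
    Filter.Tendsto (fun n : ℕ => FXo P Y (u - 1/(n+1))) Filter.atTop
      (𝓝 (∫ ω, icf Y u ω ∂P)) := by
  unfold FXo
  apply tendsto_integral_filter_of_dominated_convergence (bound := fun _ => (1:ℝ))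
  · filter_upwards with n
    exact (iof_meas hY _).aestronglyMeasurable
  · filter_upwards with n
    filter_upwards with ω
    rw [Real.norm_eq_abs, abs_of_nonneg (iof_nonneg _ _ _)]
    exact iof_le_one _ _ _
  · exact integrable_const _
  · filter_upwards with ω
    exact tend_iof_icf Y u ω

lemma limFo_s (hX : Measurable X) (hY : Measurable Y) (t u : ℝ) :
    Filter.Tendsto (fun n : ℕ => Fo P X Y t (u - 1/(n+1))) Filter.atTop
      (𝓝 (∫ ω, iof X t ω * icf Y u ω ∂P)) := by
  unfold Fo
  apply tendsto_integral_filter_of_dominated_convergence (bound := fun _ => (1:ℝ))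
  · filter_upwards with n
    exact ((iof_meas hX _).mul (iof_meas hY _)).aestronglyMeasurable
  · filter_upwards with n
    filter_upwards with ω
    rw [Real.norm_eq_abs, abs_mul, abs_of_nonneg (iof_nonneg _ _ _),
      abs_of_nonneg (iof_nonneg _ _ _)]
    nlinarith [iof_le_one X t ω, iof_nonneg X t ω,
      iof_le_one Y (u - 1/((n:ℝ)+1)) ω, iof_nonneg Y (u - 1/((n:ℝ)+1)) ω]
  · exact integrable_const _
  · filter_upwards with ω
    exact tendsto_const_nhds.mul (tend_iof_icf Y u ω)

lemma limFo_t (hX : Measurable X) (hY : Measurable Y) (u s : ℝ) :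
    Filter.Tendsto (fun n : ℕ => Fo P X Y (u - 1/(n+1)) s) Filter.atTop
      (𝓝 (∫ ω, icf X u ω * iof Y s ω ∂P)) := by
  unfold Fo
  apply tendsto_integral_filter_of_dominated_convergence (bound := fun _ => (1:ℝ))
  · filter_upwards with n
    exact ((iof_meas hX _).mul (iof_meas hY _)).aestronglyMeasurable
  · filter_upwards with n
    filter_upwards with ω
    rw [Real.norm_eq_abs, abs_mul, abs_of_nonneg (iof_nonneg _ _ _),
      abs_of_nonneg (iof_nonneg _ _ _)]
    nlinarith [iof_le_one X (u - 1/((n:ℝ)+1)) ω, iof_nonneg X (u - 1/((n:ℝ)+1)) ω,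
      iof_le_one Y s ω, iof_nonneg Y s ω]
  · exact integrable_const _
  · filter_upwards with ω
    exact (tend_iof_icf X u ω).mul tendsto_const_nhds

variable (hX : Measurable X) (hY : Measurable Y)
  (hXint : Integrable X P) (hYint : Integrable Y P)
include hX hY hXint hYint

lemma contPhi_s (h : Hyp P X Y) (t : ℝ) : Continuous (fun v => Phi P X Y t v) :=
  contInt (ppf_meas hX t) (ppf_nonneg X t) (ppf_integrable P hXint t)
    (fun u => IntPP hX hY hXint hYint h t u)

lemma contPhi_t (h : Hyp P X Y) (s : ℝ) : Continuous (fun u => Phi P X Y u s) := by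
  have hc := contInt (ppf_meas hY s) (ppf_nonneg Y s) (ppf_integrable P hYint s)
    (fun u => by
      have := IntPP hX hY hXint hYint h u s
      apply this.congr
      filter_upwards with ω
      show ppf X u ω * ppf Y s ω = ppf Y s ω * max (X ω - u) 0
      unfold ppf; ring)
  apply hc.congr
  intro u
  rw [Phi_swap]
  rfl

lemma exists_pos_Phi (h : Hyp P X Y) {t : ℝ} (ht : 0 < P {ω | t < X ω}) :
    ∃ s₀ : ℝ, 0 < Phi P X Y t s₀ := by
  by_contra hc
  push_neg at hc
  have hz : ∀ n : ℕ, P {ω | t < X ω ∧ -(n:ℝ) < Y ω} = 0 := by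
    intro n
    apply not_pos_eq_zero
    intro hp
    exact absurd ((Phi_pos_iff hX hY (IntPP hX hY hXint hYint h t _)).mpr hp)
      (not_lt.mpr (hc _))
  have hsub : {ω | t < X ω} ⊆ ⋃ n : ℕ, {ω | t < X ω ∧ -(n:ℝ) < Y ω} := by
    intro ω hω
    obtain ⟨n, hn⟩ := exists_nat_gt (-(Y ω))
    exact Set.mem_iUnion.mpr ⟨n, hω, by linarith⟩
  have : P {ω | t < X ω} = 0 :=
    le_antisymm (le_trans (measure_mono hsub) (le_of_eq (measure_iUnion_null hz))) zero_le
  rw [this] at ht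
  exact lt_irrefl 0 ht
end Pre3
section Bad
variable {Ω : Type*} [MeasurableSpace Ω] {P : Measure Ω} [IsProbabilityMeasure P] {X Y : Ω → ℝ}
variable (hX : Measurable X) (hY : Measurable Y)
  (hXint : Integrable X P) (hYint : Integrable Y P)
include hX hY hXint hYint

lemma badcase (h : Hyp P X Y) {t s : ℝ}
    (ht : 0 < P {ω | t < X ω}) (hs : 0 < P {ω | s < Y ω})
    (h0 : P {ω | t < X ω ∧ s < Y ω} = 0)
    (hA : P {ω | t < X ω ∧ s ≤ Y ω} = 0) : False := by
  have hen : ∀ n : ℕ, (0:ℝ) < 1/(n+1) := fun n => by positivity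
  -- the set I of s' with Phi t s' > 0, and its sup
  set I : Set ℝ := {s' | 0 < Phi P X Y t s'} with hIdef
  have hInonempty : I.Nonempty := exists_pos_Phi hX hY hXint hYint h ht
  have hmemI : ∀ s' ∈ I, s' < s := by
    intro s' hs'
    by_contra hc
    push_neg at hc
    have hsub : {ω | t < X ω ∧ s' < Y ω} ⊆ {ω | t < X ω ∧ s < Y ω} :=
      fun ω hω => ⟨hω.1, lt_of_le_of_lt hc hω.2⟩
    have := (Phi_pos_iff hX hY (IntPP hX hY hXint hYint h t s')).mp hs'
    have hle : P {ω | t < X ω ∧ s' < Y ω} ≤ P {ω | t < X ω ∧ s < Y ω} := measure_mono hsub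
    rw [h0] at hle
    exact absurd (le_antisymm hle zero_le) this.ne'
  have hIbdd : BddAbove I := ⟨s, fun s' hs' => (hmemI s' hs').le⟩
  set sh := sSup I with hshdef
  have hsh_le : sh ≤ s := csSup_le hInonempty (fun s' hs' => (hmemI s' hs').le)
  have hIlt : ∀ s' < sh, 0 < Phi P X Y t s' := by
    intro s' h'
    obtain ⟨s'', hs''I, hlt⟩ := exists_lt_of_lt_csSup hInonempty h'
    exact lt_of_lt_of_le hs''I (Phi_anti hX hY hXint hYint h le_rfl hlt.le)
  have hsh_not : ¬ 0 < Phi P X Y t sh := by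
    intro hp
    have hcont := contPhi_s hX hY hXint hYint h t
    have hev : ∀ᶠ v in 𝓝 sh, 0 < Phi P X Y t v :=
      (hcont.tendsto sh).eventually_const_lt hp
    rw [Metric.eventually_nhds_iff] at hev
    obtain ⟨ε, hε, hball⟩ := hev
    have hmem : sh + ε/2 ∈ I := hball (by rw [Real.dist_eq]; rw [abs_of_nonneg]; linarith; linarith)
    have := le_csSup hIbdd hmem
    linarith
  have hPhish0 : P {ω | t < X ω ∧ sh < Y ω} = 0 :=
    not_pos_eq_zero (fun hp => hsh_not
      ((Phi_pos_iff hX hY (IntPP hX hY hXint hYint h t sh)).mpr hp))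
  -- limit along s_n ↑ sh
  have honR1 : ∀ n : ℕ, Fo P X Y t (sh - 1/(n+1)) = FXo P X t * FXo P Y (sh - 1/(n+1)) :=
    fun n => onR hX hY hXint hYint h (hIlt _ (by linarith [hen n]))
  have hG : (∫ ω, iof X t ω * icf Y sh ω ∂P) = FXo P X t * ∫ ω, icf Y sh ω ∂P :=
    tendsto_nhds_unique (limFo_s hX hY t sh)
      (((tendsto_const_nhds (x := FXo P X t)).mul (limFXo' hY sh)).congr
        (fun n => (honR1 n).symm))
  have hqpos : 0 < ∫ ω, icf Y sh ω ∂P := by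
    rw [integral_icf P hY sh]
    apply toReal_pos_of_pos (measure_ne_top P _)
    refine lt_of_lt_of_le hs (measure_mono ?_)
    intro ω hω
    exact le_trans hsh_le (le_of_lt hω)
  have hFXpos : 0 < FXo P X t := (FXo_pos_iff hX).mpr ht
  have hGpos : 0 < P {ω | t < X ω ∧ sh ≤ Y ω} := by
    apply (mixOC_pos_iff hX hY).mp
    rw [hG]
    exact mul_pos hFXpos hqpos
  -- sh < s
  have hshlt : sh < s := by
    rcases eq_or_lt_of_le hsh_le with he | hlt
    · exfalso
      rw [he] at hGpos
      rw [hA] at hGpos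
      exact lt_irrefl 0 hGpos
    · exact hlt
  have hshY : 0 < P {ω | sh < Y ω} := by
    refine lt_of_lt_of_le hs (measure_mono ?_)
    intro ω hω
    exact lt_trans hshlt hω
  -- the set K of t' with Phi t' sh > 0, and its sup
  set K : Set ℝ := {t' | 0 < Phi P X Y t' sh} with hKdef
  have hKnonempty : K.Nonempty := by
    obtain ⟨t₀, ht₀⟩ := exists_pos_Phi hY hX hYint hXint (Hyp_swap h) hshY
    exact ⟨t₀, by rw [hKdef]; simp only [Set.mem_setOf_eq]; rw [Phi_swap]; exact ht₀⟩
  have hmemK : ∀ t' ∈ K, t' < t := by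
    intro t' ht'
    by_contra hc
    push_neg at hc
    have hsub : {ω | t' < X ω ∧ sh < Y ω} ⊆ {ω | t < X ω ∧ sh < Y ω} :=
      fun ω hω => ⟨lt_of_le_of_lt hc hω.1, hω.2⟩
    have := (Phi_pos_iff hX hY (IntPP hX hY hXint hYint h t' sh)).mp ht'
    have hle : P {ω | t' < X ω ∧ sh < Y ω} ≤ P {ω | t < X ω ∧ sh < Y ω} := measure_mono hsub
    rw [hPhish0] at hle
    exact absurd (le_antisymm hle zero_le) this.ne'
  have hKbdd : BddAbove K := ⟨t, fun t' ht' => (hmemK t' ht').le⟩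
  set th := sSup K with hthdef
  have hth_le : th ≤ t := csSup_le hKnonempty (fun t' ht' => (hmemK t' ht').le)
  have hKlt : ∀ t' < th, 0 < Phi P X Y t' sh := by
    intro t' h'
    obtain ⟨t'', ht''K, hlt⟩ := exists_lt_of_lt_csSup hKnonempty h'
    exact lt_of_lt_of_le ht''K (Phi_anti hX hY hXint hYint h hlt.le le_rfl)
  have hth_not : ¬ 0 < Phi P X Y th sh := by
    intro hp
    have hcont := contPhi_t hX hY hXint hYint h sh
    have hev : ∀ᶠ v in 𝓝 th, 0 < Phi P X Y v sh :=
      (hcont.tendsto th).eventually_const_lt hp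
    rw [Metric.eventually_nhds_iff] at hev
    obtain ⟨ε, hε, hball⟩ := hev
    have hmem : th + ε/2 ∈ K := hball (by rw [Real.dist_eq]; rw [abs_of_nonneg]; linarith; linarith)
    have := le_csSup hKbdd hmem
    linarith
  -- limit along t_n ↑ th
  have honR2 : ∀ n : ℕ, Fo P X Y (th - 1/(n+1)) sh
      = FXo P X (th - 1/(n+1)) * FXo P Y sh :=
    fun n => onR hX hY hXint hYint h (hKlt _ (by linarith [hen n]))
  have hG2 : (∫ ω, icf X th ω * iof Y sh ω ∂P)
      = (∫ ω, icf X th ω ∂P) * FXo P Y sh :=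
    tendsto_nhds_unique (limFo_t hX hY th sh)
      (((limFXo' hX th).mul (tendsto_const_nhds (x := FXo P Y sh))).congr
        (fun n => (honR2 n).symm))
  have hq2pos : 0 < ∫ ω, icf X th ω ∂P := by
    rw [integral_icf P hX th]
    apply toReal_pos_of_pos (measure_ne_top P _)
    refine lt_of_lt_of_le ht (measure_mono ?_)
    intro ω hω
    exact le_trans hth_le (le_of_lt hω)
  have hFYpos : 0 < FXo P Y sh := (FXo_pos_iff hY).mpr hshY
  have hG2pos : 0 < P {ω | th ≤ X ω ∧ sh < Y ω} := by
    apply (mixCO_pos_iff hX hY).mp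
    rw [hG2]
    exact mul_pos hq2pos hFYpos
  -- equation at (th, sh)
  have hPhith0 : Phi P X Y th sh = 0 := le_antisymm (not_lt.mp hth_not) (Phi_nonneg th sh)
  have hEq := EqClosed hX hY hXint hYint h th sh
  rw [hPhith0, mul_zero] at hEq
  have hBcpos : 0 < Bc P X Y th sh := (Bc_pos_iff hX hY hYint).mpr hG2pos
  have hAc0 : Ac P X Y th sh = 0 := by
    rcases mul_eq_zero.mp hEq.symm with h' | h'
    · exact h'
    · exact absurd h' hBcpos.ne'
  have hfinal : P {ω | th < X ω ∧ sh ≤ Y ω} = 0 := by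
    apply not_pos_eq_zero
    intro hp
    have := (Ac_pos_iff hX hY hXint).mpr hp
    rw [hAc0] at this
    exact lt_irrefl 0 this
  have hsub : {ω | t < X ω ∧ sh ≤ Y ω} ⊆ {ω | th < X ω ∧ sh ≤ Y ω} :=
    fun ω hω => ⟨lt_of_le_of_lt hth_le hω.1, hω.2⟩
  have hle : P {ω | t < X ω ∧ sh ≤ Y ω} ≤ P {ω | th < X ω ∧ sh ≤ Y ω} :=
    measure_mono hsub
  rw [hfinal] at hle
  exact absurd (le_antisymm hle zero_le) hGpos.ne'
end Bad
section Final
variable {Ω : Type*} [MeasurableSpace Ω] {P : Measure Ω} [IsProbabilityMeasure P] {X Y : Ω → ℝ}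
variable (hX : Measurable X) (hY : Measurable Y)
  (hXint : Integrable X P) (hYint : Integrable Y P)
include hX hY hXint hYint

lemma Fo_eq (t s : ℝ) :
    Fo P X Y t s = (P {ω | t < X ω ∧ s < Y ω}).toReal := by
  unfold Fo
  have h1 : (fun ω => iof X t ω * iof Y s ω)
      = Set.indicator {ω | t < X ω ∧ s < Y ω} (1 : Ω → ℝ) := by
    funext ω
    rw [Set.indicator_apply]
    unfold iof
    by_cases h1 : t < X ω <;> by_cases h2 : s < Y ω <;>
      simp [h1, h2, Set.mem_setOf_eq]
  rw [h1, integral_indicator_one, Measure.real_def]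
  exact (measurableSet_lt measurable_const hX).inter (measurableSet_lt measurable_const hY)

lemma prodFormula (h : Hyp P X Y) (t s : ℝ) :
    P {ω | t < X ω ∧ s < Y ω} = P {ω | t < X ω} * P {ω | s < Y ω} := by
  by_cases hp : 0 < Phi P X Y t s
  · have heq := onR hX hY hXint hYint h hp
    rw [Fo_eq hX hY hXint hYint] at heq
    rw [show FXo P X t = (P {ω | t < X ω}).toReal from integral_iof P hX t,
      show FXo P Y s = (P {ω | s < Y ω}).toReal from integral_iof P hY s] at heq
    rw [← ENNReal.toReal_mul] at heq
    exact (ENNReal.toReal_eq_toReal_iff' (measure_ne_top P _)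
      (ENNReal.mul_ne_top (measure_ne_top P _) (measure_ne_top P _))).mp heq
  · have h0 : P {ω | t < X ω ∧ s < Y ω} = 0 :=
      not_pos_eq_zero (fun hpos => hp
        ((Phi_pos_iff hX hY (IntPP hX hY hXint hYint h t s)).mpr hpos))
    rw [h0]
    by_contra hne
    have hboth : 0 < P {ω | t < X ω} ∧ 0 < P {ω | s < Y ω} := by
      rcases eq_or_lt_of_le ((zero_le : 0 ≤ P {ω | t < X ω})) with h1 | h1
      · exact absurd (by rw [← h1, zero_mul]) (Ne.symm hne)
      rcases eq_or_lt_of_le ((zero_le : 0 ≤ P {ω | s < Y ω})) with h2 | h2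
      · exact absurd (by rw [← h2, mul_zero]) (Ne.symm hne)
      exact ⟨h1, h2⟩
    obtain ⟨ht, hs⟩ := hboth
    -- from the closed equation at (t,s), one of the mixed sets is null
    have hPhi0 : Phi P X Y t s = 0 := le_antisymm (not_lt.mp hp) (Phi_nonneg t s)
    have hEq := EqClosed hX hY hXint hYint h t s
    rw [hPhi0, mul_zero] at hEq
    rcases mul_eq_zero.mp hEq.symm with hAc | hBc
    · have hA : P {ω | t < X ω ∧ s ≤ Y ω} = 0 := by
        apply not_pos_eq_zero
        intro hpos
        have := (Ac_pos_iff hX hY hXint).mpr hpos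
        rw [hAc] at this
        exact lt_irrefl 0 this
      exact badcase hX hY hXint hYint h ht hs h0 hA
    · have hB : P {ω | s < Y ω ∧ t ≤ X ω} = 0 := by
        apply not_pos_eq_zero
        intro hpos
        have hpos' : 0 < P {ω | t ≤ X ω ∧ s < Y ω} := by
          have hseteq : {ω | s < Y ω ∧ t ≤ X ω} = {ω | t ≤ X ω ∧ s < Y ω} := by
            ext ω; exact and_comm
          rw [hseteq] at hpos
          exact hpos
        have := (Bc_pos_iff hX hY hYint).mpr hpos'
        rw [hBc] at this
        exact lt_irrefl 0 this
      have h0' : P {ω | s < Y ω ∧ t < X ω} = 0 := by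
        have hseteq : {ω | s < Y ω ∧ t < X ω} = {ω | t < X ω ∧ s < Y ω} := by
          ext ω; exact and_comm
        rw [hseteq]
        exact h0
      exact badcase hY hX hYint hXint (Hyp_swap h) hs ht h0' hB

lemma backward (h : Hyp P X Y) :
    Measure.map (fun ω => (X ω, Y ω)) P = (Measure.map X P).prod (Measure.map Y P) := by
  have hpair : Measurable (fun ω => (X ω, Y ω)) := hX.prodMk hY
  haveI : IsProbabilityMeasure (Measure.map (fun ω => (X ω, Y ω)) P) :=
    Measure.isProbabilityMeasure_map hpair.aemeasurable
  haveI : IsProbabilityMeasure (Measure.map X P) := Measure.isProbabilityMeasure_map hX.aemeasurable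
  haveI : IsProbabilityMeasure (Measure.map Y P) := Measure.isProbabilityMeasure_map hY.aemeasurable
  have hspan : IsCountablySpanning (Set.range (Set.Ioi : ℝ → Set ℝ)) := by
    refine ⟨fun n => Set.Ioi (-(n:ℝ)), fun n => ⟨-(n:ℝ), rfl⟩, ?_⟩
    ext x
    simp only [Set.mem_iUnion, Set.mem_Ioi, Set.mem_univ, iff_true]
    obtain ⟨n, hn⟩ := exists_nat_gt (-x)
    exact ⟨n, by linarith⟩
  have h1 : (Prod.instMeasurableSpace : MeasurableSpace (ℝ × ℝ))
      = MeasurableSpace.generateFrom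
        (Set.image2 (· ×ˢ ·) (Set.range (Set.Ioi : ℝ → Set ℝ))
          (Set.range (Set.Ioi : ℝ → Set ℝ))) := by
    have h2 := generateFrom_prod_eq hspan hspan
    rw [← borel_eq_generateFrom_Ioi] at h2
    exact h2.symm ▸ rfl
  have hpi : IsPiSystem (Set.image2 (· ×ˢ ·) (Set.range (Set.Ioi : ℝ → Set ℝ))
      (Set.range (Set.Ioi : ℝ → Set ℝ))) := by
    rintro S ⟨_, ⟨a, rfl⟩, _, ⟨b, rfl⟩, rfl⟩ T ⟨_, ⟨a', rfl⟩, _, ⟨b', rfl⟩, rfl⟩ -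
    rw [Set.prod_inter_prod, Set.Ioi_inter_Ioi, Set.Ioi_inter_Ioi]
    exact ⟨Set.Ioi (a ⊔ a'), ⟨a ⊔ a', rfl⟩, Set.Ioi (b ⊔ b'), ⟨b ⊔ b', rfl⟩, rfl⟩
  refine MeasureTheory.ext_of_generate_finite _ h1 hpi ?_ ?_
  · rintro S ⟨_, ⟨a, rfl⟩, _, ⟨b, rfl⟩, rfl⟩
    rw [Measure.map_apply hpair (measurableSet_Ioi.prod measurableSet_Ioi),
      Measure.prod_prod, Measure.map_apply hX measurableSet_Ioi,
      Measure.map_apply hY measurableSet_Ioi]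
    have hpre : (fun ω => (X ω, Y ω)) ⁻¹' (Set.Ioi a ×ˢ Set.Ioi b)
        = {ω | a < X ω ∧ b < Y ω} := rfl
    rw [hpre]
    exact prodFormula hX hY hXint hYint h a b
  · rw [measure_univ, measure_univ]
end Final
section Forward
variable {Ω : Type*} [MeasurableSpace Ω] {P : Measure Ω} [IsProbabilityMeasure P] {X Y : Ω → ℝ}
variable (hX : Measurable X) (hY : Measurable Y)
  (hXint : Integrable X P) (hYint : Integrable Y P)
include hX hY hXint hYint

lemma forward
    (hmap : Measure.map (fun ω => (X ω, Y ω)) P = (Measure.map X P).prod (Measure.map Y P)) :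
    Hyp P X Y := by
  intro t s hpos
  set ν₁ := Measure.map X P with hν₁
  set ν₂ := Measure.map Y P with hν₂
  have hpair : Measurable (fun ω => (X ω, Y ω)) := hX.prodMk hY
  set U : Set Ω := {ω | t ≤ X ω ∧ s ≤ Y ω} with hUdef
  have hrect : MeasurableSet (Set.Ici t ×ˢ Set.Ici s) :=
    measurableSet_Ici.prod measurableSet_Ici
  have hpre : (fun ω => (X ω, Y ω)) ⁻¹' (Set.Ici t ×ˢ Set.Ici s) = U := rfl
  have hPU : P U = ν₁ (Set.Ici t) * ν₂ (Set.Ici s) := by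
    rw [← hpre, ← Measure.map_apply hpair hrect, hmap, Measure.prod_prod]
  -- the pushforward of the restricted measure is the product of restrictions
  have hrestr : Measure.map (fun ω => (X ω, Y ω)) (P.restrict U)
      = (ν₁.restrict (Set.Ici t)).prod (ν₂.restrict (Set.Ici s)) := by
    rw [Measure.prod_restrict, ← hmap, Measure.restrict_map hpair hrect, hpre]
  -- integrability of id on the restricted marginals
  have hid1 : Integrable (id : ℝ → ℝ) ν₁ := by
    rw [hν₁]
    exact (integrable_map_measure aestronglyMeasurable_id hX.aemeasurable).mpr hXint
  have hid2 : Integrable (id : ℝ → ℝ) ν₂ := by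
    rw [hν₂]
    exact (integrable_map_measure aestronglyMeasurable_id hY.aemeasurable).mpr hYint
  have hid1r : Integrable (fun x : ℝ => x) (ν₁.restrict (Set.Ici t)) := by
    exact hid1.restrict
  have hid2r : Integrable (fun x : ℝ => x) (ν₂.restrict (Set.Ici s)) := by
    exact hid2.restrict
  have hmulint : Integrable (fun z : ℝ × ℝ => z.1 * z.2)
      ((ν₁.restrict (Set.Ici t)).prod (ν₂.restrict (Set.Ici s))) :=
    hid1r.mul_prod hid2r
  have hIntOn : IntegrableOn (fun ω => X ω * Y ω) U P := by
    have : Integrable (fun z : ℝ × ℝ => z.1 * z.2)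
        (Measure.map (fun ω => (X ω, Y ω)) (P.restrict U)) := by
      rw [hrestr]; exact hmulint
    rw [integrable_map_measure
      (show AEStronglyMeasurable (fun z : ℝ × ℝ => z.1 * z.2) _ from (measurable_fst.mul measurable_snd).aestronglyMeasurable)
      hpair.aemeasurable] at this
    exact this
  refine ⟨hIntOn, ?_⟩
  -- compute the integrals
  set a₁ := ∫ x, x ∂(ν₁.restrict (Set.Ici t)) with ha₁
  set a₂ := ∫ x, x ∂(ν₂.restrict (Set.Ici s)) with ha₂
  set p₁ := (ν₁ (Set.Ici t)).toReal with hp₁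
  set p₂ := (ν₂ (Set.Ici s)).toReal with hp₂
  have hint_map : ∀ g : ℝ × ℝ → ℝ, AEStronglyMeasurable g
        ((ν₁.restrict (Set.Ici t)).prod (ν₂.restrict (Set.Ici s))) →
      ∫ ω in U, g (X ω, Y ω) ∂P
        = ∫ z, g z ∂((ν₁.restrict (Set.Ici t)).prod (ν₂.restrict (Set.Ici s))) := by
    intro g hg
    rw [← hrestr, integral_map hpair.aemeasurable.restrict]
    rw [hrestr]
    exact hg
  have hm : ∫ ω in U, X ω * Y ω ∂P = a₁ * a₂ := by
    rw [show (fun ω : Ω => X ω * Y ω) = fun ω => (fun z : ℝ × ℝ => z.1 * z.2) (X ω, Y ω)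
      from rfl]
    rw [hint_map _ (show AEStronglyMeasurable (fun z : ℝ × ℝ => z.1 * z.2) _ from (measurable_fst.mul measurable_snd).aestronglyMeasurable)]
    exact integral_prod_mul (fun x => x) (fun x => x)
  have hone2 : ∫ _, (1:ℝ) ∂(ν₂.restrict (Set.Ici s)) = p₂ := by
    rw [integral_const]
    simp [hp₂, Measure.real_def]
  have hone1 : ∫ _, (1:ℝ) ∂(ν₁.restrict (Set.Ici t)) = p₁ := by
    rw [integral_const]
    simp [hp₁, Measure.real_def]
  have hax : ∫ ω in U, X ω ∂P = a₁ * p₂ := by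
    rw [show (fun ω : Ω => X ω) = fun ω => (fun z : ℝ × ℝ => z.1 * 1) (X ω, Y ω) from by
      funext ω; simp]
    rw [hint_map _ (show AEStronglyMeasurable (fun z : ℝ × ℝ => z.1 * 1) _ from (measurable_fst.mul measurable_const).aestronglyMeasurable)]
    rw [show (fun z : ℝ × ℝ => z.1 * 1) = fun z : ℝ × ℝ => (fun x : ℝ => x) z.1
      * (fun _ : ℝ => (1:ℝ)) z.2 from rfl]
    rw [integral_prod_mul (fun x : ℝ => x) (fun _ : ℝ => (1:ℝ))]
    rw [hone2]
  have hay : ∫ ω in U, Y ω ∂P = p₁ * a₂ := by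
    rw [show (fun ω : Ω => Y ω) = fun ω => (fun z : ℝ × ℝ => 1 * z.2) (X ω, Y ω) from by
      funext ω; simp]
    rw [hint_map _ (show AEStronglyMeasurable (fun z : ℝ × ℝ => 1 * z.2) _ from (measurable_const.mul measurable_snd).aestronglyMeasurable)]
    rw [show (fun z : ℝ × ℝ => 1 * z.2) = fun z : ℝ × ℝ => (fun _ : ℝ => (1:ℝ)) z.1
      * (fun x : ℝ => x) z.2 from rfl]
    rw [integral_prod_mul (fun _ : ℝ => (1:ℝ)) (fun x : ℝ => x)]
    rw [hone1]
  -- positivity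
  have hp₁pos : 0 < p₁ := by
    apply toReal_pos_of_pos (measure_ne_top _ _)
    rcases eq_or_lt_of_le ((zero_le : 0 ≤ ν₁ (Set.Ici t))) with h' | h'
    · exfalso
      rw [hPU, ← h', zero_mul] at hpos
      exact lt_irrefl 0 hpos
    · exact h'
  have hp₂pos : 0 < p₂ := by
    apply toReal_pos_of_pos (measure_ne_top _ _)
    rcases eq_or_lt_of_le ((zero_le : 0 ≤ ν₂ (Set.Ici s))) with h' | h'
    · exfalso
      rw [hPU, ← h', mul_zero] at hpos
      exact lt_irrefl 0 hpos
    · exact h'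
  have hPUr : (P U).toReal = p₁ * p₂ := by
    rw [hPU, ENNReal.toReal_mul]
  unfold cexp
  simp only [hm, hax, hay, hPUr]
  field_simp
end Forward

theorem stmt_6 {Ω : Type*} [MeasurableSpace Ω] (P : Measure Ω) [IsProbabilityMeasure P]
    (X Y : Ω → ℝ) (hX : Measurable X) (hY : Measurable Y)
    (hXint : Integrable X P) (hYint : Integrable Y P) :
    Measure.map (fun ω => (X ω, Y ω)) P = (Measure.map X P).prod (Measure.map Y P) ↔
    ∀ t s : ℝ, 0 < P {ω | t ≤ X ω ∧ s ≤ Y ω} →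
      IntegrableOn (fun ω => X ω * Y ω) {ω | t ≤ X ω ∧ s ≤ Y ω} P ∧
      cexp P {ω | t ≤ X ω ∧ s ≤ Y ω} (fun ω => X ω * Y ω)
        = cexp P {ω | t ≤ X ω ∧ s ≤ Y ω} X * cexp P {ω | t ≤ X ω ∧ s ≤ Y ω} Y := by
  constructor
  · intro hmap
    exact forward hX hY hXint hYint hmap
  · intro h
    exact backward hX hY hXint hYint h
end

section
/- Let X₁, …, Xₙ be real-valued random variables. Suppose that for every choice of bounded closed intervals A₁, …, Aₙ (each with nonempty interior) such that the event U = {X₁ ∈ A₁, …, Xₙ ∈ Aₙ} has ℙ(U) > 0, and for every pair of indices i ≠ j and all Borel sets A, B ⊆ ℝ, one has ℙ(Xᵢ ∈ A, Xⱼ ∈ B | U) = ℙ(Xᵢ ∈ A | U) · ℙ(Xⱼ ∈ B | U). Then X₁, …, Xₙ are mutually independent. -/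
open MeasureTheory Set Filter Topology ENNReal

lemma aux_prod_tendsto {ι : Type*} (S : Finset ι) (f : ι → ℕ → ℝ≥0∞) (L : ι → ℝ≥0∞)
    (hL : ∀ k, L k ≠ ∞) (hf : ∀ k, Tendsto (f k) atTop (𝓝 (L k))) :
    Tendsto (fun m => ∏ k ∈ S, f k m) atTop (𝓝 (∏ k ∈ S, L k)) := by
  classical
  induction S using Finset.induction with
  | empty => simpa using tendsto_const_nhds
  | insert i s hk ih =>
      simp only [Finset.prod_insert hk]
      exact ENNReal.Tendsto.mul (hf i)
        (Or.inr (ENNReal.prod_ne_top (fun k _ => hL k)))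
        ih (Or.inr (hL i))

lemma aux_div_to_mul (u x y z : ℝ≥0∞) (h0 : u ≠ 0) (ht : u ≠ ∞)
    (h : x / u = y / u * (z / u)) : x * u = y * z := by
  have hx : x = y * z / u := by
    calc x = x / u * u := (ENNReal.div_mul_cancel h0 ht).symm
    _ = y / u * (z / u) * u := by rw [h]
    _ = y / u * (z / u * u) := by rw [mul_assoc]
    _ = y / u * z := by rw [ENNReal.div_mul_cancel h0 ht]
    _ = y * z / u := by rw [div_eq_mul_inv, div_eq_mul_inv, mul_right_comm]
  rw [hx, ENNReal.div_mul_cancel h0 ht]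

lemma aux_mul_cancel (x y q : ℝ≥0∞) (h0 : q ≠ 0) (ht : q ≠ ∞) (hxy : x * q = y * q) : x = y := by
  have := congrArg (fun z => z * q⁻¹) hxy
  simpa [mul_assoc, ENNReal.mul_inv_cancel h0 ht] using this

theorem stmt_9 {Ω : Type*} [MeasurableSpace Ω] (P : Measure Ω) [IsProbabilityMeasure P]
    {n : ℕ} (X : Fin n → Ω → ℝ) (hX : ∀ k, Measurable (X k))
    (h : ∀ a b : Fin n → ℝ, (∀ k, a k < b k) →
      0 < P {ω | ∀ k, X k ω ∈ Icc (a k) (b k)} →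
      ∀ i j, i ≠ j → ∀ A B : Set ℝ, MeasurableSet A → MeasurableSet B →
        P ({ω | X i ω ∈ A ∧ X j ω ∈ B} ∩ {ω | ∀ k, X k ω ∈ Icc (a k) (b k)})
            / P {ω | ∀ k, X k ω ∈ Icc (a k) (b k)}
          = (P ({ω | X i ω ∈ A} ∩ {ω | ∀ k, X k ω ∈ Icc (a k) (b k)})
              / P {ω | ∀ k, X k ω ∈ Icc (a k) (b k)})
            * (P ({ω | X j ω ∈ B} ∩ {ω | ∀ k, X k ω ∈ Icc (a k) (b k)})
              / P {ω | ∀ k, X k ω ∈ Icc (a k) (b k)})) :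
    Measure.map (fun ω k => X k ω) P = Measure.pi (fun k => Measure.map (X k) P) := by
  classical
  -- Step 1: conditional pairwise independence given boxes over a sub-finset
  have hG : ∀ (S : Finset (Fin n)) (a b : Fin n → ℝ), (∀ k, a k < b k) →
      ∀ i j, i ≠ j → i ∉ S → j ∉ S → ∀ A B : Set ℝ, MeasurableSet A → MeasurableSet B →
      P ((X i ⁻¹' A ∩ X j ⁻¹' B) ∩ ⋂ k ∈ S, X k ⁻¹' Icc (a k) (b k))
        * P (⋂ k ∈ S, X k ⁻¹' Icc (a k) (b k))
      = P (X i ⁻¹' A ∩ ⋂ k ∈ S, X k ⁻¹' Icc (a k) (b k))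
        * P (X j ⁻¹' B ∩ ⋂ k ∈ S, X k ⁻¹' Icc (a k) (b k)) := by
    intro S a b hab i j hij hiS hjS A B hA hB
    set am : ℕ → Fin n → ℝ := fun M k => if k ∈ S then a k else min (a k) (-(M : ℝ)) with ham
    set bm : ℕ → Fin n → ℝ := fun M k => if k ∈ S then b k else max (b k) (M : ℝ) with hbm
    have habm : ∀ M k, am M k < bm M k := by
      intro M k
      by_cases hk : k ∈ S
      · simp only [ham, hbm, if_pos hk]; exact hab k
      · simp only [ham, hbm, if_neg hk]
        exact lt_of_le_of_lt (min_le_left _ _) (lt_of_lt_of_le (hab k) (le_max_left _ _))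
    set U : ℕ → Set Ω := fun M => {ω | ∀ k, X k ω ∈ Icc (am M k) (bm M k)} with hU
    have hUmono : Monotone U := by
      intro M M' hMM ω hω k
      have hk' := hω k
      by_cases hk : k ∈ S
      · simpa only [ham, hbm, if_pos hk] using hk'
      · simp only [ham, hbm, if_neg hk, mem_Icc] at hk' ⊢
        refine ⟨le_trans (min_le_min le_rfl ?_) hk'.1, le_trans hk'.2 (max_le_max le_rfl ?_)⟩
        · exact neg_le_neg (Nat.cast_le.mpr hMM)
        · exact_mod_cast hMM
    have hUnion : (⋃ M, U M) = ⋂ k ∈ S, X k ⁻¹' Icc (a k) (b k) := by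
      ext ω
      simp only [mem_iUnion, mem_iInter, mem_preimage]
      constructor
      · rintro ⟨M, hM⟩ k hk
        have := hM k
        simpa only [ham, hbm, if_pos hk] using this
      · intro hω
        obtain ⟨M, hM⟩ := exists_nat_ge (∑ k, |X k ω|)
        refine ⟨M, fun k => ?_⟩
        have hbound : |X k ω| ≤ (M : ℝ) := le_trans
          (Finset.single_le_sum (f := fun k => |X k ω|) (fun k _ => abs_nonneg _) (Finset.mem_univ k)) hM
        by_cases hk : k ∈ S
        · simpa only [ham, hbm, if_pos hk] using hω k hk
        · simp only [ham, hbm, if_neg hk, mem_Icc]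
          have h1 := abs_le.mp hbound
          exact ⟨le_trans (min_le_right _ _) h1.1, le_trans h1.2 (le_max_right _ _)⟩
    have key : ∀ M, P ((X i ⁻¹' A ∩ X j ⁻¹' B) ∩ U M) * P (U M)
        = P (X i ⁻¹' A ∩ U M) * P (X j ⁻¹' B ∩ U M) := by
      intro M
      rcases eq_or_ne (P (U M)) 0 with h0 | h0
      · rw [measure_mono_null inter_subset_right h0, measure_mono_null inter_subset_right h0,
          h0, mul_zero, zero_mul]
      · have hpos : 0 < P {ω | ∀ k, X k ω ∈ Icc (am M k) (bm M k)} := pos_iff_ne_zero.mpr h0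
        have hdiv := h (am M) (bm M) (habm M) hpos i j hij A B hA hB
        have hsets1 : {ω | X i ω ∈ A ∧ X j ω ∈ B} = X i ⁻¹' A ∩ X j ⁻¹' B := rfl
        have hsets2 : {ω | X i ω ∈ A} = X i ⁻¹' A := rfl
        have hsets3 : {ω | X j ω ∈ B} = X j ⁻¹' B := rfl
        rw [hsets1, hsets2, hsets3] at hdiv
        exact aux_div_to_mul _ _ _ _ h0 (measure_ne_top _ _) hdiv
    -- pass to the limit
    have hC1 : Monotone (fun M => (X i ⁻¹' A ∩ X j ⁻¹' B) ∩ U M) :=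
      fun M M' hMM => inter_subset_inter_right _ (hUmono hMM)
    have hC2 : Monotone (fun M => X i ⁻¹' A ∩ U M) :=
      fun M M' hMM => inter_subset_inter_right _ (hUmono hMM)
    have hC3 : Monotone (fun M => X j ⁻¹' B ∩ U M) :=
      fun M M' hMM => inter_subset_inter_right _ (hUmono hMM)
    have e1 : (⋃ M, (X i ⁻¹' A ∩ X j ⁻¹' B) ∩ U M)
        = (X i ⁻¹' A ∩ X j ⁻¹' B) ∩ ⋂ k ∈ S, X k ⁻¹' Icc (a k) (b k) := by
      rw [← inter_iUnion, hUnion]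
    have e2 : (⋃ M, X i ⁻¹' A ∩ U M) = X i ⁻¹' A ∩ ⋂ k ∈ S, X k ⁻¹' Icc (a k) (b k) := by
      rw [← inter_iUnion, hUnion]
    have e3 : (⋃ M, X j ⁻¹' B ∩ U M) = X j ⁻¹' B ∩ ⋂ k ∈ S, X k ⁻¹' Icc (a k) (b k) := by
      rw [← inter_iUnion, hUnion]
    have t1 : Tendsto (fun M => P ((X i ⁻¹' A ∩ X j ⁻¹' B) ∩ U M) * P (U M)) atTop
        (𝓝 (P ((X i ⁻¹' A ∩ X j ⁻¹' B) ∩ ⋂ k ∈ S, X k ⁻¹' Icc (a k) (b k))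
          * P (⋂ k ∈ S, X k ⁻¹' Icc (a k) (b k)))) := by
      refine ENNReal.Tendsto.mul ?_ (Or.inr (measure_ne_top _ _)) ?_ (Or.inr (measure_ne_top _ _))
      · have := tendsto_measure_iUnion_atTop (μ := P) hC1
        rwa [e1] at this
      · have := tendsto_measure_iUnion_atTop (μ := P) hUmono
        rwa [hUnion] at this
    have t2 : Tendsto (fun M => P ((X i ⁻¹' A ∩ X j ⁻¹' B) ∩ U M) * P (U M)) atTop
        (𝓝 (P (X i ⁻¹' A ∩ ⋂ k ∈ S, X k ⁻¹' Icc (a k) (b k))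
          * P (X j ⁻¹' B ∩ ⋂ k ∈ S, X k ⁻¹' Icc (a k) (b k)))) := by
      have t2' : Tendsto (fun M => P (X i ⁻¹' A ∩ U M) * P (X j ⁻¹' B ∩ U M)) atTop
          (𝓝 (P (X i ⁻¹' A ∩ ⋂ k ∈ S, X k ⁻¹' Icc (a k) (b k))
            * P (X j ⁻¹' B ∩ ⋂ k ∈ S, X k ⁻¹' Icc (a k) (b k)))) := by
        refine ENNReal.Tendsto.mul ?_ (Or.inr (measure_ne_top _ _)) ?_ (Or.inr (measure_ne_top _ _))
        · have := tendsto_measure_iUnion_atTop (μ := P) hC2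
          rwa [e2] at this
        · have := tendsto_measure_iUnion_atTop (μ := P) hC3
          rwa [e3] at this
      simpa only [← key] using t2'
    exact tendsto_nhds_unique t1 t2
  -- Step 2: factorization over boxes with nondegenerate intervals
  have hBox : ∀ (S : Finset (Fin n)) (a b : Fin n → ℝ), (∀ k, a k < b k) →
      P (⋂ k ∈ S, X k ⁻¹' Icc (a k) (b k)) = ∏ k ∈ S, P (X k ⁻¹' Icc (a k) (b k)) := by
    intro S
    induction S using Finset.strongInduction with
    | _ S ih =>
      intro a b hab
      rcases le_or_gt S.card 1 with hcard | hcard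
      · rcases Finset.eq_empty_or_nonempty S with rfl | hS
        · simp
        · obtain ⟨i, rfl⟩ := Finset.card_eq_one.mp
            (le_antisymm hcard (Finset.card_pos.mpr hS))
          simp
      · obtain ⟨i, hiS, j, hjS, hij⟩ := Finset.one_lt_card.mp hcard
        set S' : Finset (Fin n) := (S.erase i).erase j with hS'
        have hiS' : i ∉ S' := fun hmem => (Finset.mem_erase.mp (Finset.mem_of_mem_erase hmem)).1 rfl
        have hjS' : j ∉ S' := fun hmem => (Finset.mem_erase.mp hmem).1 rfl
        have hjSi : j ∈ S.erase i := Finset.mem_erase.mpr ⟨hij.symm, hjS⟩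
        have hSsplit : S = insert i (insert j S') := by
          rw [hS', Finset.insert_erase hjSi, Finset.insert_erase hiS]
        have hsubi : insert i S' ⊆ S := by
          intro k hk
          rcases Finset.mem_insert.mp hk with rfl | hk
          · exact hiS
          · exact Finset.mem_of_mem_erase (Finset.mem_of_mem_erase hk)
        have hsubj : insert j S' ⊆ S := by
          intro k hk
          rcases Finset.mem_insert.mp hk with rfl | hk
          · exact hjS
          · exact Finset.mem_of_mem_erase (Finset.mem_of_mem_erase hk)
        have hS'sub : S' ⊆ S := fun k hk => Finset.mem_of_mem_erase (Finset.mem_of_mem_erase hk)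
        have hssi : insert i S' ⊂ S :=
          Finset.ssubset_iff_of_subset hsubi |>.mpr ⟨j, hjS, by
            simp only [Finset.mem_insert, not_or]
            exact ⟨hij.symm, hjS'⟩⟩
        have hssj : insert j S' ⊂ S :=
          Finset.ssubset_iff_of_subset hsubj |>.mpr ⟨i, hiS, by
            simp only [Finset.mem_insert, not_or]
            exact ⟨hij, hiS'⟩⟩
        have hss' : S' ⊂ S := Finset.ssubset_iff_of_subset hS'sub |>.mpr ⟨i, hiS, hiS'⟩
        have hG' := hG S' a b hab i j hij hiS' hjS' (Icc (a i) (b i)) (Icc (a j) (b j))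
          measurableSet_Icc measurableSet_Icc
        have e0 : (X i ⁻¹' Icc (a i) (b i) ∩ X j ⁻¹' Icc (a j) (b j))
            ∩ ⋂ k ∈ S', X k ⁻¹' Icc (a k) (b k) = ⋂ k ∈ S, X k ⁻¹' Icc (a k) (b k) := by
          rw [hSsplit, Finset.set_biInter_insert, Finset.set_biInter_insert, inter_assoc]
        have ei : X i ⁻¹' Icc (a i) (b i) ∩ ⋂ k ∈ S', X k ⁻¹' Icc (a k) (b k)
            = ⋂ k ∈ insert i S', X k ⁻¹' Icc (a k) (b k) :=
            (Finset.set_biInter_insert i S' (fun k => X k ⁻¹' Icc (a k) (b k))).symm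
        have ej : X j ⁻¹' Icc (a j) (b j) ∩ ⋂ k ∈ S', X k ⁻¹' Icc (a k) (b k)
            = ⋂ k ∈ insert j S', X k ⁻¹' Icc (a k) (b k) :=
            (Finset.set_biInter_insert j S' (fun k => X k ⁻¹' Icc (a k) (b k))).symm
        rw [e0, ei, ej] at hG'
        rw [ih _ hssi a b hab, ih _ hssj a b hab, ih _ hss' a b hab] at hG'
        rw [Finset.prod_insert hiS', Finset.prod_insert hjS'] at hG'
        set q := ∏ k ∈ S', P (X k ⁻¹' Icc (a k) (b k)) with hq
        rcases eq_or_ne q 0 with hq0 | hq0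
        · obtain ⟨k, hkS', hk0⟩ := Finset.prod_eq_zero_iff.mp hq0
          have hL : P (⋂ k ∈ S, X k ⁻¹' Icc (a k) (b k)) = 0 :=
            measure_mono_null (biInter_subset_of_mem (hS'sub hkS')) hk0
          rw [hL, Finset.prod_eq_zero (hS'sub hkS') hk0]
        · have hqt : q ≠ ∞ := by
            rw [hq]
            exact ENNReal.prod_ne_top (fun k _ => measure_ne_top _ _)
          have halg : P (⋂ k ∈ S, X k ⁻¹' Icc (a k) (b k)) * q
              = (P (X i ⁻¹' Icc (a i) (b i)) * (P (X j ⁻¹' Icc (a j) (b j)) * q)) * q := by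
            rw [hG']; ring
          have := aux_mul_cancel _ _ q hq0 hqt halg
          rw [this, hSsplit, Finset.prod_insert (by
            simp only [Finset.mem_insert, not_or]; exact ⟨hij, hiS'⟩),
            Finset.prod_insert hjS']
  -- Step 3: extension to arbitrary (possibly degenerate or empty) closed intervals
  have hBoxAll : ∀ a b : Fin n → ℝ,
      P (⋂ k, X k ⁻¹' Icc (a k) (b k)) = ∏ k, P (X k ⁻¹' Icc (a k) (b k)) := by
    intro a b
    by_cases hab : ∀ k, a k ≤ b k
    · set am : ℕ → Fin n → ℝ := fun m k => a k - 1 / (m + 1) with ham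
      set bm : ℕ → Fin n → ℝ := fun m k => b k + 1 / (m + 1) with hbm
      have hpos : ∀ m : ℕ, (0:ℝ) < 1 / (m + 1) := fun m => by positivity
      have habm : ∀ m k, am m k < bm m k := fun m k => by
        have h1 := hab k
        have h2 := hpos m
        simp only [ham, hbm]
        linarith
      have hIcc : ∀ k, (⋂ m : ℕ, Icc (am m k) (bm m k)) = Icc (a k) (b k) := by
        intro k
        ext x
        simp only [mem_iInter, mem_Icc, ham, hbm]
        constructor
        · intro hx
          constructor
          · refine le_of_forall_pos_le_add ?_
            intro ε hε
            obtain ⟨m, hm⟩ := exists_nat_one_div_lt hε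
            have h1 := (hx m).1
            push_cast at hm h1 ⊢
            linarith
          · refine le_of_forall_pos_le_add ?_
            intro ε hε
            obtain ⟨m, hm⟩ := exists_nat_one_div_lt hε
            have h1 := (hx m).2
            push_cast at hm h1 ⊢
            linarith
        · intro hx m
          have h2 := hpos m
          exact ⟨by linarith [hx.1], by linarith [hx.2]⟩
      have hAnti : ∀ k, Antitone (fun m : ℕ => Icc (am m k) (bm m k)) := by
        intro k m m' hmm
        have hinv : 1 / ((m':ℝ) + 1) ≤ 1 / ((m:ℝ) + 1) := by
          apply one_div_le_one_div_of_le
          · positivity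
          · have hcast : ((m:ℝ)) ≤ (m':ℝ) := Nat.cast_le.mpr hmm
            linarith
        apply Icc_subset_Icc
        · simp only [ham]; linarith
        · simp only [hbm]; linarith
      set U : ℕ → Set Ω := fun m => ⋂ k, X k ⁻¹' Icc (am m k) (bm m k) with hU
      have hUAnti : Antitone U := fun m m' hmm =>
        iInter_mono fun k => preimage_mono (hAnti k hmm)
      have hUInt : (⋂ m, U m) = ⋂ k, X k ⁻¹' Icc (a k) (b k) := by
        rw [iInter_comm]
        exact iInter_congr fun k => by rw [← preimage_iInter, hIcc k]
      have tL : Tendsto (fun m => P (U m)) atTop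
          (𝓝 (P (⋂ k, X k ⁻¹' Icc (a k) (b k)))) := by
        have := tendsto_measure_iInter_atTop (μ := P)
          (fun m => (MeasurableSet.iInter
            (fun k => (hX k) measurableSet_Icc)).nullMeasurableSet)
          hUAnti ⟨0, measure_ne_top _ _⟩
        rwa [hUInt] at this
      have tR : Tendsto (fun m => ∏ k, P (X k ⁻¹' Icc (am m k) (bm m k))) atTop
          (𝓝 (∏ k, P (X k ⁻¹' Icc (a k) (b k)))) := by
        apply aux_prod_tendsto _ _ _ (fun k => measure_ne_top _ _)
        intro k
        have := tendsto_measure_iInter_atTop (μ := P)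
          (fun m => ((hX k) measurableSet_Icc).nullMeasurableSet)
          (fun m m' hmm => preimage_mono (hAnti k hmm)) ⟨0, measure_ne_top _ _⟩
        rwa [← preimage_iInter, hIcc k] at this
      have heq : ∀ m, P (U m) = ∏ k, P (X k ⁻¹' Icc (am m k) (bm m k)) := by
        intro m
        have := hBox Finset.univ (am m) (bm m) (habm m)
        simpa [hU] using this
      exact tendsto_nhds_unique (by simpa only [heq] using tL) tR
    · push_neg at hab
      obtain ⟨k, hk⟩ := hab
      have hempty : Icc (a k) (b k) = ∅ := Icc_eq_empty (not_le.mpr hk)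
      have hzero : P (X k ⁻¹' Icc (a k) (b k)) = 0 := by
        rw [hempty]; simp
      rw [measure_mono_null (iInter_subset _ k) hzero,
        Finset.prod_eq_zero (Finset.mem_univ k) hzero]
  -- Step 4: assembly via `Measure.pi_eq_generateFrom`
  have hmeas : Measurable (fun ω k => X k ω) := measurable_pi_lambda _ hX
  haveI : ∀ k, IsProbabilityMeasure (P.map (X k)) :=
    fun k => Measure.isProbabilityMeasure_map (hX k).aemeasurable
  refine (Measure.pi_eq_generateFrom
    (C := fun _ => {s : Set ℝ | ∃ a b : ℝ, s = Icc a b}) ?_ ?_ ?_ ?_).symm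
  · intro k
    apply le_antisymm
    · apply MeasurableSpace.generateFrom_le
      rintro s ⟨a, b, rfl⟩
      exact measurableSet_Icc
    · refine le_trans (le_of_eq BorelSpace.measurable_eq) ?_
      rw [borel_eq_generateFrom_Iic]
      apply MeasurableSpace.generateFrom_le
      rintro s ⟨c, rfl⟩
      have : Iic c = ⋃ m : ℕ, Icc (c - m) c := by
        ext x
        simp only [mem_Iic, mem_iUnion, mem_Icc]
        constructor
        · intro hx
          obtain ⟨m, hm⟩ := exists_nat_ge (c - x)
          exact ⟨m, by linarith, hx⟩
        · rintro ⟨m, _, hx⟩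
          exact hx
      rw [this]
      exact MeasurableSet.iUnion fun m =>
        MeasurableSpace.measurableSet_generateFrom ⟨c - m, c, rfl⟩
  · rintro k s ⟨a, b, rfl⟩ t ⟨c, d, rfl⟩ -
    exact ⟨a ⊔ c, b ⊓ d, Icc_inter_Icc⟩
  · intro k
    exact ⟨fun m => Icc (-(m:ℝ)) m, fun m => ⟨-(m:ℝ), m, rfl⟩,
      fun m => measure_lt_top _ _, by
        ext x
        simp only [mem_iUnion, mem_Icc, mem_univ, iff_true]
        obtain ⟨m, hm⟩ := exists_nat_ge |x|
        have := abs_le.mp hm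
        exact ⟨m, this.1, this.2⟩⟩
  · intro s hs
    choose a b hab using hs
    have hsm : ∀ k, MeasurableSet (s k) := fun k => by
      rw [hab k]; exact measurableSet_Icc
    rw [Measure.map_apply hmeas (MeasurableSet.univ_pi hsm)]
    have hpre : (fun ω k => X k ω) ⁻¹' (pi univ s) = ⋂ k, X k ⁻¹' Icc (a k) (b k) := by
      ext ω
      simp only [mem_preimage, Set.mem_pi, mem_univ, forall_true_left, mem_iInter]
      constructor
      · intro hω k; have := hω k; rwa [hab k] at this
      · intro hω k; rw [hab k]; exact hω k
    rw [hpre, hBoxAll a b]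
    exact Finset.prod_congr rfl fun k _ => by
      rw [hab k, Measure.map_apply (hX k) measurableSet_Icc]
end

section
/- Let X and Y be real-valued random variables such that the topological supports supp(ℙ_X) and supp(ℙ_Y) are intervals (order-connected sets, bounded or unbounded), and such that supp(ℙ_{(X,Y)}) = supp(ℙ_X) × supp(ℙ_Y). Then X and Y are stochastically independent if and only if there exists ε > 0 such that for every rectangle [a,b] × [c,d] with max(b−a, d−c) ≤ ε and ℙ(X ∈ [a,b], Y ∈ [c,d]) > 0, setting U = {X ∈ [a,b], Y ∈ [c,d]}, one has E[XY | U] = E[X | U] · E[Y | U]. -/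
open MeasureTheory Set

/-- The topological support of a Borel measure: the points all of whose neighbourhoods
have positive measure.  (It is the smallest closed set of full measure.) -/
def msupport {α : Type*} [TopologicalSpace α] [MeasurableSpace α] (P : Measure α) : Set α :=
  {x | ∀ U ∈ nhds x, 0 < P U}

set_option linter.unusedSectionVars false
namespace Stmt11

/-- cancellation transitivity for the cross-multiplication relation -/
lemma rel_trans {f1 g1 f2 g2 f3 g3 : ℝ} (h12 : f1 * g2 = f2 * g1) (h23 : f2 * g3 = f3 * g2)
    (hf2 : f2 ≠ 0) (hg2 : g2 ≠ 0) : f1 * g3 = f3 * g1 := by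
  have h : (f1 * g3) * (f2 * g2) = (f3 * g1) * (f2 * g2) := by
    calc (f1 * g3) * (f2 * g2) = (f1 * g2) * (f2 * g3) := by ring
    _ = (f2 * g1) * (f3 * g2) := by rw [h12, h23]
    _ = (f3 * g1) * (f2 * g2) := by ring
  exact mul_right_cancel₀ (mul_ne_zero hf2 hg2) h

/-- a point of an open interval avoiding a countable set -/
lemma exists_pick {N : Set ℝ} (hN : N.Countable) {u v : ℝ} (h : u < v) :
    ∃ t, t ∈ Ioo u v ∧ t ∉ N := by
  have hd : Dense Nᶜ := hN.dense_compl ℝ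
  obtain ⟨t, htN, ht⟩ := hd.exists_mem_open isOpen_Ioo (nonempty_Ioo.2 h)
  exact ⟨t, ht, htN⟩

lemma msupport_compl_null {α : Type*} [TopologicalSpace α] [MeasurableSpace α]
    [SecondCountableTopology α] (μ : Measure α) :
    μ (msupport μ)ᶜ = 0 := by
  set S : Set (Set α) := {U | IsOpen U ∧ μ U = 0} with hS
  obtain ⟨T, hTc, hTS, hTU⟩ := TopologicalSpace.isOpen_sUnion_countable S (fun s hs => hs.1)
  have hsub : (msupport μ)ᶜ ⊆ ⋃₀ S := by
    intro x hx
    simp only [msupport, mem_compl_iff, mem_setOf_eq, not_forall] at hx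
    obtain ⟨U, hU, hUpos⟩ := hx
    obtain ⟨V, hVU, hVo, hxV⟩ := mem_nhds_iff.1 hU
    refine ⟨V, ⟨hVo, le_antisymm ?_ (zero_le)⟩, hxV⟩
    calc μ V ≤ μ U := measure_mono hVU
    _ = 0 := by simpa using hUpos
  have : μ (⋃₀ S) = 0 := by
    rw [← hTU]
    exact (measure_sUnion_null_iff hTc).2 (fun s hs => (hTS hs).2)
  exact le_antisymm (le_trans (measure_mono hsub) this.le) (zero_le)

lemma atoms_countable (ν : Measure ℝ) [IsFiniteMeasure ν] : {x : ℝ | ν {x} ≠ 0}.Countable := by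
  have := Measure.countable_meas_pos_of_disjoint_iUnion (μ := ν)
    (As := fun x : ℝ => {x}) (fun x => measurableSet_singleton x)
    (fun x y hxy => by simp [Function.onFun, disjoint_singleton, hxy])
  refine this.mono ?_
  intro x hx
  simpa [pos_iff_ne_zero] using hx

section Chain

/-- The generic one-dimensional chaining lemma. -/
lemma chain_lemma (J : Set ℝ) (hJ : J.OrdConnected) (N : Set ℝ) (hN : N.Countable)
    (F G : ℝ → ℝ → ℝ) (ε : ℝ) (hε : 0 < ε)
    (haddF : ∀ p q r, p ≤ q → q ≤ r → q ∉ N → F p r = F p q + F q r)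
    (haddG : ∀ p q r, p ≤ q → q ≤ r → q ∉ N → G p r = G p q + G q r)
    (hposF : ∀ p q, p < q → (Ioo p q ∩ J).Nonempty → 0 < F p q)
    (hposG : ∀ p q, p < q → (Ioo p q ∩ J).Nonempty → 0 < G p q)
    (hnullF : ∀ p q, p ≤ q → p ∉ N → q ∉ N → Ioo p q ∩ J = ∅ → F p q = 0)
    (hnullG : ∀ p q, p ≤ q → p ∉ N → q ∉ N → Ioo p q ∩ J = ∅ → G p q = 0)
    (hlink : ∀ p q r, p < q → q < r → r - p ≤ ε → p ∉ N → q ∉ N → r ∉ N →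
      (Ioo p q ∩ J).Nonempty → (Ioo q r ∩ J).Nonempty → F p q * G q r = F q r * G p q) :
    ∀ p q p' q', p < q → p' < q' → q - p ≤ ε → q' - p' ≤ ε →
      p ∉ N → q ∉ N → p' ∉ N → q' ∉ N →
      (Ioo p q ∩ J).Nonempty → (Ioo p' q' ∩ J).Nonempty →
      F p q * G p' q' = F p' q' * G p q := by
  -- left-anchored subdivision
  have sub' : ∀ x z y, x < z → z < y → y - x ≤ ε → x ∉ N → z ∉ N → y ∉ N →
      (Ioo x z ∩ J).Nonempty → F x z * G x y = F x y * G x z := by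
    intro x z y hxz hzy hyx hx hz hy hne
    have hF := haddF x z y hxz.le hzy.le hz
    have hG := haddG x z y hxz.le hzy.le hz
    by_cases h2 : (Ioo z y ∩ J).Nonempty
    · have hl := hlink x z y hxz hzy hyx hx hz hy hne h2
      rw [hF, hG]; linear_combination hl
    · have h0F : F z y = 0 := hnullF z y hzy.le hz hy (not_nonempty_iff_eq_empty.1 h2)
      have h0G : G z y = 0 := hnullG z y hzy.le hz hy (not_nonempty_iff_eq_empty.1 h2)
      rw [hF, hG, h0F, h0G]; ring
  -- right-anchored subdivision
  have sub'' : ∀ x z y, x < z → z < y → y - x ≤ ε → x ∉ N → z ∉ N → y ∉ N →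
      (Ioo z y ∩ J).Nonempty → F z y * G x y = F x y * G z y := by
    intro x z y hxz hzy hyx hx hz hy hne
    have hF := haddF x z y hxz.le hzy.le hz
    have hG := haddG x z y hxz.le hzy.le hz
    by_cases h2 : (Ioo x z ∩ J).Nonempty
    · have hl := hlink x z y hxz hzy hyx hx hz hy h2 hne
      rw [hF, hG]; linear_combination -hl
    · have h0F : F x z = 0 := hnullF x z hxz.le hx hz (not_nonempty_iff_eq_empty.1 h2)
      have h0G : G x z = 0 := hnullG x z hxz.le hx hz (not_nonempty_iff_eq_empty.1 h2)
      rw [hF, hG, h0F, h0G]; ring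
  -- relating an interval to a strict subinterval
  have sub : ∀ a b p q, a < p → p < q → q < b → b - a ≤ ε →
      a ∉ N → b ∉ N → p ∉ N → q ∉ N → (Ioo p q ∩ J).Nonempty →
      F p q * G a b = F a b * G p q := by
    intro a b p q hap hpq hqb hba ha hb hp hq hne
    have hne' : (Ioo p b ∩ J).Nonempty := by
      obtain ⟨t, ht1, ht2⟩ := hne
      exact ⟨t, ⟨ht1.1, ht1.2.trans hqb⟩, ht2⟩
    have r1 : F p q * G p b = F p b * G p q :=
      sub' p q b hpq (hqb) (by linarith) hp hq hb hne
    have r2 : F p b * G a b = F a b * G p b :=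
      sub'' a p b hap (hpq.trans hqb) hba ha hp hb hne'
    exact rel_trans r1 r2 (hposF p b (hpq.trans hqb) hne').ne'
      (hposG p b (hpq.trans hqb) hne').ne'
  -- two intervals whose witness points are at distance ≤ ε/2
  have short : ∀ a b a' b' ι ι', a < b → a' < b' → b - a ≤ ε → b' - a' ≤ ε →
      a ∉ N → b ∉ N → a' ∉ N → b' ∉ N →
      ι ∈ Ioo a b → ι ∈ J → ι' ∈ Ioo a' b' → ι' ∈ J → ι ≤ ι' → ι' - ι ≤ ε/2 →
      F a b * G a' b' = F a' b' * G a b := by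
    intro a b a' b' ι ι' hab hab' hba hba' ha hb ha' hb' hι hιJ hι' hι'J hle hdist
    set δ : ℝ := (ε - (ι' - ι))/2 with hδdef
    have hδ : 0 < δ := by
      have : ι' - ι ≤ ε/2 := hdist
      have : ι' - ι < ε := by linarith
      simp only [hδdef]; linarith
    obtain ⟨p, hp, hpN⟩ := exists_pick hN (show max a (ι - δ) < ι from
      max_lt hι.1 (by linarith))
    obtain ⟨q, hq, hqN⟩ := exists_pick hN (show ι' < min b' (ι' + δ) from
      lt_min hι'.2 (by linarith))
    have hpa : a < p := lt_of_le_of_lt (le_max_left _ _) hp.1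
    have hpι : p < ι := hp.2
    have hqb' : q < b' := lt_of_lt_of_le hq.2 (min_le_left _ _)
    have hqι' : ι' < q := hq.1
    have hqδ : q < ι' + δ := lt_of_lt_of_le hq.2 (min_le_right _ _)
    have hpδ : ι - δ < p := lt_of_le_of_lt (le_max_right _ _) hp.1
    have hqp : q - p ≤ ε := by simp only [hδdef] at hpδ hqδ ⊢; linarith
    obtain ⟨v, hv, hvN⟩ := exists_pick hN (show ι < min b q from
      lt_min hι.2 (lt_of_le_of_lt hle hqι'))
    have hvb : v < b := lt_of_lt_of_le hv.2 (min_le_left _ _)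
    have hvq : v < q := lt_of_lt_of_le hv.2 (min_le_right _ _)
    obtain ⟨w, hw, hwN⟩ := exists_pick hN (show max a' p < ι' from
      max_lt hι'.1 (lt_of_lt_of_le hpι hle))
    have hwa' : a' < w := lt_of_le_of_lt (le_max_left _ _) hw.1
    have hwp : p < w := lt_of_le_of_lt (le_max_right _ _) hw.1
    have hwι' : w < ι' := hw.2
    have hpv : (Ioo p v ∩ J).Nonempty := ⟨ι, ⟨hpι, hv.1⟩, hιJ⟩
    have hwq : (Ioo w q ∩ J).Nonempty := ⟨ι', ⟨hwι', hqι'⟩, hι'J⟩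
    have hpq : (Ioo p q ∩ J).Nonempty := ⟨ι, ⟨hpι, lt_of_le_of_lt hle hqι'⟩, hιJ⟩
    have R1 : F p v * G a b = F a b * G p v :=
      sub a b p v hpa (hpι.trans hv.1) hvb hba ha hb hpN hvN hpv
    have R2 : F p v * G p q = F p q * G p v :=
      sub' p v q (hpι.trans hv.1) hvq hqp hpN hvN hqN hpv
    have R3 : F w q * G p q = F p q * G w q :=
      sub'' p w q hwp (hwι'.trans hqι') hqp hpN hwN hqN hwq
    have R4 : F w q * G a' b' = F a' b' * G w q :=
      sub a' b' w q hwa' (hwι'.trans hqι') hqb' hba' ha' hb' hwN hqN hwq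
    -- chain: (a,b) ~ (p,v) ~ (p,q) ~ (w,q) ~ (a',b')
    have hpvlt : p < v := hpι.trans hv.1
    have hpqlt : p < q := hpι.trans (lt_of_le_of_lt hle hqι')
    have hwqlt : w < q := hwι'.trans hqι'
    have T1 : F a b * G p q = F p q * G a b :=
      rel_trans R1.symm R2 (hposF p v hpvlt hpv).ne' (hposG p v hpvlt hpv).ne'
    have T2 : F a b * G w q = F w q * G a b :=
      rel_trans T1 R3.symm (hposF p q hpqlt hpq).ne' (hposG p q hpqlt hpq).ne'
    exact rel_trans T2 R4 (hposF w q hwqlt hwq).ne' (hposG w q hwqlt hwq).ne'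
  -- main chaining by induction on the number of ε/2 steps
  have main : ∀ n : ℕ, ∀ a b a' b' ι ι', a < b → a' < b' → b - a ≤ ε → b' - a' ≤ ε →
      a ∉ N → b ∉ N → a' ∉ N → b' ∉ N →
      ι ∈ Ioo a b → ι ∈ J → ι' ∈ Ioo a' b' → ι' ∈ J → ι ≤ ι' → ι' - ι ≤ n * (ε/2) + ε/2 →
      F a b * G a' b' = F a' b' * G a b := by
    intro n
    induction n with
    | zero =>
      intro a b a' b' ι ι' h1 h2 h3 h4 h5 h6 h7 h8 h9 h10 h11 h12 h13 h14
      exact short a b a' b' ι ι' h1 h2 h3 h4 h5 h6 h7 h8 h9 h10 h11 h12 h13 (by simpa using h14)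
    | succ n ih =>
      intro a b a' b' ι ι' h1 h2 h3 h4 h5 h6 h7 h8 h9 h10 h11 h12 h13 h14
      by_cases hcase : ι' - ι ≤ ε/2
      · exact short a b a' b' ι ι' h1 h2 h3 h4 h5 h6 h7 h8 h9 h10 h11 h12 h13 hcase
      · push_neg at hcase
        set z : ℝ := ι + ε/2 with hzdef
        have hzJ : z ∈ J := hJ.out h10 h12 ⟨by simp [hzdef]; linarith, by simp [hzdef]; linarith⟩
        obtain ⟨p, hp, hpN⟩ := exists_pick hN (show z - ε/4 < z by linarith)
        obtain ⟨q, hq, hqN⟩ := exists_pick hN (show z < z + ε/4 by linarith)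
        have hpq : p < q := hp.2.trans hq.1
        have hqp : q - p ≤ ε := by have := hp.1; have := hq.2; linarith
        have hzpq : z ∈ Ioo p q := ⟨hp.2, hq.1⟩
        have W1 : F a b * G p q = F p q * G a b :=
          short a b p q ι z h1 hpq h3 hqp h5 h6 hpN hqN h9 h10 hzpq hzJ
            (by simp only [hzdef]; linarith) (by simp only [hzdef]; linarith)
        have W2 : F p q * G a' b' = F a' b' * G p q :=
          ih p q a' b' z ι' hpq h2 hqp h4 hpN hqN h7 h8 hzpq hzJ h11 h12
            (by simp only [hzdef]; linarith) (by push_cast at h14 ⊢; simp only [hzdef]; linarith)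
        exact rel_trans W1 W2 (hposF p q hpq ⟨z, hzpq, hzJ⟩).ne'
          (hposG p q hpq ⟨z, hzpq, hzJ⟩).ne'
  -- wrap up
  intro p q p' q' h1 h2 h3 h4 h5 h6 h7 h8 hne hne'
  obtain ⟨ι, hι, hιJ⟩ := hne
  obtain ⟨ι', hι', hι'J⟩ := hne'
  rcases le_total ι ι' with hle | hle
  · obtain ⟨n, hn⟩ := exists_nat_ge ((ι' - ι)/(ε/2))
    have : ι' - ι ≤ n * (ε/2) + ε/2 := by
      have h2' : (0:ℝ) < ε/2 := by linarith
      have := (div_le_iff₀ h2').1 hn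
      linarith
    exact main n p q p' q' ι ι' h1 h2 h3 h4 h5 h6 h7 h8 hι hιJ hι' hι'J hle this
  · obtain ⟨n, hn⟩ := exists_nat_ge ((ι - ι')/(ε/2))
    have : ι - ι' ≤ n * (ε/2) + ε/2 := by
      have h2' : (0:ℝ) < ε/2 := by linarith
      have := (div_le_iff₀ h2').1 hn
      linarith
    exact (main n p' q' p q ι' ι h2 h1 h4 h3 h7 h8 h5 h6 hι' hι'J hι hιJ hle this).symm

end Chain


section Measures

variable {μ : Measure (ℝ × ℝ)} [IsProbabilityMeasure μ]

lemma map_fst_apply {s : Set ℝ} (hs : MeasurableSet s) :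
    (μ.map Prod.fst) s = μ (s ×ˢ (univ : Set ℝ)) := by
  rw [Measure.map_apply measurable_fst hs]
  congr 1
  ext z
  simp [Set.mem_prod]

lemma map_snd_apply {s : Set ℝ} (hs : MeasurableSet s) :
    (μ.map Prod.snd) s = μ ((univ : Set ℝ) ×ˢ s) := by
  rw [Measure.map_apply measurable_snd hs]
  congr 1
  ext z
  simp [Set.mem_prod]

lemma rect_pos (hprod : msupport μ = msupport (μ.map Prod.fst) ×ˢ msupport (μ.map Prod.snd))
    {a b c d : ℝ}
    (hx : (Ioo a b ∩ msupport (μ.map Prod.fst)).Nonempty)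
    (hy : (Ioo c d ∩ msupport (μ.map Prod.snd)).Nonempty) :
    0 < μ (Icc a b ×ˢ Icc c d) := by
  obtain ⟨x0, hx0, hxI⟩ := hx
  obtain ⟨y0, hy0, hyJ⟩ := hy
  have hz : (x0, y0) ∈ msupport μ := by
    rw [hprod]; exact ⟨hxI, hyJ⟩
  exact hz _ (prod_mem_nhds (Icc_mem_nhds hx0.1 hx0.2) (Icc_mem_nhds hy0.1 hy0.2))

lemma marg_null_X {a b : ℝ} (ha : (μ.map Prod.fst) {a} = 0) (hb : (μ.map Prod.fst) {b} = 0)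
    (h : Ioo a b ∩ msupport (μ.map Prod.fst) = ∅) :
    (μ.map Prod.fst) (Icc a b) = 0 := by
  have hsub : Icc a b ⊆ {a} ∪ {b} ∪ (msupport (μ.map Prod.fst))ᶜ := by
    intro x hx
    by_cases hxa : x = a
    · exact Or.inl (Or.inl hxa)
    by_cases hxb : x = b
    · exact Or.inl (Or.inr hxb)
    by_cases hxI : x ∈ msupport (μ.map Prod.fst)
    · exfalso
      have : x ∈ Ioo a b := ⟨lt_of_le_of_ne hx.1 (Ne.symm hxa), lt_of_le_of_ne hx.2 hxb⟩
      exact absurd (h ▸ (mem_inter this hxI)) (notMem_empty x)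
    · exact Or.inr hxI
  have h0 : (μ.map Prod.fst) ({a} ∪ {b} ∪ (msupport (μ.map Prod.fst))ᶜ) = 0 := by
    refine le_antisymm ?_ (zero_le)
    calc (μ.map Prod.fst) ({a} ∪ {b} ∪ (msupport (μ.map Prod.fst))ᶜ)
        ≤ (μ.map Prod.fst) ({a} ∪ {b}) + (μ.map Prod.fst) (msupport (μ.map Prod.fst))ᶜ :=
          measure_union_le _ _
      _ ≤ ((μ.map Prod.fst) {a} + (μ.map Prod.fst) {b})
            + (μ.map Prod.fst) (msupport (μ.map Prod.fst))ᶜ := by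
          exact add_le_add (measure_union_le _ _) le_rfl
      _ = 0 := by rw [ha, hb, msupport_compl_null]; simp
  exact le_antisymm ((measure_mono hsub).trans h0.le) (zero_le)

lemma marg_null_Y {c d : ℝ} (hc : (μ.map Prod.snd) {c} = 0) (hd : (μ.map Prod.snd) {d} = 0)
    (h : Ioo c d ∩ msupport (μ.map Prod.snd) = ∅) :
    (μ.map Prod.snd) (Icc c d) = 0 := by
  have hsub : Icc c d ⊆ {c} ∪ {d} ∪ (msupport (μ.map Prod.snd))ᶜ := by
    intro x hx
    by_cases hxa : x = c
    · exact Or.inl (Or.inl hxa)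
    by_cases hxb : x = d
    · exact Or.inl (Or.inr hxb)
    by_cases hxI : x ∈ msupport (μ.map Prod.snd)
    · exfalso
      have : x ∈ Ioo c d := ⟨lt_of_le_of_ne hx.1 (Ne.symm hxa), lt_of_le_of_ne hx.2 hxb⟩
      exact absurd (h ▸ (mem_inter this hxI)) (notMem_empty x)
    · exact Or.inr hxI
  have h0 : (μ.map Prod.snd) ({c} ∪ {d} ∪ (msupport (μ.map Prod.snd))ᶜ) = 0 := by
    refine le_antisymm ?_ (zero_le)
    calc (μ.map Prod.snd) ({c} ∪ {d} ∪ (msupport (μ.map Prod.snd))ᶜ)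
        ≤ (μ.map Prod.snd) ({c} ∪ {d}) + (μ.map Prod.snd) (msupport (μ.map Prod.snd))ᶜ :=
          measure_union_le _ _
      _ ≤ ((μ.map Prod.snd) {c} + (μ.map Prod.snd) {d})
            + (μ.map Prod.snd) (msupport (μ.map Prod.snd))ᶜ := by
          exact add_le_add (measure_union_le _ _) le_rfl
      _ = 0 := by rw [hc, hd, msupport_compl_null]; simp
  exact le_antisymm ((measure_mono hsub).trans h0.le) (zero_le)

lemma rect_le_margX {a b : ℝ} (T : Set ℝ) :
    μ (Icc a b ×ˢ T) ≤ (μ.map Prod.fst) (Icc a b) := by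
  rw [map_fst_apply measurableSet_Icc]
  exact measure_mono (prod_mono_right (subset_univ T))

lemma rect_le_margY {c d : ℝ} (S : Set ℝ) :
    μ (S ×ˢ Icc c d) ≤ (μ.map Prod.snd) (Icc c d) := by
  rw [map_snd_apply measurableSet_Icc]
  exact measure_mono (prod_mono_left (subset_univ S))

lemma pos_meets_X {a b c d : ℝ}
    (ha : (μ.map Prod.fst) {a} = 0) (hb : (μ.map Prod.fst) {b} = 0)
    (hpos : 0 < μ (Icc a b ×ˢ Icc c d)) :
    (Ioo a b ∩ msupport (μ.map Prod.fst)).Nonempty := by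
  by_contra h
  have h' := not_nonempty_iff_eq_empty.1 h
  have := (rect_le_margX (μ := μ) (a := a) (b := b) (Icc c d)).trans
    (marg_null_X ha hb h').le
  exact absurd this (by simpa using hpos.ne')

lemma pos_meets_Y {a b c d : ℝ}
    (hc : (μ.map Prod.snd) {c} = 0) (hd : (μ.map Prod.snd) {d} = 0)
    (hpos : 0 < μ (Icc a b ×ˢ Icc c d)) :
    (Ioo c d ∩ msupport (μ.map Prod.snd)).Nonempty := by
  by_contra h
  have h' := not_nonempty_iff_eq_empty.1 h
  have := (rect_le_margY (μ := μ) (c := c) (d := d) (Icc a b)).trans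
    (marg_null_Y hc hd h').le
  exact absurd this (by simpa using hpos.ne')

lemma abs_le_of_mem_Icc {x a b : ℝ} (h : x ∈ Icc a b) : |x| ≤ max |a| |b| := by
  rcases abs_le.1 (le_refl |a|) with _
  refine abs_le.2 ⟨?_, ?_⟩
  · calc -(max |a| |b|) ≤ -|a| := by simp
    _ ≤ a := neg_abs_le a
    _ ≤ x := h.1
  · calc x ≤ b := h.2
    _ ≤ |b| := le_abs_self b
    _ ≤ max |a| |b| := le_max_right _ _

lemma integrableOn_rect {f : ℝ × ℝ → ℝ} (hf : Measurable f) {a b c d M : ℝ}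
    (hb : ∀ z ∈ Icc a b ×ˢ Icc c d, ‖f z‖ ≤ M) :
    IntegrableOn f (Icc a b ×ˢ Icc c d) μ := by
  refine Measure.integrableOn_of_bounded (M := M) (measure_ne_top μ _) hf.aestronglyMeasurable ?_
  filter_upwards [ae_restrict_mem (measurableSet_Icc.prod measurableSet_Icc)] with z hz
  exact hb z hz

lemma integrableOn_fst {a b c d : ℝ} :
    IntegrableOn (fun z : ℝ × ℝ => z.1) (Icc a b ×ˢ Icc c d) μ :=
  integrableOn_rect measurable_fst (M := max |a| |b|)
    (fun z hz => abs_le_of_mem_Icc hz.1)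

lemma integrableOn_snd {a b c d : ℝ} :
    IntegrableOn (fun z : ℝ × ℝ => z.2) (Icc a b ×ˢ Icc c d) μ :=
  integrableOn_rect measurable_snd (M := max |c| |d|)
    (fun z hz => abs_le_of_mem_Icc hz.2)

lemma integrableOn_mul {a b c d : ℝ} :
    IntegrableOn (fun z : ℝ × ℝ => z.1 * z.2) (Icc a b ×ˢ Icc c d) μ :=
  integrableOn_rect (measurable_fst.mul measurable_snd) (M := max |a| |b| * max |c| |d|)
    (fun z hz => by
      rw [Real.norm_eq_abs, Pi.mul_apply, abs_mul]
      exact mul_le_mul (abs_le_of_mem_Icc hz.1) (abs_le_of_mem_Icc hz.2) (abs_nonneg _)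
        (le_trans (abs_nonneg _) (abs_le_of_mem_Icc hz.1)))

lemma strict_int {R : Set (ℝ × ℝ)} (hR : MeasurableSet R) (hpos : 0 < μ R)
    {f : ℝ × ℝ → ℝ} {t : ℝ} (hb : ∀ z ∈ R, f z ≤ t) (h0 : μ {z | f z = t} = 0)
    (hint : IntegrableOn f R μ) :
    ∫ z in R, f z ∂μ < t * (μ R).toReal := by
  have hconst : IntegrableOn (fun _ : ℝ × ℝ => t) R μ :=
    integrableOn_const (measure_ne_top μ R)
  have hg : IntegrableOn (fun z => t - f z) R μ := hconst.sub hint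
  have h1 : 0 < ∫ z in R, (t - f z) ∂μ := by
    rw [setIntegral_pos_iff_support_of_nonneg_ae ?_ hg]
    · have hsub : R ⊆ (Function.support fun z => t - f z) ∩ R ∪ {z | f z = t} := by
        intro z hz
        by_cases h : f z = t
        · exact Or.inr h
        · exact Or.inl ⟨sub_ne_zero.2 (fun he => h (by linarith [he.symm])), hz⟩
      have : μ R ≤ μ ((Function.support fun z => t - f z) ∩ R) + μ {z | f z = t} :=
        (measure_mono hsub).trans (measure_union_le _ _)
      rw [h0, add_zero] at this
      exact lt_of_lt_of_le hpos this
    · filter_upwards [ae_restrict_mem hR] with z hz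
      exact sub_nonneg.2 (hb z hz)
  have h2 : ∫ z in R, (t - f z) ∂μ = t * (μ R).toReal - ∫ z in R, f z ∂μ := by
    rw [integral_sub hconst hint, setIntegral_const, smul_eq_mul, mul_comm]
    rfl
  linarith [h2 ▸ h1]

end Measures


section Split

variable {μ : Measure (ℝ × ℝ)} [IsProbabilityMeasure μ]

lemma inter_sub_line_x {p q r c d : ℝ} (hpq : p ≤ q) (hqr : q ≤ r) :
    (Icc p q ×ˢ Icc c d) ∩ (Icc q r ×ˢ Icc c d) ⊆ ({q} : Set ℝ) ×ˢ (univ : Set ℝ) := by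
  rw [Set.prod_inter_prod]
  refine prod_mono ?_ (subset_univ _)
  rw [Set.Icc_inter_Icc, sup_eq_right.2 hpq, inf_eq_left.2 hqr, Set.Icc_self]

lemma inter_sub_line_y {a b c s d : ℝ} (hcs : c ≤ s) (hsd : s ≤ d) :
    (Icc a b ×ˢ Icc c s) ∩ (Icc a b ×ˢ Icc s d) ⊆ (univ : Set ℝ) ×ˢ ({s} : Set ℝ) := by
  rw [Set.prod_inter_prod]
  refine prod_mono (subset_univ _) ?_
  rw [Set.Icc_inter_Icc, sup_eq_right.2 hcs, inf_eq_left.2 hsd, Set.Icc_self]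

lemma line_null_x {q : ℝ} (hq : (μ.map Prod.fst) {q} = 0) :
    μ (({q} : Set ℝ) ×ˢ (univ : Set ℝ)) = 0 := by
  rw [← map_fst_apply (measurableSet_singleton q)]; exact hq

lemma line_null_y {s : ℝ} (hs : (μ.map Prod.snd) {s} = 0) :
    μ ((univ : Set ℝ) ×ˢ ({s} : Set ℝ)) = 0 := by
  rw [← map_snd_apply (measurableSet_singleton s)]; exact hs

lemma split_meas_x {p q r c d : ℝ} (hpq : p ≤ q) (hqr : q ≤ r)
    (hq : (μ.map Prod.fst) {q} = 0) :
    μ (Icc p r ×ˢ Icc c d) = μ (Icc p q ×ˢ Icc c d) + μ (Icc q r ×ˢ Icc c d) := by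
  rw [← Set.Icc_union_Icc_eq_Icc hpq hqr, Set.union_prod]
  exact measure_union₀ ((measurableSet_Icc.prod measurableSet_Icc).nullMeasurableSet)
    (measure_mono_null (inter_sub_line_x hpq hqr) (line_null_x hq))

lemma split_meas_y {a b c s d : ℝ} (hcs : c ≤ s) (hsd : s ≤ d)
    (hs : (μ.map Prod.snd) {s} = 0) :
    μ (Icc a b ×ˢ Icc c d) = μ (Icc a b ×ˢ Icc c s) + μ (Icc a b ×ˢ Icc s d) := by
  rw [← Set.Icc_union_Icc_eq_Icc hcs hsd, Set.prod_union]
  exact measure_union₀ ((measurableSet_Icc.prod measurableSet_Icc).nullMeasurableSet)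
    (measure_mono_null (inter_sub_line_y hcs hsd) (line_null_y hs))

lemma split_meas_x_toReal {p q r c d : ℝ} (hpq : p ≤ q) (hqr : q ≤ r)
    (hq : (μ.map Prod.fst) {q} = 0) :
    (μ (Icc p r ×ˢ Icc c d)).toReal
      = (μ (Icc p q ×ˢ Icc c d)).toReal + (μ (Icc q r ×ˢ Icc c d)).toReal := by
  rw [split_meas_x hpq hqr hq, ENNReal.toReal_add (measure_ne_top μ _) (measure_ne_top μ _)]

lemma split_meas_y_toReal {a b c s d : ℝ} (hcs : c ≤ s) (hsd : s ≤ d)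
    (hs : (μ.map Prod.snd) {s} = 0) :
    (μ (Icc a b ×ˢ Icc c d)).toReal
      = (μ (Icc a b ×ˢ Icc c s)).toReal + (μ (Icc a b ×ˢ Icc s d)).toReal := by
  rw [split_meas_y hcs hsd hs, ENNReal.toReal_add (measure_ne_top μ _) (measure_ne_top μ _)]

lemma split_int_x {p q r c d : ℝ} (hpq : p ≤ q) (hqr : q ≤ r)
    (hq : (μ.map Prod.fst) {q} = 0) {f : ℝ × ℝ → ℝ}
    (h1 : IntegrableOn f (Icc p q ×ˢ Icc c d) μ)
    (h2 : IntegrableOn f (Icc q r ×ˢ Icc c d) μ) :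
    ∫ z in Icc p r ×ˢ Icc c d, f z ∂μ
      = (∫ z in Icc p q ×ˢ Icc c d, f z ∂μ) + ∫ z in Icc q r ×ˢ Icc c d, f z ∂μ := by
  rw [← Set.Icc_union_Icc_eq_Icc hpq hqr, Set.union_prod]
  exact integral_union_ae (measure_mono_null (inter_sub_line_x hpq hqr) (line_null_x hq))
    ((measurableSet_Icc.prod measurableSet_Icc).nullMeasurableSet) h1 h2

lemma split_int_y {a b c s d : ℝ} (hcs : c ≤ s) (hsd : s ≤ d)
    (hs : (μ.map Prod.snd) {s} = 0) {f : ℝ × ℝ → ℝ}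
    (h1 : IntegrableOn f (Icc a b ×ˢ Icc c s) μ)
    (h2 : IntegrableOn f (Icc a b ×ˢ Icc s d) μ) :
    ∫ z in Icc a b ×ˢ Icc c d, f z ∂μ
      = (∫ z in Icc a b ×ˢ Icc c s, f z ∂μ) + ∫ z in Icc a b ×ˢ Icc s d, f z ∂μ := by
  rw [← Set.Icc_union_Icc_eq_Icc hcs hsd, Set.prod_union]
  exact integral_union_ae (measure_mono_null (inter_sub_line_y hcs hsd) (line_null_y hs))
    ((measurableSet_Icc.prod measurableSet_Icc).nullMeasurableSet) h1 h2

lemma strict_fst_lt {a b c d t : ℝ} (hb : b ≤ t) (ht : (μ.map Prod.fst) {t} = 0)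
    (hpos : 0 < μ (Icc a b ×ˢ Icc c d)) :
    ∫ z in Icc a b ×ˢ Icc c d, z.1 ∂μ < t * (μ (Icc a b ×ˢ Icc c d)).toReal := by
  refine strict_int (measurableSet_Icc.prod measurableSet_Icc) hpos
    (fun z hz => le_trans hz.1.2 hb) ?_ integrableOn_fst
  have : {z : ℝ × ℝ | z.1 = t} = ({t} : Set ℝ) ×ˢ (univ : Set ℝ) := by
    ext z
    constructor
    · intro h; exact ⟨h, trivial⟩
    · intro h; exact h.1
  rw [this]; exact line_null_x ht

lemma strict_fst_gt {a b c d t : ℝ} (ha : t ≤ a) (ht : (μ.map Prod.fst) {t} = 0)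
    (hpos : 0 < μ (Icc a b ×ˢ Icc c d)) :
    t * (μ (Icc a b ×ˢ Icc c d)).toReal < ∫ z in Icc a b ×ˢ Icc c d, z.1 ∂μ := by
  have h := strict_int (μ := μ) (measurableSet_Icc.prod measurableSet_Icc) hpos
    (f := fun z => -z.1) (t := -t) (fun z hz => neg_le_neg (le_trans ha hz.1.1)) ?_
    integrableOn_fst.neg
  · rw [integral_neg] at h; linarith
  · have : {z : ℝ × ℝ | -z.1 = -t} = ({t} : Set ℝ) ×ˢ (univ : Set ℝ) := by
      ext ⟨z1, z2⟩
      simp only [Set.mem_setOf_eq, Set.mem_prod, Set.mem_singleton_iff, Set.mem_univ, and_true]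
      exact neg_inj
    rw [this]; exact line_null_x ht

lemma strict_snd_lt {a b c d t : ℝ} (hb : d ≤ t) (ht : (μ.map Prod.snd) {t} = 0)
    (hpos : 0 < μ (Icc a b ×ˢ Icc c d)) :
    ∫ z in Icc a b ×ˢ Icc c d, z.2 ∂μ < t * (μ (Icc a b ×ˢ Icc c d)).toReal := by
  refine strict_int (measurableSet_Icc.prod measurableSet_Icc) hpos
    (fun z hz => le_trans hz.2.2 hb) ?_ integrableOn_snd
  have : {z : ℝ × ℝ | z.2 = t} = (univ : Set ℝ) ×ˢ ({t} : Set ℝ) := by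
    ext z
    constructor
    · intro h; exact ⟨trivial, h⟩
    · intro h; exact h.2
  rw [this]; exact line_null_y ht

lemma strict_snd_gt {a b c d t : ℝ} (ha : t ≤ c) (ht : (μ.map Prod.snd) {t} = 0)
    (hpos : 0 < μ (Icc a b ×ˢ Icc c d)) :
    t * (μ (Icc a b ×ˢ Icc c d)).toReal < ∫ z in Icc a b ×ˢ Icc c d, z.2 ∂μ := by
  have h := strict_int (μ := μ) (measurableSet_Icc.prod measurableSet_Icc) hpos
    (f := fun z => -z.2) (t := -t) (fun z hz => neg_le_neg (le_trans ha hz.2.1)) ?_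
    integrableOn_snd.neg
  · rw [integral_neg] at h; linarith
  · have : {z : ℝ × ℝ | -z.2 = -t} = (univ : Set ℝ) ×ˢ ({t} : Set ℝ) := by
      ext ⟨z1, z2⟩
      simp only [Set.mem_setOf_eq, Set.mem_prod, Set.mem_singleton_iff, Set.mem_univ, true_and]
      exact neg_inj
    rw [this]; exact line_null_y ht

end Split


section Key

variable {μ : Measure (ℝ × ℝ)} [IsProbabilityMeasure μ]

lemma meas_toReal_pos {R : Set (ℝ × ℝ)} (h : 0 < μ R) : 0 < (μ R).toReal :=
  ENNReal.toReal_pos h.ne' (measure_ne_top μ R)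

lemma prop_y {ε : ℝ}
    (H : ∀ a b c d : ℝ, b - a ≤ ε → d - c ≤ ε → 0 < μ (Icc a b ×ˢ Icc c d) →
      (μ (Icc a b ×ˢ Icc c d)).toReal * (∫ z in Icc a b ×ˢ Icc c d, z.1 * z.2 ∂μ)
        = (∫ z in Icc a b ×ˢ Icc c d, z.1 ∂μ) * (∫ z in Icc a b ×ˢ Icc c d, z.2 ∂μ))
    {a b c s d : ℝ} (hcs : c < s) (hsd : s < d) (hba : b - a ≤ ε) (hdc : d - c ≤ ε)
    (hs : (μ.map Prod.snd) {s} = 0)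
    (h1 : 0 < μ (Icc a b ×ˢ Icc c s)) (h2 : 0 < μ (Icc a b ×ˢ Icc s d)) :
    (∫ z in Icc a b ×ˢ Icc c s, z.1 ∂μ) * (μ (Icc a b ×ˢ Icc s d)).toReal
      = (∫ z in Icc a b ×ˢ Icc s d, z.1 ∂μ) * (μ (Icc a b ×ˢ Icc c s)).toReal := by
  have h3 : 0 < μ (Icc a b ×ˢ Icc c d) :=
    lt_of_lt_of_le h1 (measure_mono (prod_mono_right (Icc_subset_Icc_right hsd.le)))
  have HH1 := H a b c s hba (by linarith) h1
  have HH2 := H a b s d hba (by linarith) h2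
  have HH3 := H a b c d hba hdc h3
  rw [split_meas_y_toReal hcs.le hsd.le hs,
      split_int_y hcs.le hsd.le hs integrableOn_mul integrableOn_mul,
      split_int_y hcs.le hsd.le hs integrableOn_fst integrableOn_fst,
      split_int_y hcs.le hsd.le hs integrableOn_snd integrableOn_snd] at HH3
  set m1 := (μ (Icc a b ×ˢ Icc c s)).toReal with hm1def
  set m2 := (μ (Icc a b ×ˢ Icc s d)).toReal with hm2def
  set S1 := ∫ z in Icc a b ×ˢ Icc c s, z.1 ∂μ with hS1def
  set S2 := ∫ z in Icc a b ×ˢ Icc s d, z.1 ∂μ with hS2def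
  set T1 := ∫ z in Icc a b ×ˢ Icc c s, z.2 ∂μ with hT1def
  set T2 := ∫ z in Icc a b ×ˢ Icc s d, z.2 ∂μ with hT2def
  set Q1 := ∫ z in Icc a b ×ˢ Icc c s, z.1 * z.2 ∂μ with hQ1def
  set Q2 := ∫ z in Icc a b ×ˢ Icc s d, z.1 * z.2 ∂μ with hQ2def
  have hm1 : 0 < m1 := meas_toReal_pos h1
  have hm2 : 0 < m2 := meas_toReal_pos h2
  have hT1 : T1 < s * m1 := strict_snd_lt le_rfl hs h1
  have hT2 : s * m2 < T2 := strict_snd_gt le_rfl hs h2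
  have hfact : (S1 * m2 - S2 * m1) * (T1 * m2 - T2 * m1) = 0 := by
    linear_combination (-(m1 * m2 + m2 ^ 2)) * HH1 + (-(m1 * m2 + m1 ^ 2)) * HH2
      + m1 * m2 * HH3
  have hT : T1 * m2 - T2 * m1 ≠ 0 := by
    have u1 : T1 * m2 < (s * m1) * m2 := mul_lt_mul_of_pos_right hT1 hm2
    have u2 : (s * m2) * m1 < T2 * m1 := mul_lt_mul_of_pos_right hT2 hm1
    nlinarith
  have := (mul_eq_zero.1 hfact).resolve_right hT
  linarith

lemma rank2x2 {ε : ℝ}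
    (H : ∀ a b c d : ℝ, b - a ≤ ε → d - c ≤ ε → 0 < μ (Icc a b ×ˢ Icc c d) →
      (μ (Icc a b ×ˢ Icc c d)).toReal * (∫ z in Icc a b ×ˢ Icc c d, z.1 * z.2 ∂μ)
        = (∫ z in Icc a b ×ˢ Icc c d, z.1 ∂μ) * (∫ z in Icc a b ×ˢ Icc c d, z.2 ∂μ))
    {a t b c s d : ℝ} (hat : a < t) (htb : t < b) (hcs : c < s) (hsd : s < d)
    (hba : b - a ≤ ε) (hdc : d - c ≤ ε)
    (htN : (μ.map Prod.fst) {t} = 0) (hsN : (μ.map Prod.snd) {s} = 0)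
    (h11 : 0 < μ (Icc a t ×ˢ Icc c s)) (h12 : 0 < μ (Icc a t ×ˢ Icc s d))
    (h21 : 0 < μ (Icc t b ×ˢ Icc c s)) (h22 : 0 < μ (Icc t b ×ˢ Icc s d)) :
    (μ (Icc a t ×ˢ Icc c s)).toReal * (μ (Icc t b ×ˢ Icc s d)).toReal
      = (μ (Icc t b ×ˢ Icc c s)).toReal * (μ (Icc a t ×ˢ Icc s d)).toReal := by
  have hba1 : t - a ≤ ε := by linarith
  have hba2 : b - t ≤ ε := by linarith
  have e1 := prop_y H hcs hsd hba1 hdc hsN h11 h12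
  have e2 := prop_y H hcs hsd hba2 hdc hsN h21 h22
  have h1' : 0 < μ (Icc a b ×ˢ Icc c s) :=
    lt_of_lt_of_le h11 (measure_mono (prod_mono_left (Icc_subset_Icc_right htb.le)))
  have h2' : 0 < μ (Icc a b ×ˢ Icc s d) :=
    lt_of_lt_of_le h12 (measure_mono (prod_mono_left (Icc_subset_Icc_right htb.le)))
  have e3 := prop_y H hcs hsd hba hdc hsN h1' h2'
  rw [split_int_x hat.le htb.le htN integrableOn_fst integrableOn_fst,
      split_meas_x_toReal hat.le htb.le htN,
      split_int_x (c := s) (d := d) hat.le htb.le htN integrableOn_fst integrableOn_fst,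
      split_meas_x_toReal (c := c) (d := s) hat.le htb.le htN] at e3
  set m11 := (μ (Icc a t ×ˢ Icc c s)).toReal with hm11def
  set m12 := (μ (Icc a t ×ˢ Icc s d)).toReal with hm12def
  set m21 := (μ (Icc t b ×ˢ Icc c s)).toReal with hm21def
  set m22 := (μ (Icc t b ×ˢ Icc s d)).toReal with hm22def
  set S11 := ∫ z in Icc a t ×ˢ Icc c s, z.1 ∂μ with hS11def
  set S12 := ∫ z in Icc a t ×ˢ Icc s d, z.1 ∂μ with hS12def
  set S21 := ∫ z in Icc t b ×ˢ Icc c s, z.1 ∂μ with hS21def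
  set S22 := ∫ z in Icc t b ×ˢ Icc s d, z.1 ∂μ with hS22def
  have hm11 : 0 < m11 := meas_toReal_pos h11
  have hm21 : 0 < m21 := meas_toReal_pos h21
  have hS11 : S11 < t * m11 := strict_fst_lt le_rfl htN h11
  have hS21 : t * m21 < S21 := strict_fst_gt le_rfl htN h21
  have halg : (S11 * m21 - S21 * m11) * (m11 * m22 - m12 * m21) = 0 := by
    linear_combination m11 * m21 * e3 - (m11 * m21 + m21 ^ 2) * e1
      - (m11 * m21 + m11 ^ 2) * e2
  have hS : S11 * m21 - S21 * m11 ≠ 0 := by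
    have u1 : S11 * m21 < (t * m11) * m21 := mul_lt_mul_of_pos_right hS11 hm21
    have u2 : (t * m21) * m11 < S21 * m11 := mul_lt_mul_of_pos_right hS21 hm11
    nlinarith
  have := (mul_eq_zero.1 halg).resolve_left hS
  linarith

end Key


section ChainApp

variable {μ : Measure (ℝ × ℝ)} [IsProbabilityMeasure μ]

lemma rect_toReal_null_X {p q : ℝ} (hp : (μ.map Prod.fst) {p} = 0)
    (hq : (μ.map Prod.fst) {q} = 0)
    (hempty : Ioo p q ∩ msupport (μ.map Prod.fst) = ∅) (c d : ℝ) :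
    (μ (Icc p q ×ˢ Icc c d)).toReal = 0 := by
  have h0 : μ (Icc p q ×ˢ Icc c d) = 0 :=
    le_antisymm ((rect_le_margX _).trans (marg_null_X hp hq hempty).le) (zero_le)
  rw [h0, ENNReal.toReal_zero]

lemma rect_toReal_null_Y {c d : ℝ} (hc : (μ.map Prod.snd) {c} = 0)
    (hd : (μ.map Prod.snd) {d} = 0)
    (hempty : Ioo c d ∩ msupport (μ.map Prod.snd) = ∅) (a b : ℝ) :
    (μ (Icc a b ×ˢ Icc c d)).toReal = 0 := by
  have h0 : μ (Icc a b ×ˢ Icc c d) = 0 :=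
    le_antisymm ((rect_le_margY _).trans (marg_null_Y hc hd hempty).le) (zero_le)
  rw [h0, ENNReal.toReal_zero]

lemma step_alpha {ε : ℝ} (hε : 0 < ε)
    (hI : (msupport (μ.map Prod.fst)).OrdConnected)
    (hprod : msupport μ = msupport (μ.map Prod.fst) ×ˢ msupport (μ.map Prod.snd))
    (H : ∀ a b c d : ℝ, b - a ≤ ε → d - c ≤ ε → 0 < μ (Icc a b ×ˢ Icc c d) →
      (μ (Icc a b ×ˢ Icc c d)).toReal * (∫ z in Icc a b ×ˢ Icc c d, z.1 * z.2 ∂μ)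
        = (∫ z in Icc a b ×ˢ Icc c d, z.1 ∂μ) * (∫ z in Icc a b ×ˢ Icc c d, z.2 ∂μ))
    (N : Set ℝ) (hN : N.Countable)
    (hNX : ∀ x, x ∉ N → (μ.map Prod.fst) {x} = 0)
    (hNY : ∀ x, x ∉ N → (μ.map Prod.snd) {x} = 0)
    {c s d : ℝ} (hcs : c < s) (hsd : s < d) (hdc : d - c ≤ ε) (hsN : s ∉ N)
    (hloJ : (Ioo c s ∩ msupport (μ.map Prod.snd)).Nonempty)
    (hhiJ : (Ioo s d ∩ msupport (μ.map Prod.snd)).Nonempty) :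
    ∀ p q p' q', p < q → p' < q' → q - p ≤ ε → q' - p' ≤ ε →
      p ∉ N → q ∉ N → p' ∉ N → q' ∉ N →
      (Ioo p q ∩ msupport (μ.map Prod.fst)).Nonempty →
      (Ioo p' q' ∩ msupport (μ.map Prod.fst)).Nonempty →
      (μ (Icc p q ×ˢ Icc c s)).toReal * (μ (Icc p' q' ×ˢ Icc s d)).toReal
        = (μ (Icc p' q' ×ˢ Icc c s)).toReal * (μ (Icc p q ×ˢ Icc s d)).toReal := by
  refine chain_lemma (msupport (μ.map Prod.fst)) hI N hN
    (fun p q => (μ (Icc p q ×ˢ Icc c s)).toReal)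
    (fun p q => (μ (Icc p q ×ˢ Icc s d)).toReal) ε hε
    (fun p q r hpq hqr hq => split_meas_x_toReal hpq hqr (hNX q hq))
    (fun p q r hpq hqr hq => split_meas_x_toReal hpq hqr (hNX q hq))
    (fun p q _ hne => meas_toReal_pos (rect_pos hprod hne hloJ))
    (fun p q _ hne => meas_toReal_pos (rect_pos hprod hne hhiJ))
    (fun p q _ hp hq hempty => rect_toReal_null_X (hNX p hp) (hNX q hq) hempty c s)
    (fun p q _ hp hq hempty => rect_toReal_null_X (hNX p hp) (hNX q hq) hempty s d)
    (fun p q r h1 h2 h3 _ hq _ hne1 hne2 =>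
      rank2x2 H h1 h2 hcs hsd h3 hdc (hNX q hq) (hNY s hsN)
        (rect_pos hprod hne1 hloJ) (rect_pos hprod hne1 hhiJ)
        (rect_pos hprod hne2 hloJ) (rect_pos hprod hne2 hhiJ))

lemma exchange {ε : ℝ} (hε : 0 < ε)
    (hI : (msupport (μ.map Prod.fst)).OrdConnected)
    (hJ : (msupport (μ.map Prod.snd)).OrdConnected)
    (hprod : msupport μ = msupport (μ.map Prod.fst) ×ˢ msupport (μ.map Prod.snd))
    (H : ∀ a b c d : ℝ, b - a ≤ ε → d - c ≤ ε → 0 < μ (Icc a b ×ˢ Icc c d) →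
      (μ (Icc a b ×ˢ Icc c d)).toReal * (∫ z in Icc a b ×ˢ Icc c d, z.1 * z.2 ∂μ)
        = (∫ z in Icc a b ×ˢ Icc c d, z.1 ∂μ) * (∫ z in Icc a b ×ˢ Icc c d, z.2 ∂μ))
    (N : Set ℝ) (hN : N.Countable)
    (hNX : ∀ x, x ∉ N → (μ.map Prod.fst) {x} = 0)
    (hNY : ∀ x, x ∉ N → (μ.map Prod.snd) {x} = 0)
    {a b a' b' : ℝ} (hab : a < b) (hab' : a' < b') (hba : b - a ≤ ε) (hba' : b' - a' ≤ ε)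
    (haN : a ∉ N) (hbN : b ∉ N) (haN' : a' ∉ N) (hbN' : b' ∉ N)
    (hA : (Ioo a b ∩ msupport (μ.map Prod.fst)).Nonempty)
    (hA' : (Ioo a' b' ∩ msupport (μ.map Prod.fst)).Nonempty) :
    ∀ c d c' d', c < d → c' < d' → d - c ≤ ε → d' - c' ≤ ε →
      c ∉ N → d ∉ N → c' ∉ N → d' ∉ N →
      (Ioo c d ∩ msupport (μ.map Prod.snd)).Nonempty →
      (Ioo c' d' ∩ msupport (μ.map Prod.snd)).Nonempty →
      (μ (Icc a b ×ˢ Icc c d)).toReal * (μ (Icc a' b' ×ˢ Icc c' d')).toReal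
        = (μ (Icc a b ×ˢ Icc c' d')).toReal * (μ (Icc a' b' ×ˢ Icc c d)).toReal := by
  refine chain_lemma (msupport (μ.map Prod.snd)) hJ N hN
    (fun c d => (μ (Icc a b ×ˢ Icc c d)).toReal)
    (fun c d => (μ (Icc a' b' ×ˢ Icc c d)).toReal) ε hε
    (fun p q r hpq hqr hq => split_meas_y_toReal hpq hqr (hNY q hq))
    (fun p q r hpq hqr hq => split_meas_y_toReal hpq hqr (hNY q hq))
    (fun p q _ hne => meas_toReal_pos (rect_pos hprod hA hne))
    (fun p q _ hne => meas_toReal_pos (rect_pos hprod hA' hne))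
    (fun p q _ hp hq hempty => rect_toReal_null_Y (hNY p hp) (hNY q hq) hempty a b)
    (fun p q _ hp hq hempty => rect_toReal_null_Y (hNY p hp) (hNY q hq) hempty a' b')
    (fun p q r h1 h2 h3 _ hq _ hne1 hne2 =>
      (step_alpha hε hI hprod H N hN hNX hNY h1 h2 h3 hq hne1 hne2
        a b a' b' hab hab' hba hba' haN hbN haN' hbN' hA hA').trans (mul_comm _ _))

end ChainApp


section CellId

variable {μ : Measure (ℝ × ℝ)} [IsProbabilityMeasure μ]

lemma cell_id {ε : ℝ} (hε : 0 < ε)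
    (hI : (msupport (μ.map Prod.fst)).OrdConnected)
    (hJ : (msupport (μ.map Prod.snd)).OrdConnected)
    (hprod : msupport μ = msupport (μ.map Prod.fst) ×ˢ msupport (μ.map Prod.snd))
    (H : ∀ a b c d : ℝ, b - a ≤ ε → d - c ≤ ε → 0 < μ (Icc a b ×ˢ Icc c d) →
      (μ (Icc a b ×ˢ Icc c d)).toReal * (∫ z in Icc a b ×ˢ Icc c d, z.1 * z.2 ∂μ)
        = (∫ z in Icc a b ×ˢ Icc c d, z.1 ∂μ) * (∫ z in Icc a b ×ˢ Icc c d, z.2 ∂μ))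
    (N : Set ℝ) (hN : N.Countable)
    (hNX : ∀ x, x ∉ N → (μ.map Prod.fst) {x} = 0)
    (hNY : ∀ x, x ∉ N → (μ.map Prod.snd) {x} = 0)
    {p q u v p' q' u' v' : ℝ}
    (h1 : p ∉ N) (h2 : q ∉ N) (h3 : u ∉ N) (h4 : v ∉ N)
    (h5 : p' ∉ N) (h6 : q' ∉ N) (h7 : u' ∉ N) (h8 : v' ∉ N)
    (l1 : q - p ≤ ε) (l2 : v - u ≤ ε) (l3 : q' - p' ≤ ε) (l4 : v' - u' ≤ ε) :
    μ (Icc p q ×ˢ Icc u v) * μ (Icc p' q' ×ˢ Icc u' v')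
      = μ (Icc p q ×ˢ Icc u' v') * μ (Icc p' q' ×ˢ Icc u v) := by
  have nullX : ∀ x y : ℝ, x ∉ N → y ∉ N →
      ¬(x < y ∧ (Ioo x y ∩ msupport (μ.map Prod.fst)).Nonempty) →
      ∀ w z : ℝ, μ (Icc x y ×ˢ Icc w z) = 0 := by
    intro x y hx hy hbad w z
    by_cases hlt : x < y
    · have hemp : Ioo x y ∩ msupport (μ.map Prod.fst) = ∅ := by
        by_contra hne
        exact hbad ⟨hlt, nonempty_iff_ne_empty.2 hne⟩
      exact le_antisymm
        ((rect_le_margX _).trans (marg_null_X (hNX x hx) (hNX y hy) hemp).le) (zero_le)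
    · refine measure_mono_null ?_ (line_null_x (hNX x hx))
      refine prod_mono ?_ (subset_univ _)
      intro z' hz'
      exact le_antisymm (hz'.2.trans (not_lt.1 hlt)) hz'.1
  have nullY : ∀ x y : ℝ, x ∉ N → y ∉ N →
      ¬(x < y ∧ (Ioo x y ∩ msupport (μ.map Prod.snd)).Nonempty) →
      ∀ w z : ℝ, μ (Icc w z ×ˢ Icc x y) = 0 := by
    intro x y hx hy hbad w z
    by_cases hlt : x < y
    · have hemp : Ioo x y ∩ msupport (μ.map Prod.snd) = ∅ := by
        by_contra hne
        exact hbad ⟨hlt, nonempty_iff_ne_empty.2 hne⟩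
      exact le_antisymm
        ((rect_le_margY _).trans (marg_null_Y (hNY x hx) (hNY y hy) hemp).le) (zero_le)
    · refine measure_mono_null ?_ (line_null_y (hNY x hx))
      refine prod_mono (subset_univ _) ?_
      intro z' hz'
      exact le_antisymm (hz'.2.trans (not_lt.1 hlt)) hz'.1
  by_cases g1 : p < q ∧ (Ioo p q ∩ msupport (μ.map Prod.fst)).Nonempty
  swap
  · rw [nullX p q h1 h2 g1 u v, nullX p q h1 h2 g1 u' v', zero_mul, zero_mul]
  by_cases g2 : p' < q' ∧ (Ioo p' q' ∩ msupport (μ.map Prod.fst)).Nonempty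
  swap
  · rw [nullX p' q' h5 h6 g2 u' v', nullX p' q' h5 h6 g2 u v, mul_zero, mul_zero]
  by_cases g3 : u < v ∧ (Ioo u v ∩ msupport (μ.map Prod.snd)).Nonempty
  swap
  · rw [nullY u v h3 h4 g3 p q, nullY u v h3 h4 g3 p' q', zero_mul, mul_zero]
  by_cases g4 : u' < v' ∧ (Ioo u' v' ∩ msupport (μ.map Prod.snd)).Nonempty
  swap
  · rw [nullY u' v' h7 h8 g4 p' q', nullY u' v' h7 h8 g4 p q, mul_zero, zero_mul]
  have hr := exchange hε hI hJ hprod H N hN hNX hNY g1.1 g2.1 l1 l3 h1 h2 h5 h6 g1.2 g2.2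
    u v u' v' g3.1 g4.1 l2 l4 h3 h4 h7 h8 g3.2 g4.2
  refine (ENNReal.toReal_eq_toReal_iff' ?_ ?_).1 ?_
  · exact ENNReal.mul_ne_top (measure_ne_top μ _) (measure_ne_top μ _)
  · exact ENNReal.mul_ne_top (measure_ne_top μ _) (measure_ne_top μ _)
  · rw [ENNReal.toReal_mul, ENNReal.toReal_mul]
    exact hr

end CellId


section Assembly

variable {μ : Measure (ℝ × ℝ)} [IsProbabilityMeasure μ]

lemma sum_rect {As Bs : ℤ → Set ℝ} {S T : Set ℝ}
    (hAm : ∀ i, MeasurableSet (As i)) (hBm : ∀ j, MeasurableSet (Bs j))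
    (hAU : ⋃ i, As i = S) (hBU : ⋃ j, Bs j = T)
    (hAd : ∀ i j, i ≠ j → μ ((As i ∩ As j) ×ˢ (univ : Set ℝ)) = 0)
    (hBd : ∀ i j, i ≠ j → μ ((univ : Set ℝ) ×ˢ (Bs i ∩ Bs j)) = 0) :
    μ (S ×ˢ T) = ∑' ij : ℤ × ℤ, μ (As ij.1 ×ˢ Bs ij.2) := by
  have hcover : S ×ˢ T = ⋃ ij : ℤ × ℤ, As ij.1 ×ˢ Bs ij.2 := by
    rw [← hAU, ← hBU]
    ext z
    simp only [Set.mem_prod, Set.mem_iUnion]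
    constructor
    · rintro ⟨⟨i, hi⟩, ⟨j, hj⟩⟩; exact ⟨(i, j), hi, hj⟩
    · rintro ⟨ij, hi, hj⟩; exact ⟨⟨ij.1, hi⟩, ⟨ij.2, hj⟩⟩
  rw [hcover]
  refine measure_iUnion₀ ?_ (fun ij => ((hAm ij.1).prod (hBm ij.2)).nullMeasurableSet)
  intro ij ij' hne
  show μ _ = 0
  rw [Set.prod_inter_prod]
  by_cases hij : ij.1 = ij'.1
  · have hj : ij.2 ≠ ij'.2 := fun h => hne (Prod.ext hij h)
    exact measure_mono_null (prod_mono (subset_univ _) subset_rfl) (hBd _ _ hj)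
  · exact measure_mono_null (prod_mono subset_rfl (subset_univ _)) (hAd _ _ hij)

lemma grid_inter {u : ℤ → ℝ} (hmono : StrictMono u) {i j : ℤ} (hij : i < j) :
    Icc (u i) (u (i+1)) ∩ Icc (u j) (u (j+1)) ⊆ {u j} := by
  intro x hx
  have h1 : x ≤ u (i+1) := hx.1.2
  have h2 : u j ≤ x := hx.2.1
  have h3 : u (i+1) ≤ u j := hmono.monotone (by omega)
  exact mem_singleton_iff.2 (le_antisymm (h1.trans h3) h2)

lemma generate_Ico {N : Set ℝ} (hN : N.Countable) :
    (inferInstance : MeasurableSpace ℝ)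
      = MeasurableSpace.generateFrom {S : Set ℝ | ∃ l ∈ Nᶜ, ∃ u ∈ Nᶜ, l < u ∧ Ico l u = S} := by
  have hd : Dense (Nᶜ) := hN.dense_compl ℝ
  rw [show (inferInstance : MeasurableSpace ℝ) = borel ℝ from BorelSpace.measurable_eq]
  exact hd.borel_eq_generateFrom_Ico_mem

lemma isPiSystem_Ico_compl {N : Set ℝ} :
    IsPiSystem {S : Set ℝ | ∃ l ∈ Nᶜ, ∃ u ∈ Nᶜ, l < u ∧ Ico l u = S} := by
  rintro s ⟨l1, hl1, u1, hu1, hlt1, rfl⟩ t ⟨l2, hl2, u2, hu2, hlt2, rfl⟩ hne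
  rw [Ico_inter_Ico] at hne ⊢
  refine ⟨l1 ⊔ l2, ?_, u1 ⊓ u2, ?_, ?_, rfl⟩
  · rcases le_total l1 l2 with h | h
    · rw [sup_eq_right.2 h]; exact hl2
    · rw [sup_eq_left.2 h]; exact hl1
  · rcases le_total u1 u2 with h | h
    · rw [inf_eq_left.2 h]; exact hu1
    · rw [inf_eq_right.2 h]; exact hu2
  · exact nonempty_Ico.1 hne

end Assembly


theorem reverse_key (μ : Measure (ℝ × ℝ)) [IsProbabilityMeasure μ]
    (hI : (msupport (μ.map Prod.fst)).OrdConnected)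
    (hJ : (msupport (μ.map Prod.snd)).OrdConnected)
    (hprod : msupport μ = msupport (μ.map Prod.fst) ×ˢ msupport (μ.map Prod.snd))
    (ε : ℝ) (hε : 0 < ε)
    (H : ∀ a b c d : ℝ, b - a ≤ ε → d - c ≤ ε → 0 < μ (Icc a b ×ˢ Icc c d) →
      (μ (Icc a b ×ˢ Icc c d)).toReal * (∫ z in Icc a b ×ˢ Icc c d, z.1 * z.2 ∂μ)
        = (∫ z in Icc a b ×ˢ Icc c d, z.1 ∂μ) * (∫ z in Icc a b ×ˢ Icc c d, z.2 ∂μ)) :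
    μ = (μ.map Prod.fst).prod (μ.map Prod.snd) := by
  classical
  haveI hXf : IsFiniteMeasure (μ.map Prod.fst) :=
    ⟨by rw [map_fst_apply MeasurableSet.univ]; exact measure_lt_top μ _⟩
  haveI hYf : IsFiniteMeasure (μ.map Prod.snd) :=
    ⟨by rw [map_snd_apply MeasurableSet.univ]; exact measure_lt_top μ _⟩
  set N : Set ℝ := {x : ℝ | (μ.map Prod.fst) {x} ≠ 0} ∪ {x : ℝ | (μ.map Prod.snd) {x} ≠ 0}
    with hNdef
  have hN : N.Countable := (atoms_countable _).union (atoms_countable _)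
  have hNX : ∀ x, x ∉ N → (μ.map Prod.fst) {x} = 0 := by
    intro x hx
    by_contra h
    exact hx (Or.inl h)
  have hNY : ∀ x, x ∉ N → (μ.map Prod.snd) {x} = 0 := by
    intro x hx
    by_contra h
    exact hx (Or.inr h)
  -- the grid
  have hpick : ∀ k : ℤ, ∃ x : ℝ,
      x ∈ Ioo ((k : ℝ) * (ε/2) - ε/8) ((k : ℝ) * (ε/2) + ε/8) ∧ x ∉ N :=
    fun k => exists_pick hN (by linarith)
  choose uu huu huuN using hpick
  have humono : StrictMono uu := strictMono_int_of_lt_succ (fun k => by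
    have h1 := (huu k).2
    have h2 := (huu (k+1)).1
    push_cast at h1 h2
    linarith)
  have huspace : ∀ k : ℤ, uu (k+1) - uu k ≤ ε := fun k => by
    have h1 := (huu k).1
    have h2 := (huu (k+1)).2
    push_cast at h1 h2
    linarith
  have hcoverU : (⋃ i : ℤ, Icc (uu i) (uu (i+1))) = (univ : Set ℝ) := by
    refine eq_univ_of_forall (fun x => ?_)
    have hε2 : (0:ℝ) < ε/2 := by linarith
    obtain ⟨n₀, hn₀⟩ := exists_int_lt ((x - ε/8)/(ε/2))
    obtain ⟨n₁, hn₁⟩ := exists_int_gt ((x + ε/8)/(ε/2))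
    have hlow : uu n₀ ≤ x := by
      have h2 := (huu n₀).2
      have h' : (n₀ : ℝ) * (ε/2) < x - ε/8 := by
        have := mul_lt_mul_of_pos_right hn₀ hε2
        rwa [div_mul_cancel₀ _ hε2.ne'] at this
      linarith
    have hhigh : x < uu n₁ := by
      have h1 := (huu n₁).1
      have h' : x + ε/8 < (n₁ : ℝ) * (ε/2) := by
        have := mul_lt_mul_of_pos_right hn₁ hε2
        rwa [div_mul_cancel₀ _ hε2.ne'] at this
      linarith
    obtain ⟨k, hk, hkmax⟩ := Int.exists_greatest_of_bdd (P := fun k => uu k ≤ x)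
      ⟨n₁, fun z hz => by
        by_contra hzgt
        push_neg at hzgt
        have := humono.monotone hzgt.le
        linarith⟩ ⟨n₀, hlow⟩
    refine mem_iUnion.2 ⟨k, hk, ?_⟩
    by_contra hgt
    push_neg at hgt
    exact absurd (hkmax (k+1) hgt.le) (by omega)
  -- the product identity on good rectangles
  have main_id : ∀ a b c d : ℝ, a ∉ N → b ∉ N → c ∉ N → d ∉ N →
      μ (Icc a b ×ˢ Icc c d) = (μ.map Prod.fst) (Icc a b) * (μ.map Prod.snd) (Icc c d) := by
    intro a b c d haN hbN hcN hdN
    set A : ℤ → Set ℝ := fun i => Icc (max a (uu i)) (min b (uu (i+1))) with hAdef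
    set B : ℤ → Set ℝ := fun j => Icc (max c (uu j)) (min d (uu (j+1))) with hBdef
    set C : ℤ → Set ℝ := fun k => Icc (uu k) (uu (k+1)) with hCdef
    have hAm : ∀ i, MeasurableSet (A i) := fun i => measurableSet_Icc
    have hBm : ∀ j, MeasurableSet (B j) := fun j => measurableSet_Icc
    have hCm : ∀ k, MeasurableSet (C k) := fun k => measurableSet_Icc
    have clipU : ∀ (x y : ℝ), (⋃ i : ℤ, Icc (max x (uu i)) (min y (uu (i+1)))) = Icc x y := by
      intro x y
      have h1 : ∀ i : ℤ, Icc (max x (uu i)) (min y (uu (i+1)))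
          = Icc x y ∩ Icc (uu i) (uu (i+1)) := by
        intro i
        rw [Icc_inter_Icc]
      calc (⋃ i : ℤ, Icc (max x (uu i)) (min y (uu (i+1))))
          = ⋃ i : ℤ, (Icc x y ∩ Icc (uu i) (uu (i+1))) := by simp only [h1]
        _ = Icc x y ∩ ⋃ i : ℤ, Icc (uu i) (uu (i+1)) := (inter_iUnion _ _).symm
        _ = Icc x y := by rw [hcoverU, inter_univ]
    have clipsub : ∀ (x y : ℝ) (i : ℤ),
        Icc (max x (uu i)) (min y (uu (i+1))) ⊆ C i :=
      fun x y i => Icc_subset_Icc (le_max_right _ _) (min_le_right _ _)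
    have hinterC : ∀ i j : ℤ, i ≠ j → C i ∩ C j ⊆ {uu (max i j)} := by
      intro i j hij
      rcases hij.lt_or_gt with h | h
      · rw [max_eq_right h.le]
        exact grid_inter humono h
      · rw [max_eq_left h.le, inter_comm]
        exact grid_inter humono h
    have hdisCx : ∀ i j : ℤ, i ≠ j → μ ((C i ∩ C j) ×ˢ (univ : Set ℝ)) = 0 :=
      fun i j hij => measure_mono_null
        (prod_mono (hinterC i j hij) (subset_univ _)) (line_null_x (hNX _ (huuN (max i j))))
    have hdisCy : ∀ i j : ℤ, i ≠ j → μ ((univ : Set ℝ) ×ˢ (C i ∩ C j)) = 0 :=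
      fun i j hij => measure_mono_null
        (prod_mono (subset_univ _) (hinterC i j hij)) (line_null_y (hNY _ (huuN (max i j))))
    have hdisAx : ∀ (x y : ℝ) (i j : ℤ), i ≠ j →
        μ ((Icc (max x (uu i)) (min y (uu (i+1))) ∩ Icc (max x (uu j)) (min y (uu (j+1)))) ×ˢ
          (univ : Set ℝ)) = 0 :=
      fun x y i j hij => measure_mono_null
        (prod_mono ((inter_subset_inter (clipsub x y i) (clipsub x y j)).trans
          (hinterC i j hij)) (subset_univ _))
        (line_null_x (hNX _ (huuN (max i j))))
    have hdisBy : ∀ (x y : ℝ) (i j : ℤ), i ≠ j →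
        μ ((univ : Set ℝ) ×ˢ
          (Icc (max x (uu i)) (min y (uu (i+1))) ∩ Icc (max x (uu j)) (min y (uu (j+1))))) = 0 :=
      fun x y i j hij => measure_mono_null
        (prod_mono (subset_univ _) ((inter_subset_inter (clipsub x y i) (clipsub x y j)).trans
          (hinterC i j hij)))
        (line_null_y (hNY _ (huuN (max i j))))
    have hsum1 : μ (Icc a b ×ˢ Icc c d) = ∑' ij : ℤ × ℤ, μ (A ij.1 ×ˢ B ij.2) :=
      sum_rect hAm hBm (clipU a b) (clipU c d)
        (fun i j hij => hdisAx a b i j hij) (fun i j hij => hdisBy c d i j hij)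
    have hsum2 : μ ((univ : Set ℝ) ×ˢ (univ : Set ℝ)) = ∑' kl : ℤ × ℤ, μ (C kl.1 ×ˢ C kl.2) :=
      sum_rect hCm hCm hcoverU hcoverU hdisCx hdisCy
    have hsum3 : μ (Icc a b ×ˢ (univ : Set ℝ)) = ∑' il : ℤ × ℤ, μ (A il.1 ×ˢ C il.2) :=
      sum_rect hAm hCm (clipU a b) hcoverU (fun i j hij => hdisAx a b i j hij) hdisCy
    have hsum4 : μ ((univ : Set ℝ) ×ˢ Icc c d) = ∑' kj : ℤ × ℤ, μ (C kj.1 ×ˢ B kj.2) :=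
      sum_rect hCm hBm hcoverU (clipU c d) hdisCx (fun i j hij => hdisBy c d i j hij)
    have hmaxN : ∀ (x : ℝ), x ∉ N → ∀ i : ℤ, max x (uu i) ∉ N := by
      intro x hx i
      rcases max_choice x (uu i) with h | h <;> rw [h]
      exacts [hx, huuN i]
    have hminN : ∀ (x : ℝ), x ∉ N → ∀ i : ℤ, min x (uu i) ∉ N := by
      intro x hx i
      rcases min_choice x (uu i) with h | h <;> rw [h]
      exacts [hx, huuN i]
    have hlen : ∀ (x y : ℝ) (i : ℤ), min y (uu (i+1)) - max x (uu i) ≤ ε :=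
      fun x y i => (sub_le_sub (min_le_right _ _) (le_max_right _ _)).trans (huspace i)
    have hlenC : ∀ k : ℤ, uu (k+1) - uu k ≤ ε := huspace
    have hcell : ∀ i j k l : ℤ,
        μ (A i ×ˢ B j) * μ (C k ×ˢ C l) = μ (A i ×ˢ C l) * μ (C k ×ˢ B j) := by
      intro i j k l
      exact cell_id hε hI hJ hprod H N hN hNX hNY
        (hmaxN a haN i) (hminN b hbN (i+1)) (hmaxN c hcN j) (hminN d hdN (j+1))
        (huuN k) (huuN (k+1)) (huuN l) (huuN (l+1))
        (hlen a b i) (hlen c d j) (hlenC k) (hlenC l)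
    have key : μ (Icc a b ×ˢ Icc c d) * μ ((univ : Set ℝ) ×ˢ (univ : Set ℝ))
        = μ (Icc a b ×ˢ (univ : Set ℝ)) * μ ((univ : Set ℝ) ×ˢ Icc c d) := by
      rw [hsum1, hsum2, hsum3, hsum4]
      calc (∑' ij : ℤ × ℤ, μ (A ij.1 ×ˢ B ij.2)) * (∑' kl : ℤ × ℤ, μ (C kl.1 ×ˢ C kl.2))
          = ∑' ij : ℤ × ℤ, (μ (A ij.1 ×ˢ B ij.2) * ∑' kl : ℤ × ℤ, μ (C kl.1 ×ˢ C kl.2)) :=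
            ENNReal.tsum_mul_right.symm
        _ = ∑' ij : ℤ × ℤ, ∑' kl : ℤ × ℤ, μ (A ij.1 ×ˢ C kl.2) * μ (C kl.1 ×ˢ B ij.2) := by
            refine tsum_congr (fun ij => ?_)
            rw [← ENNReal.tsum_mul_left]
            exact tsum_congr (fun kl => hcell ij.1 ij.2 kl.1 kl.2)
        _ = ∑' ij : ℤ × ℤ, (∑' l : ℤ, μ (A ij.1 ×ˢ C l)) * (∑' k : ℤ, μ (C k ×ˢ B ij.2)) := by
            refine tsum_congr (fun ij => ?_)
            rw [ENNReal.tsum_prod']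
            calc ∑' k : ℤ, ∑' l : ℤ, μ (A ij.1 ×ˢ C l) * μ (C k ×ˢ B ij.2)
                = ∑' k : ℤ, (∑' l : ℤ, μ (A ij.1 ×ˢ C l)) * μ (C k ×ˢ B ij.2) :=
                  tsum_congr (fun k => ENNReal.tsum_mul_right)
              _ = (∑' l : ℤ, μ (A ij.1 ×ˢ C l)) * ∑' k : ℤ, μ (C k ×ˢ B ij.2) :=
                  ENNReal.tsum_mul_left
        _ = (∑' i : ℤ, ∑' l : ℤ, μ (A i ×ˢ C l)) * (∑' j : ℤ, ∑' k : ℤ, μ (C k ×ˢ B j)) := by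
            rw [ENNReal.tsum_prod']
            calc ∑' i : ℤ, ∑' j : ℤ, (∑' l : ℤ, μ (A i ×ˢ C l)) * (∑' k : ℤ, μ (C k ×ˢ B j))
                = ∑' i : ℤ, (∑' l : ℤ, μ (A i ×ˢ C l)) * (∑' j : ℤ, ∑' k : ℤ, μ (C k ×ˢ B j)) :=
                  tsum_congr (fun i => ENNReal.tsum_mul_left)
              _ = _ := ENNReal.tsum_mul_right
        _ = (∑' il : ℤ × ℤ, μ (A il.1 ×ˢ C il.2)) * (∑' kj : ℤ × ℤ, μ (C kj.1 ×ˢ B kj.2)) := by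
            rw [ENNReal.tsum_prod', ENNReal.tsum_prod']
            congr 1
            exact ENNReal.tsum_comm
    rw [Set.univ_prod_univ, measure_univ, mul_one] at key
    rw [key, ← map_fst_apply measurableSet_Icc, ← map_snd_apply measurableSet_Icc]
  -- strip-atom lemmas
  have stripX : ∀ l u' : ℝ, u' ∉ N → ∀ T : Set ℝ,
      μ (Ico l u' ×ˢ T) = μ (Icc l u' ×ˢ T) := by
    intro l u' hu' T
    refine le_antisymm (measure_mono (prod_mono Ico_subset_Icc_self subset_rfl)) ?_
    have hsub : Icc l u' ×ˢ T ⊆ Ico l u' ×ˢ T ∪ ({u'} : Set ℝ) ×ˢ (univ : Set ℝ) := by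
      intro z hz
      by_cases h : z.1 = u'
      · exact Or.inr ⟨h, trivial⟩
      · exact Or.inl ⟨⟨hz.1.1, lt_of_le_of_ne hz.1.2 h⟩, hz.2⟩
    calc μ (Icc l u' ×ˢ T) ≤ μ (Ico l u' ×ˢ T ∪ ({u'} : Set ℝ) ×ˢ (univ : Set ℝ)) :=
        measure_mono hsub
      _ ≤ μ (Ico l u' ×ˢ T) + μ (({u'} : Set ℝ) ×ˢ (univ : Set ℝ)) := measure_union_le _ _
      _ = μ (Ico l u' ×ˢ T) := by rw [line_null_x (hNX u' hu'), add_zero]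
  have stripY : ∀ l u' : ℝ, u' ∉ N → ∀ S : Set ℝ,
      μ (S ×ˢ Ico l u') = μ (S ×ˢ Icc l u') := by
    intro l u' hu' S
    refine le_antisymm (measure_mono (prod_mono subset_rfl Ico_subset_Icc_self)) ?_
    have hsub : S ×ˢ Icc l u' ⊆ S ×ˢ Ico l u' ∪ (univ : Set ℝ) ×ˢ ({u'} : Set ℝ) := by
      intro z hz
      by_cases h : z.2 = u'
      · exact Or.inr ⟨trivial, h⟩
      · exact Or.inl ⟨hz.1, ⟨hz.2.1, lt_of_le_of_ne hz.2.2 h⟩⟩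
    calc μ (S ×ˢ Icc l u') ≤ μ (S ×ˢ Ico l u' ∪ (univ : Set ℝ) ×ˢ ({u'} : Set ℝ)) :=
        measure_mono hsub
      _ ≤ μ (S ×ˢ Ico l u') + μ ((univ : Set ℝ) ×ˢ ({u'} : Set ℝ)) := measure_union_le _ _
      _ = μ (S ×ˢ Ico l u') := by rw [line_null_y (hNY u' hu'), add_zero]
  have stripMX : ∀ l u' : ℝ, u' ∉ N →
      (μ.map Prod.fst) (Ico l u') = (μ.map Prod.fst) (Icc l u') := by
    intro l u' hu'
    refine le_antisymm (measure_mono Ico_subset_Icc_self) ?_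
    have hsub : Icc l u' ⊆ Ico l u' ∪ {u'} := by
      intro x hx
      by_cases h : x = u'
      · exact Or.inr h
      · exact Or.inl ⟨hx.1, lt_of_le_of_ne hx.2 h⟩
    calc (μ.map Prod.fst) (Icc l u') ≤ (μ.map Prod.fst) (Ico l u' ∪ {u'}) := measure_mono hsub
      _ ≤ (μ.map Prod.fst) (Ico l u') + (μ.map Prod.fst) {u'} := measure_union_le _ _
      _ = (μ.map Prod.fst) (Ico l u') := by rw [hNX u' hu', add_zero]
  have stripMY : ∀ l u' : ℝ, u' ∉ N →
      (μ.map Prod.snd) (Ico l u') = (μ.map Prod.snd) (Icc l u') := by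
    intro l u' hu'
    refine le_antisymm (measure_mono Ico_subset_Icc_self) ?_
    have hsub : Icc l u' ⊆ Ico l u' ∪ {u'} := by
      intro x hx
      by_cases h : x = u'
      · exact Or.inr h
      · exact Or.inl ⟨hx.1, lt_of_le_of_ne hx.2 h⟩
    calc (μ.map Prod.snd) (Icc l u') ≤ (μ.map Prod.snd) (Ico l u' ∪ {u'}) := measure_mono hsub
      _ ≤ (μ.map Prod.snd) (Ico l u') + (μ.map Prod.snd) {u'} := measure_union_le _ _
      _ = (μ.map Prod.snd) (Ico l u') := by rw [hNY u' hu', add_zero]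
  -- step 1 : fix a good vertical strip, vary the horizontal set
  have step1 : ∀ c d : ℝ, c ∉ N → d ∉ N → ∀ s : Set ℝ, MeasurableSet s →
      μ (s ×ˢ Icc c d) = (μ.map Prod.fst) s * (μ.map Prod.snd) (Icc c d) := by
    intro c d hcN hdN
    set ν₁ : Measure ℝ := Measure.map Prod.fst (μ.restrict ((univ : Set ℝ) ×ˢ Icc c d)) with hν₁def
    set ν₂ : Measure ℝ := ((μ.map Prod.snd) (Icc c d)) • (μ.map Prod.fst) with hν₂def
    have hν₁ : ∀ s : Set ℝ, MeasurableSet s → ν₁ s = μ (s ×ˢ Icc c d) := by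
      intro s hs
      rw [hν₁def, Measure.map_apply measurable_fst hs,
        Measure.restrict_apply (measurable_fst hs)]
      congr 1
      ext z
      simp [Set.mem_prod]
    haveI : IsFiniteMeasure ν₁ :=
      ⟨by rw [hν₁ univ MeasurableSet.univ]; exact measure_lt_top μ _⟩
    have heq : ν₁ = ν₂ := by
      refine ext_of_generate_finite _ (generate_Ico hN) (isPiSystem_Ico_compl) ?_ ?_
      · rintro S ⟨l, hl, u', hu', hlt, rfl⟩
        rw [hν₁ _ measurableSet_Ico, hν₂def]
        rw [stripX l u' hu' (Icc c d), main_id l u' c d hl hu' hcN hdN]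
        rw [Measure.smul_apply, smul_eq_mul, stripMX l u' hu', mul_comm]
      · rw [hν₁ univ MeasurableSet.univ, hν₂def, Measure.smul_apply, smul_eq_mul]
        rw [map_fst_apply MeasurableSet.univ, Set.univ_prod_univ, measure_univ, mul_one]
        rw [← map_snd_apply measurableSet_Icc]
    intro s hs
    rw [← hν₁ s hs, heq, hν₂def, Measure.smul_apply, smul_eq_mul, mul_comm]
  -- step 2 : vary the vertical set
  have step2 : ∀ s : Set ℝ, MeasurableSet s → ∀ t : Set ℝ, MeasurableSet t →
      μ (s ×ˢ t) = (μ.map Prod.fst) s * (μ.map Prod.snd) t := by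
    intro s hs
    set ν₃ : Measure ℝ := Measure.map Prod.snd (μ.restrict (s ×ˢ (univ : Set ℝ))) with hν₃def
    set ν₄ : Measure ℝ := ((μ.map Prod.fst) s) • (μ.map Prod.snd) with hν₄def
    have hν₃ : ∀ t : Set ℝ, MeasurableSet t → ν₃ t = μ (s ×ˢ t) := by
      intro t ht
      rw [hν₃def, Measure.map_apply measurable_snd ht,
        Measure.restrict_apply (measurable_snd ht)]
      congr 1
      ext z
      simp [Set.mem_prod, and_comm]
    haveI : IsFiniteMeasure ν₃ :=
      ⟨by rw [hν₃ univ MeasurableSet.univ]; exact measure_lt_top μ _⟩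
    have heq : ν₃ = ν₄ := by
      refine ext_of_generate_finite _ (generate_Ico hN) (isPiSystem_Ico_compl) ?_ ?_
      · rintro S ⟨l, hl, u', hu', hlt, rfl⟩
        rw [hν₃ _ measurableSet_Ico, hν₄def]
        rw [stripY l u' hu' s, step1 l u' hl hu' s hs]
        rw [Measure.smul_apply, smul_eq_mul, stripMY l u' hu']
      · rw [hν₃ univ MeasurableSet.univ, hν₄def, Measure.smul_apply, smul_eq_mul]
        rw [map_snd_apply MeasurableSet.univ, Set.univ_prod_univ, measure_univ, mul_one]
        rw [← map_fst_apply hs]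
    intro t ht
    rw [← hν₃ t ht, heq, hν₄def, Measure.smul_apply, smul_eq_mul]
  exact (Measure.prod_eq (fun s t hs ht => step2 s hs t ht)).symm


end Stmt11

open Stmt11 in
theorem stmt_11 {Ω : Type*} [MeasurableSpace Ω] (P : Measure Ω) [IsProbabilityMeasure P]
    (X Y : Ω → ℝ) (hX : Measurable X) (hY : Measurable Y)
    -- the supports of `X` and `Y` are intervals:
    (hsX : (msupport (Measure.map X P)).OrdConnected)
    (hsY : (msupport (Measure.map Y P)).OrdConnected)
    -- the support of the joint distribution is the product of the marginal supports:
    (hprod : msupport (Measure.map (fun ω => (X ω, Y ω)) P)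
      = msupport (Measure.map X P) ×ˢ msupport (Measure.map Y P)) :
    Measure.map (fun ω => (X ω, Y ω)) P = (Measure.map X P).prod (Measure.map Y P) ↔
    ∃ ε > (0 : ℝ), ∀ a b c d : ℝ, max (b - a) (d - c) ≤ ε →
      0 < P {ω | X ω ∈ Icc a b ∧ Y ω ∈ Icc c d} →
      cexp P {ω | X ω ∈ Icc a b ∧ Y ω ∈ Icc c d} (fun ω => X ω * Y ω)
        = cexp P {ω | X ω ∈ Icc a b ∧ Y ω ∈ Icc c d} X
          * cexp P {ω | X ω ∈ Icc a b ∧ Y ω ∈ Icc c d} Y := by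
  classical
  have hXY : Measurable (fun ω => (X ω, Y ω)) := hX.prodMk hY
  set μ : Measure (ℝ × ℝ) := Measure.map (fun ω => (X ω, Y ω)) P with hμdef
  haveI : IsProbabilityMeasure μ := Measure.isProbabilityMeasure_map hXY.aemeasurable
  haveI : IsProbabilityMeasure (Measure.map X P) := Measure.isProbabilityMeasure_map hX.aemeasurable
  haveI : IsProbabilityMeasure (Measure.map Y P) := Measure.isProbabilityMeasure_map hY.aemeasurable
  have hmapX : μ.map Prod.fst = Measure.map X P := by
    rw [hμdef, Measure.map_map measurable_fst hXY]
    rfl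
  have hmapY : μ.map Prod.snd = Measure.map Y P := by
    rw [hμdef, Measure.map_map measurable_snd hXY]
    rfl
  have hUset : ∀ a b c d : ℝ, {ω | X ω ∈ Icc a b ∧ Y ω ∈ Icc c d}
      = (fun ω => (X ω, Y ω)) ⁻¹' (Icc a b ×ˢ Icc c d) := by
    intro a b c d
    rfl
  have hPU : ∀ a b c d : ℝ,
      P {ω | X ω ∈ Icc a b ∧ Y ω ∈ Icc c d} = μ (Icc a b ×ˢ Icc c d) := by
    intro a b c d
    rw [hUset, hμdef, Measure.map_apply hXY (measurableSet_Icc.prod measurableSet_Icc)]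
  have hint : ∀ (a b c d : ℝ) (f : ℝ × ℝ → ℝ), Measurable f →
      (∫ ω in {ω | X ω ∈ Icc a b ∧ Y ω ∈ Icc c d}, f (X ω, Y ω) ∂P)
        = ∫ z in Icc a b ×ˢ Icc c d, f z ∂μ := by
    intro a b c d f hf
    rw [hUset]
    exact (setIntegral_map (measurableSet_Icc.prod measurableSet_Icc)
      hf.aestronglyMeasurable hXY.aemeasurable).symm
  constructor
  · -- independence implies the local condition, with ε = 1
    intro hind
    refine ⟨1, one_pos, ?_⟩
    intro a b c d _ hpos
    have hQ : (∫ ω in {ω | X ω ∈ Icc a b ∧ Y ω ∈ Icc c d}, X ω * Y ω ∂P)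
        = (∫ x in Icc a b, x ∂(Measure.map X P)) * (∫ y in Icc c d, y ∂(Measure.map Y P)) := by
      have h1 : (∫ ω in {ω | X ω ∈ Icc a b ∧ Y ω ∈ Icc c d}, X ω * Y ω ∂P)
          = ∫ z in Icc a b ×ˢ Icc c d, z.1 * z.2 ∂μ :=
        hint a b c d (fun z => z.1 * z.2) (measurable_fst.mul measurable_snd)
      rw [h1, show μ = (Measure.map X P).prod (Measure.map Y P) from hind]
      exact setIntegral_prod_mul (fun x => x) (fun y => y) (Icc a b) (Icc c d)
    have hSx : (∫ ω in {ω | X ω ∈ Icc a b ∧ Y ω ∈ Icc c d}, X ω ∂P)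
        = (∫ x in Icc a b, x ∂(Measure.map X P)) * ((Measure.map Y P) (Icc c d)).toReal := by
      have h1 : (∫ ω in {ω | X ω ∈ Icc a b ∧ Y ω ∈ Icc c d}, X ω ∂P)
          = ∫ z in Icc a b ×ˢ Icc c d, z.1 ∂μ :=
        hint a b c d (fun z => z.1) measurable_fst
      rw [h1, show μ = (Measure.map X P).prod (Measure.map Y P) from hind]
      have h2 := setIntegral_prod_mul (μ := Measure.map X P) (ν := Measure.map Y P)
        (fun x => x) (fun _ => (1:ℝ)) (Icc a b) (Icc c d)
      simp only [mul_one] at h2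
      rw [h2, setIntegral_const, smul_eq_mul, mul_one]
      rfl
    have hSy : (∫ ω in {ω | X ω ∈ Icc a b ∧ Y ω ∈ Icc c d}, Y ω ∂P)
        = ((Measure.map X P) (Icc a b)).toReal * (∫ y in Icc c d, y ∂(Measure.map Y P)) := by
      have h1 : (∫ ω in {ω | X ω ∈ Icc a b ∧ Y ω ∈ Icc c d}, Y ω ∂P)
          = ∫ z in Icc a b ×ˢ Icc c d, z.2 ∂μ :=
        hint a b c d (fun z => z.2) measurable_snd
      rw [h1, show μ = (Measure.map X P).prod (Measure.map Y P) from hind]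
      have h2 := setIntegral_prod_mul (μ := Measure.map X P) (ν := Measure.map Y P)
        (fun _ => (1:ℝ)) (fun y => y) (Icc a b) (Icc c d)
      simp only [one_mul] at h2
      rw [h2, setIntegral_const, smul_eq_mul, mul_one]
      rfl
    have hPU' : P {ω | X ω ∈ Icc a b ∧ Y ω ∈ Icc c d}
        = (Measure.map X P) (Icc a b) * (Measure.map Y P) (Icc c d) := by
      rw [hPU, show μ = (Measure.map X P).prod (Measure.map Y P) from hind,
        Measure.prod_prod]
    have hmm : 0 < ((Measure.map X P) (Icc a b)).toReal * ((Measure.map Y P) (Icc c d)).toReal := by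
      rw [← ENNReal.toReal_mul, ← hPU']
      exact ENNReal.toReal_pos hpos.ne' (measure_ne_top P _)
    have hmx : ((Measure.map X P) (Icc a b)).toReal ≠ 0 := by
      intro h
      rw [h, zero_mul] at hmm
      exact lt_irrefl 0 hmm
    have hmy : ((Measure.map Y P) (Icc c d)).toReal ≠ 0 := by
      intro h
      rw [h, mul_zero] at hmm
      exact lt_irrefl 0 hmm
    unfold cexp
    rw [hQ, hSx, hSy, hPU', ENNReal.toReal_mul]
    set mx := ((Measure.map X P) (Icc a b)).toReal with hmxdef
    set my := ((Measure.map Y P) (Icc c d)).toReal with hmydef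
    set Sx := ∫ x in Icc a b, x ∂(Measure.map X P) with hSxdef
    set Sy := ∫ y in Icc c d, y ∂(Measure.map Y P) with hSydef
    field_simp
  · -- the local condition implies independence
    rintro ⟨ε, hε, hloc⟩
    rw [← hmapX, ← hmapY]
    have hsX' : (msupport (μ.map Prod.fst)).OrdConnected := by rw [hmapX]; exact hsX
    have hsY' : (msupport (μ.map Prod.snd)).OrdConnected := by rw [hmapY]; exact hsY
    have hprod' : msupport μ = msupport (μ.map Prod.fst) ×ˢ msupport (μ.map Prod.snd) := by
      rw [hmapX, hmapY]
      exact hprod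
    refine reverse_key μ hsX' hsY' hprod' ε hε ?_
    intro a b c d hba hdc hpos
    have hPpos : 0 < P {ω | X ω ∈ Icc a b ∧ Y ω ∈ Icc c d} := by
      rw [hPU]
      exact hpos
    have hloc' := hloc a b c d (max_le hba hdc) hPpos
    unfold cexp at hloc'
    rw [hPU] at hloc'
    have e1 : (∫ ω in {ω | X ω ∈ Icc a b ∧ Y ω ∈ Icc c d}, X ω * Y ω ∂P)
        = ∫ z in Icc a b ×ˢ Icc c d, z.1 * z.2 ∂μ :=
      hint a b c d (fun z => z.1 * z.2) (measurable_fst.mul measurable_snd)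
    have e2 : (∫ ω in {ω | X ω ∈ Icc a b ∧ Y ω ∈ Icc c d}, X ω ∂P)
        = ∫ z in Icc a b ×ˢ Icc c d, z.1 ∂μ :=
      hint a b c d (fun z => z.1) measurable_fst
    have e3 : (∫ ω in {ω | X ω ∈ Icc a b ∧ Y ω ∈ Icc c d}, Y ω ∂P)
        = ∫ z in Icc a b ×ˢ Icc c d, z.2 ∂μ :=
      hint a b c d (fun z => z.2) measurable_snd
    rw [e1, e2, e3] at hloc'
    have hm : 0 < (μ (Icc a b ×ˢ Icc c d)).toReal := meas_toReal_pos hpos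
    set m := (μ (Icc a b ×ˢ Icc c d)).toReal
    set Q := ∫ z in Icc a b ×ˢ Icc c d, z.1 * z.2 ∂μ
    set S := ∫ z in Icc a b ×ˢ Icc c d, z.1 ∂μ
    set T := ∫ z in Icc a b ×ˢ Icc c d, z.2 ∂μ
    have hm' : m ≠ 0 := hm.ne'
    have h4 : Q * m = S * T := by
      rw [div_mul_div_comm, div_eq_div_iff hm' (mul_ne_zero hm' hm')] at hloc'
      exact mul_right_cancel₀ hm' (by linear_combination hloc')
    linarith [h4]
end
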